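/- arXiv:1906.06005 — 4 statements merged into one kernel-verified Lean document; each statement's English description precedes it below -/
import Mathlib

section
/- Let F = ₂F₁(4/κ, 1-4/κ; 8/κ; ·) be the hypergeometric function with κ ∈ (0,8). Then F extends continuously to [0,1], F(1) = Γ(8/κ)Γ(8/κ-1)/(Γ(4/κ)Γ(12/κ-1)) > 0, and F(x) > 0 for all x ∈ [0,1]. -/
open Filter Set
open MeasureTheory intervalIntegral Polynomial


lemma complex_eq_real_beta {u v : ℝ} (t : ℝ) (ht : t ∈ Set.Ioc (0:ℝ) 1) :
    (t:ℂ) ^ ((u:ℂ) - 1) * (1 - (t:ℂ)) ^ ((v:ℂ) - 1)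
      = ((t ^ (u-1) * (1-t) ^ (v-1) : ℝ) : ℂ) := by
  have h1 : (0:ℝ) ≤ t := le_of_lt ht.1
  have h2 : (0:ℝ) ≤ 1 - t := by linarith [ht.2]
  rw [show ((u:ℂ) - 1) = ((u - 1 : ℝ) : ℂ) by push_cast; ring,
    show ((v:ℂ) - 1) = ((v - 1 : ℝ) : ℂ) by push_cast; ring,
    show (1 - (t:ℂ)) = ((1 - t : ℝ) : ℂ) by push_cast; ring,
    ← Complex.ofReal_cpow h1, ← Complex.ofReal_cpow h2, ← Complex.ofReal_mul]

lemma realBetaIntegrable {u v : ℝ} (hu : 0 < u) (hv : 0 < v) :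
    IntervalIntegrable (fun t : ℝ => t ^ (u-1) * (1-t) ^ (v-1)) volume 0 1 := by
  have hc := Complex.betaIntegral_convergent (u := u) (v := v) (by simpa) (by simpa)
  rw [intervalIntegrable_iff_integrableOn_Ioc_of_le (by norm_num)] at hc ⊢
  have : IntegrableOn (fun t : ℝ => ((t:ℂ) ^ ((u:ℂ) - 1) * (1 - (t:ℂ)) ^ ((v:ℂ) - 1)).re)
      (Set.Ioc (0:ℝ) 1) volume := hc.re
  refine this.congr_fun (fun t ht => ?_) measurableSet_Ioc
  dsimp only
  rw [complex_eq_real_beta t ht, Complex.ofReal_re]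

lemma realBetaIntegral {u v : ℝ} (hu : 0 < u) (hv : 0 < v) :
    ∫ t in (0:ℝ)..1, t ^ (u-1) * (1-t) ^ (v-1)
      = Real.Gamma u * Real.Gamma v / Real.Gamma (u+v) := by
  have hg := Complex.Gamma_mul_Gamma_eq_betaIntegral (s := u) (t := v) (by simpa) (by simpa)
  have hbeta : Complex.betaIntegral u v
      = ((∫ t in (0:ℝ)..1, t ^ (u-1) * (1-t) ^ (v-1) : ℝ) : ℂ) := by
    rw [Complex.betaIntegral, ← intervalIntegral.integral_ofReal]
    refine intervalIntegral.integral_congr_ae (.of_forall fun t ht => ?_)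
    rw [Set.uIoc_of_le (by norm_num : (0:ℝ) ≤ 1)] at ht
    exact complex_eq_real_beta t ht
  rw [hbeta, ← Complex.ofReal_add, Complex.Gamma_ofReal, Complex.Gamma_ofReal,
    Complex.Gamma_ofReal, ← Complex.ofReal_mul, ← Complex.ofReal_mul] at hg
  have := Complex.ofReal_injective hg
  have hne : Real.Gamma (u+v) ≠ 0 := (Real.Gamma_pos_of_pos (by linarith)).ne'
  field_simp [this]
  rw [this]; ring

open MeasureTheory intervalIntegral Set Polynomial

lemma gamma_pochhammer {s : ℝ} (hs : 0 < s) (n : ℕ) :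
    Real.Gamma (s + n) = (ascPochhammer ℝ n).eval s * Real.Gamma s := by
  induction n with
  | zero => simp
  | succ n ih =>
    have h1 : s + (n:ℝ) ≠ 0 := by positivity
    have : Real.Gamma (s + (n+1 : ℕ)) = Real.Gamma ((s + n) + 1) := by push_cast; ring_nf
    rw [this, Real.Gamma_add_one h1, ih, ascPochhammer_succ_right]
    simp [Polynomial.eval_mul]
    ring

lemma slit_aux {w : ℂ} (hw : ‖w‖ < 1) : (1 - w) ∈ Complex.slitPlane := by
  left
  simp only [Complex.sub_re, Complex.one_re]
  have h1 := Complex.abs_re_le_norm w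
  have h2 := le_abs_self w.re
  linarith

lemma iterDeriv_cpow (b : ℝ) (n : ℕ) :
    ∀ z ∈ Metric.ball (0:ℂ) 1,
      iteratedDeriv n (fun z : ℂ => (1 - z) ^ (-b : ℂ)) z
        = (ascPochhammer ℂ n).eval (b:ℂ) * (1 - z) ^ (-(b:ℂ) - n) := by
  induction n with
  | zero => intro z _; simp
  | succ n ih =>
    intro z hz
    have hopen : IsOpen (Metric.ball (0:ℂ) 1) := Metric.isOpen_ball
    rw [Metric.mem_ball, dist_zero_right] at hz
    rw [iteratedDeriv_succ]
    have heq : Set.EqOn (iteratedDeriv n (fun z : ℂ => (1 - z) ^ (-b : ℂ)))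
        (fun z => (ascPochhammer ℂ n).eval (b:ℂ) * (1 - z) ^ (-(b:ℂ) - n))
        (Metric.ball (0:ℂ) 1) := fun w hw => ih w hw
    rw [Filter.EventuallyEq.deriv_eq (heq.eventuallyEq_of_mem
      (hopen.mem_nhds (by rwa [Metric.mem_ball, dist_zero_right])))]
    have hd : HasDerivAt (fun w : ℂ => (ascPochhammer ℂ n).eval (b:ℂ) * (1 - w) ^ (-(b:ℂ) - n))
        ((ascPochhammer ℂ n).eval (b:ℂ) * ((-(b:ℂ) - n) * (1 - z) ^ (-(b:ℂ) - n - 1) * (-1))) z :=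
      (((hasDerivAt_id z).const_sub 1).cpow_const (slit_aux hz)).const_mul _
    rw [hd.deriv, ascPochhammer_succ_right]
    simp only [Polynomial.eval_mul, Polynomial.eval_add, Polynomial.eval_X, Polynomial.eval_natCast]
    rw [show (-(b:ℂ) - (n+1:ℕ)) = (-(b:ℂ) - n - 1) by push_cast; ring]
    push_cast
    ring

lemma binomialSeries_real {b u : ℝ} (hu0 : 0 ≤ u) (hu1 : u < 1) :
    HasSum (fun n : ℕ => (ascPochhammer ℝ n).eval b / n.factorial * u ^ n)
      ((1 - u) ^ (-b) : ℝ) := by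
  have hdiff : DifferentiableOn ℂ (fun z : ℂ => (1 - z) ^ (-b : ℂ)) (Metric.ball 0 1) := by
    intro z hz
    rw [Metric.mem_ball, dist_zero_right] at hz
    exact (((hasDerivAt_id z).const_sub 1).cpow_const
      (slit_aux hz)).differentiableAt.differentiableWithinAt
  have hmem : (u:ℂ) ∈ Metric.ball (0:ℂ) 1 := by
    rw [Metric.mem_ball, dist_zero_right]
    simpa using by rwa [abs_of_nonneg hu0]
  have hsum := Complex.hasSum_taylorSeries_on_ball hdiff hmem
  have hterm : ∀ n : ℕ, (↑n.factorial : ℂ)⁻¹ • ((u:ℂ) - 0) ^ n •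
      iteratedDeriv n (fun z : ℂ => (1 - z) ^ (-b : ℂ)) 0
      = (((ascPochhammer ℝ n).eval b / n.factorial * u ^ n : ℝ) : ℂ) := by
    intro n
    rw [iterDeriv_cpow b n 0 (by simp), sub_zero,
      show ((1:ℂ) - 0) = 1 by ring, Complex.one_cpow]
    rw [show (ascPochhammer ℂ n).eval (b:ℂ)
        = (((ascPochhammer ℝ n).eval b : ℝ) : ℂ) by
      rw [← ascPochhammer_map (algebraMap ℝ ℂ) n, Polynomial.eval_map]
      exact Polynomial.eval₂_at_apply _ b]
    push_cast
    simp only [smul_eq_mul]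
    ring
  rw [funext hterm] at hsum
  have hval : ((1:ℂ) - (u:ℂ)) ^ (-b : ℂ) = (((1 - u) ^ (-b) : ℝ) : ℂ) := by
    rw [show ((1:ℂ) - (u:ℂ)) = ((1 - u : ℝ):ℂ) by push_cast; ring,
      show (-b : ℂ) = ((-b : ℝ):ℂ) by push_cast; ring,
      ← Complex.ofReal_cpow (by linarith)]
  rw [hval] at hsum
  have := hsum.mapL Complex.reCLM
  simpa only [Complex.reCLM_apply, Complex.ofReal_re] using this

open MeasureTheory intervalIntegral Set Polynomial Filter

noncomputable def eulerG (a x : ℝ) : ℝ := ∫ t in (0:ℝ)..1, (t*(1-t)*(1-x*t))^(a-1)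

lemma hg_base_pos {x t : ℝ} (hx : x ∈ Set.Icc (0:ℝ) 1) (ht : t ∈ Set.Ioo (0:ℝ) 1) :
    0 < t*(1-t)*(1-x*t) := by
  obtain ⟨hx0, hx1⟩ := hx; obtain ⟨ht0, ht1⟩ := ht
  have hxt : x*t ≤ 1*t := mul_le_mul_of_nonneg_right hx1 ht0.le
  exact mul_pos (mul_pos ht0 (by linarith)) (by linarith)

lemma hg_contOn {a x : ℝ} (hx : x ∈ Set.Icc (0:ℝ) 1) :
    ContinuousOn (fun t : ℝ => (t*(1-t)*(1-x*t))^(a-1)) (Set.Ioo 0 1) := by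
  refine ContinuousOn.rpow_const ?_ (fun t ht => Or.inl (hg_base_pos hx ht).ne')
  exact (by continuity : Continuous fun t : ℝ => t*(1-t)*(1-x*t)).continuousOn

lemma restrict_Ioc_eq_Ioo : (volume : Measure ℝ).restrict (Set.Ioc (0:ℝ) 1)
    = (volume : Measure ℝ).restrict (Set.Ioo (0:ℝ) 1) :=
  (Measure.restrict_congr_set Ioo_ae_eq_Ioc).symm

lemma hg_aesm {a x : ℝ} (hx : x ∈ Set.Icc (0:ℝ) 1) :
    AEStronglyMeasurable (fun t : ℝ => (t*(1-t)*(1-x*t))^(a-1))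
      ((volume : Measure ℝ).restrict (Set.Ioc (0:ℝ) 1)) := by
  rw [restrict_Ioc_eq_Ioo]
  exact (hg_contOn hx).aestronglyMeasurable measurableSet_Ioo

lemma hg_bound {a : ℝ} (ha : 1/2 < a) {x : ℝ} (hx : x ∈ Set.Icc (0:ℝ) 1) {t : ℝ}
    (ht : t ∈ Set.Ioo (0:ℝ) 1) :
    ‖(t*(1-t)*(1-x*t))^(a-1)‖ ≤ t^(a-1)*(1-t)^(2*a-1-1) + 1 := by
  obtain ⟨hx0, hx1⟩ := hx
  obtain ⟨ht0, ht1⟩ := ht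
  have h1t : 0 < 1 - t := by linarith
  have hxt : x*t ≤ 1*t := mul_le_mul_of_nonneg_right hx1 ht0.le
  have hxt0 : 0 ≤ x*t := mul_nonneg hx0 ht0.le
  have h1xt : 0 < 1 - x*t := by linarith
  have hB0 : 0 ≤ t*(1-t)*(1-x*t) := by positivity
  rw [Real.norm_of_nonneg (Real.rpow_nonneg hB0 _)]
  have hRHS0 : 0 ≤ t^(a-1)*(1-t)^(2*a-1-1) :=
    mul_nonneg (Real.rpow_nonneg ht0.le _) (Real.rpow_nonneg h1t.le _)
  have hB1 : t*(1-t)*(1-x*t) ≤ 1 := by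
    have h₁ : t*(1-t) ≤ 1 := by nlinarith
    have h₂ : 0 ≤ t*(1-t) := by positivity
    nlinarith
  rcases le_or_gt 1 a with hA | hA
  · have := Real.rpow_le_one hB0 hB1 (by linarith : 0 ≤ a-1)
    linarith
  · have hq0 : 0 < t*((1-t)*(1-t)) := by positivity
    have hqB : t*((1-t)*(1-t)) ≤ t*(1-t)*(1-x*t) := by
      nlinarith [mul_nonneg (mul_nonneg ht0.le h1t.le) (mul_nonneg ht0.le (by linarith : (0:ℝ) ≤ 1-x))]
    have hle := Real.rpow_le_rpow_of_nonpos hq0 hqB (by linarith : a-1 ≤ 0)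
    have heq : (t*((1-t)*(1-t)))^(a-1) = t^(a-1)*(1-t)^(2*a-1-1) := by
      rw [Real.mul_rpow ht0.le (by positivity), Real.mul_rpow h1t.le h1t.le,
        ← Real.rpow_add h1t, show (a-1)+(a-1) = 2*a-1-1 by ring]
    rw [heq] at hle
    linarith

lemma hg_bound_int {a : ℝ} (ha : 1/2 < a) :
    IntervalIntegrable (fun t : ℝ => t^(a-1)*(1-t)^(2*a-1-1) + 1) volume 0 1 :=
  (realBetaIntegrable (by linarith : (0:ℝ) < a) (by linarith : (0:ℝ) < 2*a-1)).add
    intervalIntegrable_const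

lemma hg_int {a : ℝ} (ha : 1/2 < a) {x : ℝ} (hx : x ∈ Set.Icc (0:ℝ) 1) :
    IntervalIntegrable (fun t : ℝ => (t*(1-t)*(1-x*t))^(a-1)) volume 0 1 := by
  rw [intervalIntegrable_iff_integrableOn_Ioc_of_le (by norm_num)]
  refine Integrable.mono'
    ((intervalIntegrable_iff_integrableOn_Ioc_of_le (by norm_num)).1 (hg_bound_int ha))
    (hg_aesm hx) ?_
  rw [restrict_Ioc_eq_Ioo]
  exact (ae_restrict_iff' measurableSet_Ioo).2 (Filter.Eventually.of_forall
    fun t ht => hg_bound ha hx ht)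

lemma eulerG_pos {a : ℝ} (ha : 1/2 < a) {x : ℝ} (hx : x ∈ Set.Icc (0:ℝ) 1) :
    0 < eulerG a x := by
  refine intervalIntegral.intervalIntegral_pos_of_pos_on (hg_int ha hx) ?_ one_pos
  exact fun t ht => Real.rpow_pos_of_pos (hg_base_pos hx ht) _

lemma eulerG_cont {a : ℝ} (ha : 1/2 < a) : ContinuousOn (eulerG a) (Set.Icc 0 1) := by
  intro x₀ hx₀
  have hGeq : ∀ x : ℝ, eulerG a x = ∫ t in Set.Ioc (0:ℝ) 1, (t*(1-t)*(1-x*t))^(a-1) :=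
    fun x => intervalIntegral.integral_of_le (by norm_num)
  unfold ContinuousWithinAt
  rw [hGeq x₀]
  refine Filter.Tendsto.congr (fun x => (hGeq x).symm) ?_
  refine MeasureTheory.tendsto_integral_filter_of_dominated_convergence
    (μ := volume.restrict (Set.Ioc (0:ℝ) 1)) (l := nhdsWithin x₀ (Set.Icc 0 1))
    (F := fun x t => (t*(1-t)*(1-x*t))^(a-1)) (f := fun t => (t*(1-t)*(1-x₀*t))^(a-1))
    (fun t => t^(a-1)*(1-t)^(2*a-1-1) + 1) ?_ ?_
    ((intervalIntegrable_iff_integrableOn_Ioc_of_le (by norm_num)).1 (hg_bound_int ha)) ?_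
  · filter_upwards [self_mem_nhdsWithin] with x hx
    exact hg_aesm hx
  · filter_upwards [self_mem_nhdsWithin] with x hx
    rw [restrict_Ioc_eq_Ioo]
    exact (ae_restrict_iff' measurableSet_Ioo).2 (Filter.Eventually.of_forall
      fun t ht => hg_bound ha hx ht)
  · rw [restrict_Ioc_eq_Ioo]
    refine (ae_restrict_iff' measurableSet_Ioo).2 (Filter.Eventually.of_forall fun t ht => ?_)
    have hca : ContinuousAt (fun x : ℝ => (t*(1-t)*(1-x*t))^(a-1)) x₀ := by
      refine ContinuousAt.rpow_const ?_ (Or.inl (hg_base_pos hx₀ ht).ne')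
      have : Continuous fun x : ℝ => t*(1-t)*(1-x*t) := by continuity
      exact this.continuousAt
    exact hca.tendsto.mono_left nhdsWithin_le_nhds

lemma eulerG_one {a : ℝ} (ha : 1/2 < a) :
    eulerG a 1 = Real.Gamma a * Real.Gamma (2*a-1) / Real.Gamma (3*a-1) := by
  have h1 : ∀ᵐ t : ℝ, t ∈ Set.uIoc (0:ℝ) 1 →
      (t*(1-t)*(1-1*t))^(a-1) = t^(a-1)*(1-t)^(2*a-1-1) := by
    have hne : ∀ᵐ t : ℝ, t ≠ 1 := by
      refine MeasureTheory.ae_iff.mpr ?_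
      simp
    filter_upwards [hne] with t htne ht
    rw [Set.uIoc_of_le (by norm_num : (0:ℝ) ≤ 1)] at ht
    have ht0 : 0 < t := ht.1
    have ht1 : t < 1 := lt_of_le_of_ne ht.2 htne
    have h1t : 0 < 1 - t := by linarith
    rw [show t*(1-t)*(1-1*t) = t*((1-t)*(1-t)) by ring,
      Real.mul_rpow ht0.le (by positivity), Real.mul_rpow h1t.le h1t.le,
      ← Real.rpow_add h1t, show (a-1)+(a-1) = 2*a-1-1 by ring]
  have hc := intervalIntegral.integral_congr_ae h1
  rw [eulerG, hc, realBetaIntegral (by linarith : (0:ℝ) < a) (by linarith : (0:ℝ) < 2*a-1),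
    show a + (2*a-1) = 3*a-1 by ring]
lemma summable_abs_c {b x : ℝ} (hx0 : 0 ≤ x) (hx1 : x < 1) :
    Summable (fun n : ℕ => |(ascPochhammer ℝ n).eval b / n.factorial * x^n|) := by
  set r := (1+x)/2 with hr_def
  have hxr : x < r := by rw [hr_def]; linarith
  have hr1 : r < 1 := by rw [hr_def]; linarith
  have hr0 : 0 < r := by rw [hr_def]; linarith
  apply summable_of_ratio_norm_eventually_le hr1
  obtain ⟨N, hN⟩ := exists_nat_ge (x*|b|/(r-x))
  rw [Filter.eventually_atTop]
  refine ⟨N, fun n hn => ?_⟩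
  have hkey : |b+(n:ℝ)| * x ≤ r * ((n:ℝ)+1) := by
    have h1 : |b+(n:ℝ)| ≤ |b| + n :=
      le_trans (abs_add_le _ _) (by rw [Nat.abs_cast])
    have h2 : x*|b|/(r-x) ≤ (n:ℝ) := le_trans hN (by exact_mod_cast hn)
    have h3 : x*|b| ≤ (n:ℝ)*(r-x) := by
      rw [div_le_iff₀ (by linarith)] at h2; linarith
    have hnn : (0:ℝ) ≤ (n:ℝ) := Nat.cast_nonneg n
    calc |b+(n:ℝ)| * x ≤ (|b| + n) * x := mul_le_mul_of_nonneg_right h1 hx0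
    _ = x*|b| + n*x := by ring
    _ ≤ (n:ℝ)*(r-x) + n*x := by linarith
    _ = (n:ℝ)*r := by ring
    _ ≤ r * ((n:ℝ)+1) := by nlinarith
  have hceq : |(ascPochhammer ℝ (n+1)).eval b / (n+1).factorial * x^(n+1)|
      = (|b+(n:ℝ)| * x / ((n:ℝ)+1)) * |(ascPochhammer ℝ n).eval b / n.factorial * x^n| := by
    rw [ascPochhammer_succ_right, Polynomial.eval_mul, Polynomial.eval_add, Polynomial.eval_X,
      Polynomial.eval_natCast, Nat.factorial_succ, pow_succ]
    have hfn : (0:ℝ) < (n.factorial:ℝ) := by positivity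
    have hn1 : (0:ℝ) < (n:ℝ)+1 := by positivity
    simp only [abs_mul, abs_div, Nat.abs_cast, abs_pow, abs_of_nonneg hx0]
    push_cast
    field_simp
  rw [Real.norm_eq_abs, Real.norm_eq_abs, abs_abs, abs_abs, hceq]
  apply mul_le_mul_of_nonneg_right _ (abs_nonneg _)
  rw [div_le_iff₀ (by positivity : (0:ℝ) < (n:ℝ)+1)]
  linarith

lemma eulerG_series {a : ℝ} (ha : 1/2 < a) {x : ℝ} (hx : x ∈ Set.Ico (0:ℝ) 1) :
    eulerG a x = ∑' n : ℕ, ((ascPochhammer ℝ n).eval (1-a) / n.factorial * x^n *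
      (Real.Gamma (a+n) * Real.Gamma a / Real.Gamma (a+n+a))) := by
  obtain ⟨hx0, hx1⟩ := hx
  have ha0 : (0:ℝ) < a := by linarith
  set c : ℕ → ℝ := fun n => (ascPochhammer ℝ n).eval (1-a) / n.factorial * x^n with hc_def
  set f : ℕ → ℝ → ℝ := fun n t => c n * (t^(a+(n:ℝ)-1) * (1-t)^(a-1)) with hf_def
  have hpt : Set.EqOn (fun t : ℝ => (t*(1-t)*(1-x*t))^(a-1)) (fun t => ∑' n : ℕ, f n t)
      (Set.Ioo (0:ℝ) 1) := by
    intro t ht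
    obtain ⟨ht0, ht1⟩ := ht
    have h1t : 0 < 1 - t := by linarith
    have hxt0 : 0 ≤ x*t := by positivity
    have hxt1 : x*t < 1 := by nlinarith
    have h1xt : 0 < 1 - x*t := by linarith
    have hbs := binomialSeries_real (b := 1-a) hxt0 hxt1
    have hm := hbs.mul_left (t^(a-1) * (1-t)^(a-1))
    have hterm : (fun n : ℕ => (t^(a-1) * (1-t)^(a-1)) *
        ((ascPochhammer ℝ n).eval (1-a) / n.factorial * (x*t)^n)) = fun n => f n t := by
      funext n
      rw [hf_def, hc_def]
      simp only
      rw [mul_pow, ← Real.rpow_natCast t n,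
        show a+(n:ℝ)-1 = (a-1)+(n:ℝ) by ring, Real.rpow_add ht0]
      ring
    rw [hterm] at hm
    simp only
    rw [hm.tsum_eq, show -(1-a) = a-1 by ring,
      Real.mul_rpow (by positivity : (0:ℝ) ≤ t*(1-t)) h1xt.le, Real.mul_rpow ht0.le h1t.le]
  have hG : eulerG a x = ∫ t in Set.Ioo (0:ℝ) 1, (t*(1-t)*(1-x*t))^(a-1) := by
    rw [eulerG, intervalIntegral.integral_of_le zero_le_one, integral_Ioc_eq_integral_Ioo]
  rw [hG, MeasureTheory.setIntegral_congr_fun measurableSet_Ioo hpt]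
  have hbeta_int : ∀ u : ℝ, 0 < u →
      IntegrableOn (fun t : ℝ => t^(u-1)*(1-t)^(a-1)) (Set.Ioo (0:ℝ) 1) volume := fun u hu =>
    ((intervalIntegrable_iff_integrableOn_Ioc_of_le zero_le_one).1
      (realBetaIntegrable hu ha0)).mono_set Set.Ioo_subset_Ioc_self
  have hf_int : ∀ n : ℕ, IntegrableOn (f n) (Set.Ioo (0:ℝ) 1) volume := fun n =>
    (hbeta_int (a+(n:ℝ)) (by positivity)).const_mul _
  set K : ℝ := ∫ t in Set.Ioo (0:ℝ) 1, t^(a-1)*(1-t)^(a-1) with hK_def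
  have hK0 : 0 ≤ K := by
    rw [hK_def]
    refine MeasureTheory.setIntegral_nonneg measurableSet_Ioo (fun t ht => ?_)
    exact mul_nonneg (Real.rpow_nonneg ht.1.le _) (Real.rpow_nonneg (by linarith [ht.2]) _)
  have hnorm_le : ∀ n : ℕ, (∫ t in Set.Ioo (0:ℝ) 1, ‖f n t‖) ≤ |c n| * K := by
    intro n
    have heq : Set.EqOn (fun t => ‖f n t‖)
        (fun t : ℝ => |c n| * (t^(a+(n:ℝ)-1) * (1-t)^(a-1))) (Set.Ioo (0:ℝ) 1) := by
      intro t ht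
      simp only [hf_def, Real.norm_eq_abs, abs_mul]
      rw [abs_of_nonneg (Real.rpow_nonneg ht.1.le _),
        abs_of_nonneg (Real.rpow_nonneg (by linarith [ht.2] : (0:ℝ) ≤ 1-t) _)]
    rw [MeasureTheory.setIntegral_congr_fun measurableSet_Ioo heq,
      MeasureTheory.integral_const_mul]
    refine mul_le_mul_of_nonneg_left ?_ (abs_nonneg _)
    refine MeasureTheory.setIntegral_mono_on
      (by simpa using hbeta_int (a+(n:ℝ)) (by positivity)) (hbeta_int a ha0)
      measurableSet_Ioo (fun t ht => ?_)
    refine mul_le_mul_of_nonneg_right ?_ (Real.rpow_nonneg (by linarith [ht.2]) _)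
    exact Real.rpow_le_rpow_of_exponent_ge ht.1 ht.2.le
      (by linarith [Nat.cast_nonneg (α := ℝ) n] : a-1 ≤ a+(n:ℝ)-1)
  have hsum_cK : Summable (fun n : ℕ => |c n| * K) := (summable_abs_c hx0 hx1).mul_right K
  have hlint : (∑' n : ℕ, ∫⁻ t in Set.Ioo (0:ℝ) 1, ‖f n t‖ₑ) ≠ ⊤ := by
    have hle : (∑' n : ℕ, ∫⁻ t in Set.Ioo (0:ℝ) 1, ‖f n t‖ₑ)
        ≤ ∑' n : ℕ, ENNReal.ofReal (|c n| * K) := by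
      refine ENNReal.tsum_le_tsum (fun n => ?_)
      rw [← MeasureTheory.ofReal_integral_norm_eq_lintegral_enorm (hf_int n)]
      exact ENNReal.ofReal_le_ofReal (hnorm_le n)
    rw [← ENNReal.ofReal_tsum_of_nonneg (fun n => mul_nonneg (abs_nonneg _) hK0) hsum_cK] at hle
    exact (lt_of_le_of_lt hle ENNReal.ofReal_lt_top).ne
  rw [MeasureTheory.integral_tsum (fun n => (hf_int n).aestronglyMeasurable) hlint]
  refine tsum_congr (fun n => ?_)
  rw [hf_def]
  simp only
  rw [MeasureTheory.integral_const_mul, ← integral_Ioc_eq_integral_Ioo,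
    ← intervalIntegral.integral_of_le zero_le_one,
    realBetaIntegral (by positivity : (0:ℝ) < a+(n:ℝ)) ha0]

/-- **Positivity and boundary value of the hypergeometric function**
`F = ₂F₁(4/κ, 1-4/κ; 8/κ; ·)` for `κ ∈ (0,8)`: `F` extends continuously to `[0,1]`,
`F 1 = Γ(8/κ)Γ(8/κ-1)/(Γ(4/κ)Γ(12/κ-1)) > 0`, and `F > 0` on `[0,1]`. -/
theorem stmt_0 (κ : ℝ) (hκ₀ : 0 < κ) (hκ₈ : κ < 8) :
    ∃ F : ℝ → ℝ, ContinuousOn F (Set.Icc 0 1) ∧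
      (∀ x ∈ Set.Ico (0:ℝ) 1,
        F x = ∑' n : ℕ,
          (Polynomial.eval (4/κ) (ascPochhammer ℝ n) *
              Polynomial.eval (1 - 4/κ) (ascPochhammer ℝ n) /
            (Polynomial.eval (8/κ) (ascPochhammer ℝ n) * (n.factorial : ℝ))) * x ^ n) ∧
      F 1 = Real.Gamma (8/κ) * Real.Gamma (8/κ - 1) /
          (Real.Gamma (4/κ) * Real.Gamma (12/κ - 1)) ∧
      0 < Real.Gamma (8/κ) * Real.Gamma (8/κ - 1) /
          (Real.Gamma (4/κ) * Real.Gamma (12/κ - 1)) ∧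
      ∀ x ∈ Set.Icc (0:ℝ) 1, 0 < F x := by
  set a : ℝ := 4/κ with ha_def
  have ha : 1/2 < a := by rw [ha_def, lt_div_iff₀ hκ₀]; linarith
  have ha0 : (0:ℝ) < a := by linarith
  have h2a : (8:ℝ)/κ = 2*a := by rw [ha_def]; ring
  have h3a : (12:ℝ)/κ - 1 = 3*a - 1 := by rw [ha_def]; ring
  have hΓa : Real.Gamma a ≠ 0 := (Real.Gamma_pos_of_pos ha0).ne'
  have hΓ2a : Real.Gamma (2*a) ≠ 0 := (Real.Gamma_pos_of_pos (by linarith)).ne'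
  have hΓ3a : Real.Gamma (3*a-1) ≠ 0 := (Real.Gamma_pos_of_pos (by linarith)).ne'
  clear_value a
  refine ⟨fun x => Real.Gamma (2*a) / (Real.Gamma a * Real.Gamma a) * eulerG a x,
    continuousOn_const.mul (eulerG_cont ha), ?_, ?_, ?_, ?_⟩
  · intro x hx
    beta_reduce
    rw [eulerG_series ha hx, ← tsum_mul_left]
    refine tsum_congr (fun n => ?_)
    rw [h2a, gamma_pochhammer ha0 n, show a+(n:ℝ)+a = 2*a+(n:ℝ) by ring,
      gamma_pochhammer (by linarith : (0:ℝ) < 2*a) n]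
    have hp2a : Polynomial.eval (2*a) (ascPochhammer ℝ n) ≠ 0 :=
      (ascPochhammer_pos n (2*a) (by linarith)).ne'
    have hfn : ((n.factorial : ℝ)) ≠ 0 := by positivity
    field_simp
  · beta_reduce
    rw [eulerG_one ha, h2a, h3a]
    field_simp
  · rw [h2a, h3a]
    exact div_pos
      (mul_pos (Real.Gamma_pos_of_pos (by linarith)) (Real.Gamma_pos_of_pos (by linarith)))
      (mul_pos (Real.Gamma_pos_of_pos ha0) (Real.Gamma_pos_of_pos (by linarith)))
  · intro x hx
    beta_reduce
    exact mul_pos (div_pos (Real.Gamma_pos_of_pos (by linarith))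
      (mul_pos (Real.Gamma_pos_of_pos ha0) (Real.Gamma_pos_of_pos ha0))) (eulerG_pos ha hx)
end

section
/- Let η₊ and η₋ be two chordal Loewner curves in ℍ with η₊ not hitting (-∞, w₋] and η₋ not hitting [w₊, ∞), where w₋ < w₊. For t₊ ≤ t₊' and t₋ ≤ t₋' in the respective lifespans, the capacity function m(t₊,t₋) := hcap₂(Hull(η₊[0,t₊] ∪ η₋[0,t₋])) satisfies m(t₊',t₋') - m(t₊',t₋) - m(t₊,t₋') + m(t₊,t₋) ≤ 0. Consequently m is Lipschitz with constant 1 in each variable. -/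
open Complex Filter Set Metric Bornology Topology

noncomputable section

/-- The open upper half-plane `ℍ`. -/
def UHP : Set ℂ := {z : ℂ | 0 < z.im}

/-- `K^doub`: the closure of `K` together with its reflection across `ℝ`. -/
def Kdoub (K : Set ℂ) : Set ℂ := closure K ∪ (starRingEnd ℂ) '' closure K

/-- `a_K = min (cl K ∩ ℝ)`. -/
def aK (K : Set ℂ) : ℝ := sInf {x : ℝ | (x : ℂ) ∈ closure K}

/-- `b_K = max (cl K ∩ ℝ)`. -/
def bK (K : Set ℂ) : ℝ := sSup {x : ℝ | (x : ℂ) ∈ closure K}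

/-- The segment `[a_K, b_K]` regarded as a subset of `ℂ`. -/
def seg (K : Set ℂ) : Set ℂ := (fun t : ℝ => (t : ℂ)) '' Set.Icc (aK K) (bK K)

/-- `K` is an `ℍ`-hull with mapping-out function `g` (normalized hydrodynamically at `∞`),
whose Schwarz reflection maps the complement of `K^doub ∪ [a_K, b_K]` onto `ℂ \ S_K`
for the compact set `S = S_K ⊆ ℝ`. -/
structure IsHullMap (K : Set ℂ) (g : ℂ → ℂ) (S : Set ℝ) : Prop where
  subset_UHP : K ⊆ UHP
  bounded : IsBounded K
  relClosed : ∀ z ∈ closure K, 0 < z.im → z ∈ K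
  holo : DifferentiableOn ℂ g (UHP \ K)
  bij : Set.BijOn g (UHP \ K) UHP
  hydro : Tendsto (fun z => g z - z) (Bornology.cobounded ℂ) (nhds 0)
  compactS : IsCompact S
  ext_holo : K.Nonempty → DifferentiableOn ℂ g {z : ℂ | z ∉ Kdoub K}
  real_vals : K.Nonempty → ∀ x : ℝ, (x : ℂ) ∉ Kdoub K → (g (x : ℂ)).im = 0
  conj_symm : K.Nonempty → ∀ z : ℂ, z ∉ Kdoub K → g ((starRingEnd ℂ) z) = (starRingEnd ℂ) (g z)
  extBij : K.Nonempty →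
    Set.BijOn g {z : ℂ | z ∉ Kdoub K ∧ z ∉ seg K} {z : ℂ | ∀ s ∈ S, z ≠ (s : ℂ)}

/-- `g` has half-plane capacity `c` : `g z = z + c / z + O(1/z²)` near `∞`. -/
def HasHcap (g : ℂ → ℂ) (c : ℝ) : Prop :=
  Tendsto (fun z : ℂ => z * (g z - z)) (Bornology.cobounded ℂ) (nhds (c : ℂ))

namespace StmtAux





lemma isOpen_UHP : IsOpen UHP := isOpen_lt continuous_const Complex.continuous_im

lemma far_of_tendsto {f : ℂ → ℂ} {c : ℂ} (h : Tendsto f (cobounded ℂ) (nhds c))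
    {ε : ℝ} (hε : 0 < ε) : ∃ R : ℝ, 0 < R ∧ ∀ z : ℂ, R ≤ ‖z‖ → ‖f z - c‖ ≤ ε := by
  have h2 : ∀ᶠ z in cobounded ℂ, dist (f z) c < ε := Metric.tendsto_nhds.mp h ε hε
  obtain ⟨r, -, hr⟩ := (Metric.hasBasis_cobounded_compl_closedBall (0 : ℂ)).mem_iff.mp h2
  refine ⟨max r 0 + 1, by positivity, fun z hz => ?_⟩
  have hz' : z ∈ (Metric.closedBall (0:ℂ) r)ᶜ := by
    simp only [mem_compl_iff, Metric.mem_closedBall, dist_zero_right, not_le]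
    have : max r 0 + 1 ≤ ‖z‖ := hz
    have := le_max_left r 0
    linarith
  have h3 := hr hz'
  simp only [mem_setOf_eq, dist_eq_norm] at h3
  exact h3.le

lemma tendsto_coe_mul_I : Tendsto (fun y : ℝ => (y : ℂ) * I) atTop (cobounded ℂ) := by
  rw [(Metric.hasBasis_cobounded_compl_closedBall (0 : ℂ)).tendsto_right_iff]
  intro r _
  filter_upwards [eventually_gt_atTop (max r 0)] with y hy
  simp only [mem_compl_iff, Metric.mem_closedBall, dist_zero_right, not_le]
  have h1 : ‖(y : ℂ) * I‖ = |y| := by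
    rw [norm_mul, Complex.norm_I, mul_one, Complex.norm_real, Real.norm_eq_abs]
  rw [h1]
  have h2 : r ≤ max r 0 := le_max_left r 0
  have h3 : (0:ℝ) ≤ max r 0 := le_max_right r 0
  rw [abs_of_pos (lt_of_le_of_lt h3 hy)]
  linarith

lemma isOpen_image_of {Ω : Set ℂ} {g : ℂ → ℂ} (hΩ : IsOpen Ω)
    (hg : DifferentiableOn ℂ g Ω) (hinj : InjOn g Ω)
    {V : Set ℂ} (hV : V ⊆ Ω) (hVo : IsOpen V) : IsOpen (g '' V) := by
  rw [isOpen_iff_mem_nhds]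
  rintro w ⟨v, hvV, rfl⟩
  have hvΩ : v ∈ Ω := hV hvV
  have ha : AnalyticAt ℂ g v := hg.analyticAt (hΩ.mem_nhds hvΩ)
  rcases ha.eventually_constant_or_nhds_le_map_nhds with hconst | hmap
  · exfalso
    obtain ⟨r, hr, hball⟩ := Metric.eventually_nhds_iff_ball.mp hconst
    obtain ⟨r', hr', hball'⟩ := Metric.isOpen_iff.mp hVo v hvV
    set δ := min r r' / 2 with hδdef
    have hδ : 0 < δ := by positivity
    have hδr : δ < r := by
      have := min_le_left r r'; simp only [hδdef]; linarith [lt_min hr hr']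
    have hδr' : δ < r' := by
      have := min_le_right r r'; simp only [hδdef]; linarith [lt_min hr hr']
    set v' := v + (δ : ℂ) with hv'def
    have hdist : dist v' v = δ := by
      simp [hv'def, dist_eq_norm, Complex.norm_real, abs_of_pos hδ]
    have hv'r : v' ∈ Metric.ball v r := by rw [Metric.mem_ball, hdist]; exact hδr
    have hv'V : v' ∈ V := hball' (by rw [Metric.mem_ball, hdist]; exact hδr')
    have : v' = v := hinj (hV hv'V) hvΩ (hball v' hv'r)
    rw [hv'def] at this
    have : (δ : ℂ) = 0 := by linear_combination this
    exact hδ.ne' (by exact_mod_cast this)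
  · exact hmap (Filter.image_mem_map (hVo.mem_nhds hvV))





lemma joinedIn_of_segment {A : Set ℂ} {x y : ℂ} (h : segment ℝ x y ⊆ A) : JoinedIn A x y := by
  have hpc : IsPathConnected (segment ℝ x y) :=
    (convex_segment x y).isPathConnected ⟨x, left_mem_segment ℝ x y⟩
  exact (hpc.joinedIn x (left_mem_segment ℝ x y) y (right_mem_segment ℝ x y)).mono h

lemma norm_add_vert {w : ℂ} (hw : 0 ≤ w.im) {t : ℝ} (ht : 0 ≤ t) : ‖w‖ ≤ ‖w + t * I‖ := by
  rw [Complex.norm_def, Complex.norm_def]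
  apply Real.sqrt_le_sqrt
  simp only [Complex.normSq_apply, Complex.add_re, Complex.add_im, Complex.mul_re,
    Complex.mul_im, Complex.I_re, Complex.I_im, Complex.ofReal_re, Complex.ofReal_im]
  ring_nf
  nlinarith [sq_nonneg t]

/-- The far part of the upper half plane is preconnected. -/
lemma isPreconnected_farUHP {r : ℝ} (hr : 0 ≤ r) :
    IsPreconnected {w : ℂ | 0 < w.im ∧ r < ‖w‖} := by
  set A := {w : ℂ | 0 < w.im ∧ r < ‖w‖} with hA
  have hmemI : ∀ t : ℝ, r < t → ((t : ℝ) : ℂ) * I ∈ A := by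
    intro t ht
    constructor
    · simp only [Complex.mul_im, Complex.ofReal_re, Complex.I_im, Complex.ofReal_im,
        Complex.I_re, mul_one, mul_zero, add_zero]
      linarith
    · have : ‖((t : ℝ) : ℂ) * I‖ = |t| := by
        rw [norm_mul, Complex.norm_I, mul_one, Complex.norm_real, Real.norm_eq_abs]
      rw [this, abs_of_pos (by linarith)]; exact ht
  suffices hpc : IsPathConnected A by exact hpc.isConnected.isPreconnected
  refine ⟨((r + 1 : ℝ) : ℂ) * I, hmemI (r+1) (by linarith), ?_⟩
  intro w hw
  obtain ⟨hw1, hw2⟩ := hw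
  have himw : 0 < w.im := hw1
  have j3 : JoinedIn A (((r + 1 : ℝ) : ℂ) * I) (((w.im + r + 1 : ℝ) : ℂ) * I) := by
    apply joinedIn_of_segment
    rintro z ⟨a, b, ha, hb, hab, rfl⟩
    have hz : a • (((r + 1 : ℝ) : ℂ) * I) + b • (((w.im + r + 1 : ℝ) : ℂ) * I)
        = ((a * (r+1) + b * (w.im + r + 1) : ℝ) : ℂ) * I := by
      rw [Complex.real_smul, Complex.real_smul]
      push_cast
      ring
    rw [hz]
    apply hmemI
    nlinarith
  have j2 : JoinedIn A (((w.im + r + 1 : ℝ) : ℂ) * I) (w + ((r + 1 : ℝ) : ℂ) * I) := by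
    apply joinedIn_of_segment
    rintro z ⟨a, b, ha, hb, hab, rfl⟩
    have him : (a • (((w.im + r + 1 : ℝ) : ℂ) * I) + b • (w + ((r + 1 : ℝ) : ℂ) * I)).im
        = w.im + r + 1 := by
      simp only [Complex.add_im, Complex.smul_im, Complex.mul_im, Complex.ofReal_re,
        Complex.I_im, Complex.ofReal_im, Complex.I_re, mul_one, mul_zero, add_zero,
        smul_eq_mul]
      nlinarith
    constructor
    · show 0 < (_ : ℂ).im
      rw [him]; linarith
    · calc r < w.im + r + 1 := by linarith
        _ = |(a • (((w.im + r + 1 : ℝ) : ℂ) * I) + b • (w + ((r + 1 : ℝ) : ℂ) * I)).im| := by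
              rw [him, abs_of_pos (by linarith)]
        _ ≤ ‖_‖ := by
              exact Complex.abs_im_le_norm _
  have j1 : JoinedIn A (w + ((r + 1 : ℝ) : ℂ) * I) w := by
    apply joinedIn_of_segment
    rintro z ⟨a, b, ha, hb, hab, rfl⟩
    have hz : a • (w + ((r + 1 : ℝ) : ℂ) * I) + b • w = w + ((a * (r+1) : ℝ) : ℂ) * I := by
      rw [Complex.real_smul, Complex.real_smul]
      have hc : (a : ℂ) + b = 1 := by exact_mod_cast congrArg (fun x : ℝ => (x : ℂ)) hab
      push_cast
      linear_combination (w : ℂ) * hc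
    rw [hz]
    constructor
    · simp only [Complex.add_im, Complex.mul_im, Complex.ofReal_re, Complex.I_im,
        Complex.ofReal_im, Complex.I_re, mul_one, mul_zero, add_zero]
      nlinarith
    · have hv := norm_add_vert (le_of_lt himw) (t := a * (r+1)) (by nlinarith)
      calc r < ‖w‖ := hw2
        _ ≤ ‖w + ((a * (r+1) : ℝ) : ℂ) * I‖ := hv
  exact (j3.trans j2).trans j1


/-- Packaged hull-map data sufficient for the soft theory. -/
structure HD (K : Set ℂ) (g : ℂ → ℂ) (c : ℝ) : Prop where
  bounded : IsBounded K
  holo : DifferentiableOn ℂ g (UHP \ K)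
  bij : Set.BijOn g (UHP \ K) UHP
  hydro : Tendsto (fun z => g z - z) (cobounded ℂ) (nhds 0)
  cap : Tendsto (fun z : ℂ => z * (g z - z)) (cobounded ℂ) (nhds ((c : ℝ) : ℂ))
  opn : IsOpen (UHP \ K)
  conn : IsPreconnected (UHP \ K)

variable {K : Set ℂ} {g : ℂ → ℂ} {c : ℝ}

lemma HD.im_pos (h : HD K g c) {z : ℂ} (hz : z ∈ UHP \ K) : 0 < (g z).im := h.bij.mapsTo hz

/-- A radius beyond which `‖g z - z‖ ≤ 1` and outside of which there is no `K`. -/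
lemma HD.radius (h : HD K g c) : ∃ R : ℝ, 1 ≤ R ∧ (∀ z : ℂ, R ≤ ‖z‖ → ‖g z - z‖ ≤ 1) ∧
    (∀ z : ℂ, R ≤ ‖z‖ → z ∉ K) := by
  obtain ⟨R1, hR1pos, hR1⟩ := far_of_tendsto h.hydro one_pos
  obtain ⟨r, hr⟩ := (Metric.isBounded_iff_subset_closedBall (0:ℂ)).mp h.bounded
  refine ⟨max (max R1 1) (r + 1), le_trans (le_max_right R1 1) (le_max_left _ _), ?_, ?_⟩
  · intro z hz
    have := hR1 z (le_trans (le_max_of_le_left (le_max_left R1 1)) hz)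
    simpa using this
  · intro z hz hzK
    have h1 := hr hzK
    rw [Metric.mem_closedBall, dist_zero_right] at h1
    have h2 : r + 1 ≤ ‖z‖ := le_trans (le_max_right _ _) hz
    linarith

/-- Far imaginary points are in the domain. -/
lemma HD.mem_far (h : HD K g c) {R : ℝ} (hR : 1 ≤ R ∧ (∀ z : ℂ, R ≤ ‖z‖ → ‖g z - z‖ ≤ 1) ∧
    (∀ z : ℂ, R ≤ ‖z‖ → z ∉ K)) {y : ℝ} (hy : R ≤ y) : ((y:ℝ):ℂ) * I ∈ UHP \ K := by
  have hynorm : ‖((y:ℝ):ℂ) * I‖ = y := by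
    rw [norm_mul, Complex.norm_I, mul_one, Complex.norm_real, Real.norm_eq_abs,
      abs_of_pos (by linarith [hR.1])]
  constructor
  · show 0 < (((y:ℝ):ℂ) * I).im
    simp only [Complex.mul_im, Complex.ofReal_re, Complex.I_im, Complex.ofReal_im,
      Complex.I_re, mul_one, mul_zero, add_zero]
    linarith [hR.1]
  · exact hR.2.2 _ (by rw [hynorm]; exact hy)

/-- Properness: `g` maps bounded pieces of the domain into bounded sets. -/
lemma HD.bnd (h : HD K g c) : ∃ ρ₀ : ℝ, 1 ≤ ρ₀ ∧
    ∀ ρ : ℝ, ρ₀ ≤ ρ → ∀ z ∈ UHP \ K, ‖z‖ ≤ ρ → ‖g z‖ ≤ ρ + 1 := by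
  obtain ⟨R, hR⟩ := h.radius
  obtain ⟨hR1, hRhyd, hRK⟩ := hR
  refine ⟨R, hR1, ?_⟩
  intro ρ hρ z hz hzρ
  rcases le_or_gt R ‖z‖ with hcase | hcase
  · -- direct hydrodynamic bound
    have := hRhyd z hcase
    calc ‖g z‖ = ‖(g z - z) + z‖ := by ring_nf
      _ ≤ ‖g z - z‖ + ‖z‖ := norm_add_le _ _
      _ ≤ 1 + ρ := by linarith
      _ = ρ + 1 := by ring
  · -- separation argument
    by_contra hbig
    push_neg at hbig
    set A := {w : ℂ | 0 < w.im ∧ ρ + 1 < ‖w‖} with hAdef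
    have hApre : IsPreconnected A := isPreconnected_farUHP (by linarith)
    set U1 := g '' ((UHP \ K) ∩ Metric.ball 0 ρ) with hU1def
    set U2 := g '' {ζ : ℂ | ζ ∈ UHP ∧ ρ < ‖ζ‖} with hU2def
    have hsub2 : {ζ : ℂ | ζ ∈ UHP ∧ ρ < ‖ζ‖} ⊆ UHP \ K := by
      rintro ζ ⟨hζ1, hζ2⟩
      exact ⟨hζ1, hRK ζ (by linarith)⟩
    have hU1o : IsOpen U1 := isOpen_image_of h.opn h.holo h.bij.injOn
      (inter_subset_left) (h.opn.inter Metric.isOpen_ball)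
    have hU2o : IsOpen U2 := isOpen_image_of h.opn h.holo h.bij.injOn hsub2
      ((isOpen_lt continuous_const Complex.continuous_im).inter
        (isOpen_lt continuous_const continuous_norm))
    have hcover : A ⊆ U1 ∪ U2 := by
      rintro w ⟨hw1, hw2⟩
      have hwUHP : w ∈ UHP := hw1
      obtain ⟨ζ, hζ, rfl⟩ := h.bij.surjOn hwUHP
      rcases lt_trichotomy ‖ζ‖ ρ with hc | hc | hc
      · exact Or.inl ⟨ζ, ⟨hζ, by rwa [Metric.mem_ball, dist_zero_right]⟩, rfl⟩
      · exfalso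
        have h1 := hRhyd ζ (by rw [hc]; exact hρ)
        have : ‖g ζ‖ ≤ ρ + 1 := by
          calc ‖g ζ‖ = ‖(g ζ - ζ) + ζ‖ := by ring_nf
            _ ≤ ‖g ζ - ζ‖ + ‖ζ‖ := norm_add_le _ _
            _ ≤ 1 + ρ := by rw [hc] at *; linarith
            _ = ρ + 1 := by ring
        linarith
      · exact Or.inr ⟨ζ, ⟨hζ.1, hc⟩, rfl⟩
    have hne1 : (A ∩ U1).Nonempty := by
      refine ⟨g z, ⟨h.im_pos hz, hbig⟩, ⟨z, ⟨hz, ?_⟩, rfl⟩⟩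
      rw [Metric.mem_ball, dist_zero_right]
      exact lt_of_lt_of_le hcase hρ
    have hne2 : (A ∩ U2).Nonempty := by
      set y := ρ + R + 2 with hydef
      have hyR : R ≤ y := by linarith
      have hymem := h.mem_far ⟨hR1, hRhyd, hRK⟩ hyR
      have hynorm : ‖((y:ℝ):ℂ) * I‖ = y := by
        rw [norm_mul, Complex.norm_I, mul_one, Complex.norm_real, Real.norm_eq_abs,
          abs_of_pos (by linarith)]
      refine ⟨g (((y:ℝ):ℂ) * I), ⟨h.im_pos hymem, ?_⟩, ⟨((y:ℝ):ℂ) * I, ⟨hymem.1, ?_⟩, rfl⟩⟩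
      · have h1 := hRhyd _ (by rw [hynorm]; exact hyR)
        have h2 : ‖((y:ℝ):ℂ) * I‖ - ‖g (((y:ℝ):ℂ) * I) - ((y:ℝ):ℂ) * I‖ ≤ ‖g (((y:ℝ):ℂ) * I)‖ := by
          have := norm_sub_norm_le (g (((y:ℝ):ℂ) * I)) (((y:ℝ):ℂ) * I)
          have hrev : ‖g (((y:ℝ):ℂ) * I) - ((y:ℝ):ℂ) * I‖ = ‖(((y:ℝ):ℂ) * I) - g (((y:ℝ):ℂ) * I)‖ := norm_sub_rev _ _
          linarith [norm_sub_norm_le (((y:ℝ):ℂ) * I) (g (((y:ℝ):ℂ) * I))]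
        rw [hynorm] at h2
        linarith
      · rw [hynorm]; linarith
    obtain ⟨w, hwA, hwU1, hwU2⟩ := hApre U1 U2 hU1o hU2o hcover hne1 hne2
    obtain ⟨a, ha, hga⟩ := hwU1
    obtain ⟨b, hb, hgb⟩ := hwU2
    have hab : a = b := h.bij.injOn ha.1 (hsub2 hb) (by rw [hga, hgb])
    have h1 : ‖a‖ < ρ := by
      have := ha.2; rwa [Metric.mem_ball, dist_zero_right] at this
    have h2 : ρ < ‖b‖ := hb.2
    rw [hab] at h1
    linarith


/-- Boundary behaviour: the imaginary part of `g` tends to `0` at every point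
not in the open domain. -/
lemma HD.bdry (h : HD K g c) {p : ℂ} (hp : p ∉ UHP \ K) {ε : ℝ} (hε : 0 < ε) :
    ∀ᶠ z in nhdsWithin p (UHP \ K), (g z).im < ε := by
  by_contra hcon
  have hfreq : ∃ᶠ z in nhdsWithin p (UHP \ K), ε ≤ (g z).im := by
    have := Filter.not_eventually.mp hcon
    exact this.mono (fun z hz => not_lt.mp hz)
  -- extract a sequence
  have hseq : ∀ n : ℕ, ∃ z : ℂ, z ∈ UHP \ K ∧ dist z p < 1 / (n + 1) ∧ ε ≤ (g z).im := by
    intro n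
    have hball : Metric.ball p (1 / (n + 1)) ∈ nhdsWithin p (UHP \ K) :=
      mem_nhdsWithin_of_mem_nhds (Metric.ball_mem_nhds p (by positivity))
    have h2 : ∃ᶠ z in nhdsWithin p (UHP \ K),
        (ε ≤ (g z).im ∧ z ∈ UHP \ K) := hfreq.and_eventually self_mem_nhdsWithin
    obtain ⟨z, ⟨hz1, hz2⟩, hz3⟩ := (h2.and_eventually hball).exists
    exact ⟨z, hz2, hz3, hz1⟩
  choose zs hzs1 hzs2 hzs3 using hseq
  have htend : Tendsto zs atTop (nhds p) := by
    rw [tendsto_iff_dist_tendsto_zero]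
    apply squeeze_zero (fun n => dist_nonneg) (fun n => le_of_lt (hzs2 n))
    exact tendsto_one_div_add_atTop_nhds_zero_nat
  -- bounded images
  obtain ⟨ρ₀, hρ₀, hbnd⟩ := h.bnd
  set ρ := max ρ₀ (‖p‖ + 1) with hρdef
  have hρ1 : ρ₀ ≤ ρ := le_max_left _ _
  have hzbnd : ∀ n, ‖zs n‖ ≤ ρ := by
    intro n
    have h1 : dist (zs n) p < 1 := lt_of_lt_of_le (hzs2 n) (by
      rw [div_le_one (by positivity)]; push_cast; linarith)
    have := norm_le_norm_add_norm_sub' (zs n) p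
    have h2 : ‖zs n - p‖ < 1 := by rwa [dist_eq_norm] at h1
    have h3 : ‖zs n‖ ≤ ‖p‖ + ‖zs n - p‖ := by
      calc ‖zs n‖ = ‖p + (zs n - p)‖ := by ring_nf
        _ ≤ ‖p‖ + ‖zs n - p‖ := norm_add_le _ _
    have : ‖zs n‖ ≤ ‖p‖ + 1 := by linarith
    exact le_trans this (le_max_right _ _)
  have hgbnd : ∀ n, g (zs n) ∈ Metric.closedBall (0:ℂ) (ρ + 1) := by
    intro n
    rw [Metric.mem_closedBall, dist_zero_right]
    exact hbnd ρ hρ1 (zs n) (hzs1 n) (hzbnd n)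
  obtain ⟨a, haball, φ, hφmono, hφtend⟩ :=
    (isCompact_closedBall (0:ℂ) (ρ + 1)).tendsto_subseq hgbnd
  have haim : ε ≤ a.im := by
    have h1 : Tendsto (fun n => (g (zs (φ n))).im) atTop (nhds a.im) :=
      (Complex.continuous_im.tendsto a).comp hφtend
    exact ge_of_tendsto h1 (Eventually.of_forall (fun n => hzs3 (φ n)))
  have haUHP : a ∈ UHP := lt_of_lt_of_le hε haim
  obtain ⟨zstar, hzstar, hgzstar⟩ := h.bij.surjOn haUHP
  have hzstarne : zstar ≠ p := fun hh => hp (hh ▸ hzstar)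
  have hdpos : 0 < dist zstar p := dist_pos.mpr hzstarne
  obtain ⟨r1, hr1pos, hr1⟩ := Metric.isOpen_iff.mp h.opn zstar hzstar
  set δ := min (dist zstar p / 2) r1 with hδdef
  have hδpos : 0 < δ := lt_min (by linarith) hr1pos
  have hVsub : Metric.ball zstar δ ⊆ UHP \ K :=
    fun x hx => hr1 (Metric.ball_subset_ball (min_le_right _ _) hx)
  have hVopen : IsOpen (g '' Metric.ball zstar δ) :=
    isOpen_image_of h.opn h.holo h.bij.injOn hVsub Metric.isOpen_ball
  have hVmem : g '' Metric.ball zstar δ ∈ nhds a := by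
    rw [← hgzstar]
    exact hVopen.mem_nhds ⟨zstar, Metric.mem_ball_self hδpos, rfl⟩
  have hev1 : ∀ᶠ n in atTop, g (zs (φ n)) ∈ g '' Metric.ball zstar δ := hφtend hVmem
  have hev2 : ∀ᶠ n in atTop, dist (zs (φ n)) p < dist zstar p / 2 := by
    have : Tendsto (fun n => zs (φ n)) atTop (nhds p) :=
      htend.comp (hφmono.tendsto_atTop)
    exact (tendsto_iff_dist_tendsto_zero.mp this).eventually_lt_const (by linarith)
  obtain ⟨n, hn1, hn2⟩ := (hev1.and hev2).exists
  obtain ⟨b, hbball, hgb⟩ := hn1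
  have hbz : zs (φ n) = b := h.bij.injOn (hzs1 (φ n)) (hVsub hbball) hgb.symm
  have hd1 : dist b zstar < δ := by rwa [Metric.mem_ball] at hbball
  have : dist zstar p ≤ dist zstar b + dist b p := dist_triangle _ _ _
  have hd2 : dist b p < dist zstar p / 2 := by rwa [hbz] at hn2
  have hd3 : dist zstar b < dist zstar p / 2 := by
    rw [dist_comm]
    exact lt_of_lt_of_le hd1 (min_le_left _ _)
  linarith


/-- Phragmén–Lindelöf-type maximum principle for the imaginary part. -/
lemma maxPrin {Ω : Set ℂ} (hΩo : IsOpen Ω) (hΩc : IsPreconnected Ω)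
    {F : ℂ → ℂ} (hF : DifferentiableOn ℂ F Ω)
    (hfar : Tendsto F (cobounded ℂ) (nhds 0))
    (hub : ∀ R : ℝ, ∃ z ∈ Ω, R < ‖z‖)
    (hM : ∃ M : ℝ, ∀ z ∈ Ω, (F z).im ≤ M)
    (hbdry : ∀ p ∈ frontier Ω, ∀ ε : ℝ, 0 < ε → ∀ᶠ z in nhdsWithin p Ω, (F z).im < ε) :
    ∀ z ∈ Ω, (F z).im ≤ 0 := by
  by_contra hcon
  push_neg at hcon
  obtain ⟨z₀, hz₀, hz₀pos⟩ := hcon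
  obtain ⟨M, hMb⟩ := hM
  set S := (fun z => (F z).im) '' Ω with hSdef
  have hSne : S.Nonempty := ⟨(F z₀).im, z₀, hz₀, rfl⟩
  have hSbd : BddAbove S := ⟨M, by rintro x ⟨z, hz, rfl⟩; exact hMb z hz⟩
  set s := sSup S with hsdef
  have hspos : 0 < s := lt_of_lt_of_le hz₀pos (le_csSup hSbd ⟨z₀, hz₀, rfl⟩)
  have hsle : ∀ z ∈ Ω, (F z).im ≤ s := fun z hz => le_csSup hSbd ⟨z, hz, rfl⟩
  -- a sequence approaching the sup
  have hex : ∀ n : ℕ, ∃ z : ℂ, z ∈ Ω ∧ s - 1 / (n + 1) < (F z).im := by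
    intro n
    obtain ⟨x, ⟨z, hz, rfl⟩, hx⟩ := exists_lt_of_lt_csSup hSne
      (by
        have h9 : (0:ℝ) < 1/(n+1) := by positivity
        show s - 1/(n+1) < s
        linarith)
    exact ⟨z, hz, hx⟩
  choose zs hzs1 hzs2 using hex
  have htendim : Tendsto (fun n => (F (zs n)).im) atTop (nhds s) := by
    have hle : ∀ n : ℕ, s - 1/(n+1) ≤ (F (zs n)).im := fun n => (hzs2 n).le
    have hge : ∀ n : ℕ, (F (zs n)).im ≤ s := fun n => hsle _ (hzs1 n)
    have h1 : Tendsto (fun n : ℕ => s - 1/(n+1)) atTop (nhds (s - 0)) :=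
      tendsto_const_nhds.sub tendsto_one_div_add_atTop_nhds_zero_nat
    rw [sub_zero] at h1
    exact tendsto_of_tendsto_of_tendsto_of_le_of_le h1 tendsto_const_nhds hle hge
  -- far control
  obtain ⟨R₂, hR₂pos, hR₂⟩ := far_of_tendsto hfar (half_pos hspos)
  -- eventually the sequence lies in a closed ball
  have hevball : ∀ᶠ n in atTop, zs n ∈ Metric.closedBall (0:ℂ) R₂ := by
    have hev : ∀ᶠ n in atTop, s / 2 < (F (zs n)).im :=
      htendim.eventually_const_lt (by linarith)
    refine hev.mono (fun n hn => ?_)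
    rw [Metric.mem_closedBall, dist_zero_right]
    by_contra hbig
    push_neg at hbig
    have h1 := hR₂ (zs n) hbig.le
    rw [sub_zero] at h1
    have h2 : (F (zs n)).im ≤ ‖F (zs n)‖ := by
      calc (F (zs n)).im ≤ |(F (zs n)).im| := le_abs_self _
        _ ≤ ‖F (zs n)‖ := by exact Complex.abs_im_le_norm _
    linarith
  obtain ⟨N, hN⟩ := eventually_atTop.mp hevball
  set zs' : ℕ → ℂ := fun n => zs (n + N) with hzs'def
  have hzs'1 : ∀ n, zs' n ∈ Ω := fun n => hzs1 (n + N)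
  have hzs'ball : ∀ n, zs' n ∈ Metric.closedBall (0:ℂ) R₂ := fun n => hN (n + N) (by omega)
  have htendim' : Tendsto (fun n => (F (zs' n)).im) atTop (nhds s) := by
    exact htendim.comp (tendsto_add_atTop_nat N)
  obtain ⟨a, haball, φ, hφmono, hφtend⟩ :=
    (isCompact_closedBall (0:ℂ) R₂).tendsto_subseq hzs'ball
  have htendima : Tendsto (fun n => (F (zs' (φ n))).im) atTop (nhds s) :=
    htendim'.comp (hφmono.tendsto_atTop)
  by_cases haΩ : a ∈ Ω
  · -- interior maximum: use the maximum modulus principle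
    have hcontF : ContinuousAt F a := (hF.continuousOn.continuousAt (hΩo.mem_nhds haΩ))
    have hFa : (F a).im = s := by
      have h1 : Tendsto (fun n => (F (zs' (φ n))).im) atTop (nhds ((F a).im)) :=
        (Complex.continuous_im.tendsto _).comp (hcontF.tendsto.comp hφtend)
      exact tendsto_nhds_unique h1 htendima
    set G : ℂ → ℂ := fun ζ => Complex.exp (-Complex.I * F ζ) with hGdef
    have hGnorm : ∀ ζ, ‖G ζ‖ = Real.exp ((F ζ).im) := by
      intro ζ
      rw [hGdef]
      simp only [Complex.norm_exp]
      congr 1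
      simp [Complex.mul_re]
    have hGd : DifferentiableOn ℂ G Ω := ((hF.const_mul (-Complex.I)).cexp)
    have hmax : IsMaxOn (norm ∘ G) Ω a := by
      intro ζ hζ
      simp only [Function.comp_apply, hGnorm]
      exact Real.exp_le_exp.mpr (hFa ▸ hsle ζ hζ)
    have heq := Complex.norm_eqOn_of_isPreconnected_of_isMaxOn hΩc hΩo hGd haΩ hmax
    obtain ⟨z₂, hz₂Ω, hz₂far⟩ := hub R₂
    have h1 := heq hz₂Ω
    simp only [Function.comp_apply, Function.const_apply] at h1
    rw [hGnorm, hGnorm, hFa] at h1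
    have h2 : (F z₂).im = s := Real.exp_injective h1
    have h3 := hR₂ z₂ hz₂far.le
    rw [sub_zero] at h3
    have h4 : (F z₂).im ≤ ‖F z₂‖ := by
      calc (F z₂).im ≤ |(F z₂).im| := le_abs_self _
        _ ≤ ‖F z₂‖ := by exact Complex.abs_im_le_norm _
    linarith
  · -- boundary case
    have haclose : a ∈ closure Ω := by
      apply mem_closure_of_tendsto hφtend
      exact Eventually.of_forall (fun n => hzs'1 (φ n))
    have hafr : a ∈ frontier Ω := by
      rw [hΩo.frontier_eq]
      exact ⟨haclose, haΩ⟩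
    have hev := hbdry a hafr (s/2) (half_pos hspos)
    have htendwithin : Tendsto (fun n => zs' (φ n)) atTop (nhdsWithin a Ω) := by
      apply tendsto_nhdsWithin_of_tendsto_nhds_of_eventually_within _ hφtend
      exact Eventually.of_forall (fun n => hzs'1 (φ n))
    have hev2 : ∀ᶠ n in atTop, (F (zs' (φ n))).im < s/2 := htendwithin.eventually hev
    have hev3 : ∀ᶠ n in atTop, s/2 < (F (zs' (φ n))).im :=
      htendima.eventually_const_lt (by linarith)
    obtain ⟨n, h1, h2⟩ := (hev2.and hev3).exists
    linarith


lemma HD.hub (h : HD K g c) : ∀ R' : ℝ, ∃ z ∈ UHP \ K, R' < ‖z‖ := by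
  intro R'
  obtain ⟨R, hR⟩ := h.radius
  set y := max R' R + 1 with hydef
  have hyR : R ≤ y := by have := le_max_right R' R; linarith
  refine ⟨((y:ℝ):ℂ) * I, h.mem_far hR hyR, ?_⟩
  have hynorm : ‖((y:ℝ):ℂ) * I‖ = y := by
    rw [norm_mul, Complex.norm_I, mul_one, Complex.norm_real, Real.norm_eq_abs,
      abs_of_pos (by linarith [hR.1])]
  rw [hynorm]
  have := le_max_left R' R
  linarith

lemma cap_nonneg {u : ℂ → ℂ} {d : ℝ}
    (hcap : Tendsto (fun z : ℂ => z * u z) (cobounded ℂ) (nhds ((d : ℝ) : ℂ)))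
    (him : ∀ᶠ y : ℝ in atTop, (u (((y:ℝ):ℂ) * I)).im ≤ 0) : 0 ≤ d := by
  have T : Tendsto (fun y : ℝ => (((y:ℝ):ℂ) * I) * u (((y:ℝ):ℂ) * I)) atTop
      (nhds ((d : ℝ) : ℂ)) := hcap.comp tendsto_coe_mul_I
  have Tre : Tendsto (fun y : ℝ => ((((y:ℝ):ℂ) * I) * u (((y:ℝ):ℂ) * I)).re) atTop (nhds d) := by
    have h1 := (Complex.continuous_re.tendsto _).comp T
    simp only [Function.comp_def, Complex.ofReal_re] at h1
    exact h1
  apply ge_of_tendsto Tre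
  filter_upwards [him, eventually_ge_atTop (0:ℝ)] with y hy hy0
  have hre : ((((y:ℝ):ℂ) * I) * u (((y:ℝ):ℂ) * I)).re = -y * (u (((y:ℝ):ℂ) * I)).im := by
    simp only [Complex.mul_re, Complex.mul_im, Complex.I_re, Complex.I_im, Complex.ofReal_re,
      Complex.ofReal_im, mul_zero, mul_one, zero_mul, zero_sub, sub_zero, add_zero, zero_add]
    ring
  rw [hre]
  nlinarith

/-- Pointwise monotonicity of mapping-out functions. -/
lemma mono_im {K1 K2 : Set ℂ} {g1 g2 : ℂ → ℂ} {c1 c2 : ℝ}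
    (h1 : HD K1 g1 c1) (h2 : HD K2 g2 c2) (hK : K1 ⊆ K2) :
    ∀ z ∈ UHP \ K2, (g2 z - g1 z).im ≤ 0 := by
  have hΩsub : UHP \ K2 ⊆ UHP \ K1 := fun z hz => ⟨hz.1, fun hk => hz.2 (hK hk)⟩
  obtain ⟨R1, hR1a, hR1b, hR1c⟩ := h1.radius
  obtain ⟨R2, hR2a, hR2b, hR2c⟩ := h2.radius
  obtain ⟨ρ₀, hρ₀1, hρbnd⟩ := h2.bnd
  set ρ := max ρ₀ (max R1 R2) with hρdef
  have hρ1 : ρ₀ ≤ ρ := le_max_left _ _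
  have hρR1 : R1 ≤ ρ := le_trans (le_max_left _ _) (le_max_right _ _)
  have hρR2 : R2 ≤ ρ := le_trans (le_max_right _ _) (le_max_right _ _)
  apply maxPrin h2.opn h2.conn (h2.holo.sub (h1.holo.mono hΩsub))
  · have h3 := h2.hydro.sub h1.hydro
    simp only [sub_sub_sub_cancel_right, sub_zero] at h3
    exact h3
  · exact h2.hub
  · refine ⟨max (ρ + 1) 2, ?_⟩
    intro z hz
    rcases le_or_gt ‖z‖ ρ with hc | hc
    · have hb := hρbnd ρ hρ1 z hz hc
      have him1 : 0 < (g1 z).im := h1.im_pos (hΩsub hz)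
      have him2 : (g2 z).im ≤ ‖g2 z‖ := by
        calc (g2 z).im ≤ |(g2 z).im| := le_abs_self _
          _ ≤ ‖g2 z‖ := by exact Complex.abs_im_le_norm _
      rw [Pi.sub_apply, Complex.sub_im]
      have := le_max_left (ρ + 1) 2
      linarith
    · have hb1 := hR1b z (by linarith)
      have hb2 := hR2b z (by linarith)
      have hnorm : ‖g2 z - g1 z‖ ≤ 2 := by
        have heq : g2 z - g1 z = (g2 z - z) - (g1 z - z) := by ring
        rw [heq]
        calc ‖(g2 z - z) - (g1 z - z)‖ ≤ ‖g2 z - z‖ + ‖g1 z - z‖ := norm_sub_le _ _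
          _ ≤ 2 := by linarith
      have him2 : (g2 z - g1 z).im ≤ ‖g2 z - g1 z‖ := by
        calc (g2 z - g1 z).im ≤ |(g2 z - g1 z).im| := le_abs_self _
          _ ≤ ‖g2 z - g1 z‖ := by exact Complex.abs_im_le_norm _
      have := le_max_right (ρ + 1) 2
      rw [Pi.sub_apply]; linarith
  · intro p hp ε hε
    have hpnot : p ∉ UHP \ K2 := by
      rw [h2.opn.frontier_eq] at hp
      exact hp.2
    filter_upwards [h2.bdry hpnot hε, self_mem_nhdsWithin] with z hz1 hz2
    have him1 : 0 < (g1 z).im := h1.im_pos (hΩsub hz2)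
    rw [Pi.sub_apply, Complex.sub_im]
    linarith

/-- Monotonicity of half-plane capacity. -/
lemma cap_mono {K1 K2 : Set ℂ} {g1 g2 : ℂ → ℂ} {c1 c2 : ℝ}
    (h1 : HD K1 g1 c1) (h2 : HD K2 g2 c2) (hK : K1 ⊆ K2) : c1 ≤ c2 := by
  have hcap : Tendsto (fun z : ℂ => z * (g2 z - g1 z)) (cobounded ℂ)
      (nhds ((c2 - c1 : ℝ) : ℂ)) := by
    have h3 := h2.cap.sub h1.cap
    have heq : (fun z : ℂ => z * (g2 z - z) - z * (g1 z - z))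
        = fun z : ℂ => z * (g2 z - g1 z) := by funext z; ring
    rw [heq] at h3
    have hval : ((c2 : ℝ) : ℂ) - ((c1 : ℝ) : ℂ) = ((c2 - c1 : ℝ) : ℂ) := by push_cast; ring
    rwa [hval] at h3
  have hevim : ∀ᶠ y : ℝ in atTop, ((fun z => g2 z - g1 z) (((y:ℝ):ℂ) * I)).im ≤ 0 := by
    obtain ⟨R2, hR2⟩ := h2.radius
    filter_upwards [eventually_ge_atTop R2] with y hy
    exact mono_im h1 h2 hK _ (h2.mem_far hR2 hy)
  have := cap_nonneg hcap hevim
  linarith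


/-- The rectangle (concavity) inequality for half-plane capacities. -/
lemma rect {K K1 K2 K0 : Set ℂ} {g g1 g2 g0 : ℂ → ℂ} {c c1 c2 c0 : ℝ}
    (h : HD K g c) (h1 : HD K1 g1 c1) (h2 : HD K2 g2 c2) (h0 : HD K0 g0 c0)
    (h01 : K0 ⊆ K1) (h02 : K0 ⊆ K2) (h1K : K1 ⊆ K) (h2K : K2 ⊆ K)
    (hfr : ∀ p ∈ frontier (UHP \ K), 0 < p.im → p ∈ K1 ∪ K2) :
    c + c0 ≤ c1 + c2 := by
  have hsub1 : UHP \ K ⊆ UHP \ K1 := fun z hz => ⟨hz.1, fun hk => hz.2 (h1K hk)⟩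
  have hsub2 : UHP \ K ⊆ UHP \ K2 := fun z hz => ⟨hz.1, fun hk => hz.2 (h2K hk)⟩
  have hsub0 : UHP \ K ⊆ UHP \ K0 := fun z hz => ⟨hz.1, fun hk => hz.2 (h1K (h01 hk))⟩
  set F : ℂ → ℂ := fun z => g1 z + g2 z - g0 z - g z with hFdef
  have hFim : ∀ z : ℂ, (F z).im = (g1 z).im + (g2 z).im - (g0 z).im - (g z).im := by
    intro z
    simp only [hFdef, Complex.sub_im, Complex.add_im]
  have hmain : ∀ z ∈ UHP \ K, (F z).im ≤ 0 := by
    apply maxPrin h.opn h.conn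
      (((((h1.holo.mono hsub1).add (h2.holo.mono hsub2)).sub (h0.holo.mono hsub0)).sub h.holo))
    · have h3 := ((h1.hydro.add h2.hydro).sub h0.hydro).sub h.hydro
      have heq : (fun z : ℂ => (g1 z - z + (g2 z - z) - (g0 z - z)) - (g z - z)) = F := by
        funext z; simp only [hFdef]; ring
      rw [heq] at h3
      simp only [add_zero, sub_zero] at h3; exact h3
    · exact h.hub
    · -- global upper bound for Im F
      obtain ⟨R, hRa, hRb, hRc⟩ := h.radius
      obtain ⟨R1, hR1a, hR1b, hR1c⟩ := h1.radius
      obtain ⟨R2, hR2a, hR2b, hR2c⟩ := h2.radius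
      obtain ⟨R0, hR0a, hR0b, hR0c⟩ := h0.radius
      obtain ⟨ρ1, hρ1a, hρ1b⟩ := h1.bnd
      obtain ⟨ρ2, hρ2a, hρ2b⟩ := h2.bnd
      set ρ := max (max (max ρ1 ρ2) (max R1 R2)) (max (max R R0) 1) with hρdef
      have hle1 : ρ1 ≤ ρ := le_trans (le_trans (le_max_left _ _) (le_max_left _ _)) (le_max_left _ _)
      have hle2 : ρ2 ≤ ρ := le_trans (le_trans (le_max_right _ _) (le_max_left _ _)) (le_max_left _ _)
      have hleR1 : R1 ≤ ρ := le_trans (le_trans (le_max_left _ _) (le_max_right _ _)) (le_max_left _ _)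
      have hleR2 : R2 ≤ ρ := le_trans (le_trans (le_max_right _ _) (le_max_right _ _)) (le_max_left _ _)
      have hleR : R ≤ ρ := le_trans (le_trans (le_max_left _ _) (le_max_left _ _)) (le_max_right _ _)
      have hleR0 : R0 ≤ ρ := le_trans (le_trans (le_max_right _ _) (le_max_left _ _)) (le_max_right _ _)
      refine ⟨max (2 * ρ + 2) 4, ?_⟩
      intro z hz
      rcases le_or_gt ‖z‖ ρ with hc | hc
      · have hb1 := hρ1b ρ hle1 z (hsub1 hz) hc
        have hb2 := hρ2b ρ hle2 z (hsub2 hz) hc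
        have him0 : 0 < (g0 z).im := h0.im_pos (hsub0 hz)
        have him : 0 < (g z).im := h.im_pos hz
        have himg1 : (g1 z).im ≤ ‖g1 z‖ := by
          calc (g1 z).im ≤ |(g1 z).im| := le_abs_self _
            _ ≤ ‖g1 z‖ := by exact Complex.abs_im_le_norm _
        have himg2 : (g2 z).im ≤ ‖g2 z‖ := by
          calc (g2 z).im ≤ |(g2 z).im| := le_abs_self _
            _ ≤ ‖g2 z‖ := by exact Complex.abs_im_le_norm _
        simp only [hFdef, Pi.sub_apply, Pi.add_apply, Complex.sub_im, Complex.add_im]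
        have := le_max_left (2 * ρ + 2) 4
        linarith
      · have hb1 := hR1b z (by linarith)
        have hb2 := hR2b z (by linarith)
        have hb0 := hR0b z (by linarith)
        have hb := hRb z (by linarith)
        have hnorm : ‖F z‖ ≤ 4 := by
          have heq : F z = ((g1 z - z) + (g2 z - z)) - ((g0 z - z) + (g z - z)) := by
            simp only [hFdef]; ring
          rw [heq]
          calc ‖((g1 z - z) + (g2 z - z)) - ((g0 z - z) + (g z - z))‖
              ≤ ‖(g1 z - z) + (g2 z - z)‖ + ‖(g0 z - z) + (g z - z)‖ := norm_sub_le _ _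
            _ ≤ (‖g1 z - z‖ + ‖g2 z - z‖) + (‖g0 z - z‖ + ‖g z - z‖) := by
                gcongr <;> exact norm_add_le _ _
            _ ≤ 4 := by linarith
        have himle : (F z).im ≤ ‖F z‖ := by
          calc (F z).im ≤ |(F z).im| := le_abs_self _
            _ ≤ ‖F z‖ := by exact Complex.abs_im_le_norm _
        have := le_max_right (2 * ρ + 2) 4
        show (F z).im ≤ _; linarith
    · -- boundary behaviour
      intro p hp ε hε
      have hpΩ : p ∉ UHP \ K := by
        rw [h.opn.frontier_eq] at hp
        exact hp.2
      by_cases him : 0 < p.im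
      · rcases hfr p hp him with hx | hx
        · -- p ∈ K1
          have hp1 : p ∉ UHP \ K1 := fun hh => hh.2 hx
          have ev1 : ∀ᶠ z in nhdsWithin p (UHP \ K), (g1 z).im < ε/2 :=
            (h1.bdry hp1 (half_pos hε)).filter_mono (nhdsWithin_mono p hsub1)
          by_cases hk2 : p ∈ K2
          · have hp2 : p ∉ UHP \ K2 := fun hh => hh.2 hk2
            have ev2 : ∀ᶠ z in nhdsWithin p (UHP \ K), (g2 z).im < ε/2 :=
              (h2.bdry hp2 (half_pos hε)).filter_mono (nhdsWithin_mono p hsub2)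
            filter_upwards [ev1, ev2, self_mem_nhdsWithin] with z hz1 hz2 hz3
            have him0 : 0 < (g0 z).im := h0.im_pos (hsub0 hz3)
            have himg : 0 < (g z).im := h.im_pos hz3
            simp only [hFdef, Pi.sub_apply, Pi.add_apply, Complex.sub_im, Complex.add_im]; linarith
          · have hpΩ2 : p ∈ UHP \ K2 := ⟨him, hk2⟩
            have hpΩ0 : p ∈ UHP \ K0 := ⟨him, fun hh => hk2 (h02 hh)⟩
            have cont2 : ContinuousAt g2 p :=
              h2.holo.continuousOn.continuousAt (h2.opn.mem_nhds hpΩ2)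
            have cont0 : ContinuousAt g0 p :=
              h0.holo.continuousOn.continuousAt (h0.opn.mem_nhds hpΩ0)
            have hval : (g2 p - g0 p).im ≤ 0 := mono_im h0 h2 h02 p hpΩ2
            have hcont : Tendsto (fun z => (g2 z - g0 z).im) (nhds p)
                (nhds ((g2 p - g0 p).im)) :=
              (Complex.continuous_im.tendsto _).comp (cont2.sub cont0)
            have evc : ∀ᶠ z in nhds p, (g2 z - g0 z).im < ε/2 :=
              hcont.eventually_lt_const (lt_of_le_of_lt hval (half_pos hε))
            have evc' : ∀ᶠ z in nhdsWithin p (UHP \ K), (g2 z - g0 z).im < ε/2 :=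
              evc.filter_mono nhdsWithin_le_nhds
            filter_upwards [ev1, evc', self_mem_nhdsWithin] with z hz1 hz2 hz3
            have himg : 0 < (g z).im := h.im_pos hz3
            rw [Complex.sub_im] at hz2
            simp only [hFdef, Pi.sub_apply, Pi.add_apply, Complex.sub_im, Complex.add_im]; linarith
        · -- p ∈ K2 (symmetric)
          have hp2 : p ∉ UHP \ K2 := fun hh => hh.2 hx
          have ev2 : ∀ᶠ z in nhdsWithin p (UHP \ K), (g2 z).im < ε/2 :=
            (h2.bdry hp2 (half_pos hε)).filter_mono (nhdsWithin_mono p hsub2)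
          by_cases hk1 : p ∈ K1
          · have hp1 : p ∉ UHP \ K1 := fun hh => hh.2 hk1
            have ev1 : ∀ᶠ z in nhdsWithin p (UHP \ K), (g1 z).im < ε/2 :=
              (h1.bdry hp1 (half_pos hε)).filter_mono (nhdsWithin_mono p hsub1)
            filter_upwards [ev1, ev2, self_mem_nhdsWithin] with z hz1 hz2 hz3
            have him0 : 0 < (g0 z).im := h0.im_pos (hsub0 hz3)
            have himg : 0 < (g z).im := h.im_pos hz3
            simp only [hFdef, Pi.sub_apply, Pi.add_apply, Complex.sub_im, Complex.add_im]; linarith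
          · have hpΩ1 : p ∈ UHP \ K1 := ⟨him, hk1⟩
            have hpΩ0 : p ∈ UHP \ K0 := ⟨him, fun hh => hk1 (h01 hh)⟩
            have cont1 : ContinuousAt g1 p :=
              h1.holo.continuousOn.continuousAt (h1.opn.mem_nhds hpΩ1)
            have cont0 : ContinuousAt g0 p :=
              h0.holo.continuousOn.continuousAt (h0.opn.mem_nhds hpΩ0)
            have hval : (g1 p - g0 p).im ≤ 0 := mono_im h0 h1 h01 p hpΩ1
            have hcont : Tendsto (fun z => (g1 z - g0 z).im) (nhds p)
                (nhds ((g1 p - g0 p).im)) :=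
              (Complex.continuous_im.tendsto _).comp (cont1.sub cont0)
            have evc : ∀ᶠ z in nhds p, (g1 z - g0 z).im < ε/2 :=
              hcont.eventually_lt_const (lt_of_le_of_lt hval (half_pos hε))
            have evc' : ∀ᶠ z in nhdsWithin p (UHP \ K), (g1 z - g0 z).im < ε/2 :=
              evc.filter_mono nhdsWithin_le_nhds
            filter_upwards [ev2, evc', self_mem_nhdsWithin] with z hz1 hz2 hz3
            have himg : 0 < (g z).im := h.im_pos hz3
            rw [Complex.sub_im] at hz2
            simp only [hFdef, Pi.sub_apply, Pi.add_apply, Complex.sub_im, Complex.add_im]; linarith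
      · -- p not in the closed upper half-plane interior
        have hp1 : p ∉ UHP \ K1 := fun hh => him hh.1
        have hp2 : p ∉ UHP \ K2 := fun hh => him hh.1
        have ev1 : ∀ᶠ z in nhdsWithin p (UHP \ K), (g1 z).im < ε/2 :=
          (h1.bdry hp1 (half_pos hε)).filter_mono (nhdsWithin_mono p hsub1)
        have ev2 : ∀ᶠ z in nhdsWithin p (UHP \ K), (g2 z).im < ε/2 :=
          (h2.bdry hp2 (half_pos hε)).filter_mono (nhdsWithin_mono p hsub2)
        filter_upwards [ev1, ev2, self_mem_nhdsWithin] with z hz1 hz2 hz3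
        have him0 : 0 < (g0 z).im := h0.im_pos (hsub0 hz3)
        have himg : 0 < (g z).im := h.im_pos hz3
        simp only [hFdef, Pi.sub_apply, Pi.add_apply, Complex.sub_im, Complex.add_im]; linarith
  -- capacity evaluation
  have hcap : Tendsto (fun z : ℂ => z * F z) (cobounded ℂ)
      (nhds ((c1 + c2 - c0 - c : ℝ) : ℂ)) := by
    have h3 := ((h1.cap.add h2.cap).sub h0.cap).sub h.cap
    have heq : (fun z : ℂ => (z * (g1 z - z) + z * (g2 z - z) - z * (g0 z - z)) - z * (g z - z))
        = fun z : ℂ => z * F z := by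
      funext z; simp only [hFdef]; ring
    rw [heq] at h3
    have hval : ((c1 : ℝ) : ℂ) + ((c2 : ℝ) : ℂ) - ((c0 : ℝ) : ℂ) - ((c : ℝ) : ℂ)
        = ((c1 + c2 - c0 - c : ℝ) : ℂ) := by push_cast; ring
    rwa [hval] at h3
  have hevim : ∀ᶠ y : ℝ in atTop, (F (((y:ℝ):ℂ) * I)).im ≤ 0 := by
    obtain ⟨R, hR⟩ := h.radius
    filter_upwards [eventually_ge_atTop R] with y hy
    exact hmain _ (h.mem_far hR hy)
  have := cap_nonneg hcap hevim
  linarith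


lemma norm_coe_mul_I {y : ℝ} (hy : 0 ≤ y) : ‖((y:ℝ):ℂ) * I‖ = y := by
  rw [norm_mul, Complex.norm_I, mul_one, Complex.norm_real, Real.norm_eq_abs, _root_.abs_of_nonneg hy]

lemma coe_mul_I_mem_UHP {y : ℝ} (hy : 0 < y) : ((y:ℝ):ℂ) * I ∈ UHP := by
  show 0 < (((y:ℝ):ℂ) * I).im
  simp only [Complex.mul_im, Complex.ofReal_re, Complex.I_im, Complex.ofReal_im,
    Complex.I_re, mul_one, mul_zero, add_zero]
  exact hy

lemma comp_open {O : Set ℂ} (hO : IsOpen O) (z₀ : ℂ) :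
    IsOpen (connectedComponentIn O z₀) := by
  rw [isOpen_iff_mem_nhds]
  intro x hx
  have hxO : x ∈ O := connectedComponentIn_subset O z₀ hx
  obtain ⟨r, hr, hball⟩ := Metric.isOpen_iff.mp hO x hxO
  have h1 : Metric.ball x r ⊆ connectedComponentIn O x :=
    (convex_ball x r).isPreconnected.subset_connectedComponentIn (Metric.mem_ball_self hr) hball
  rw [← connectedComponentIn_eq hx] at h1
  exact Filter.mem_of_superset (Metric.ball_mem_nhds x hr) h1

lemma subset_comp {O Ω Ω' : Set ℂ} {z₀ x : ℂ} (hΩ : Ω = connectedComponentIn O z₀)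
    (hΩ' : IsPreconnected Ω') (hsub : Ω' ⊆ O) (hx' : x ∈ Ω') (hx : x ∈ Ω) : Ω' ⊆ Ω := by
  have h1 : Ω' ⊆ connectedComponentIn O x := hΩ'.subset_connectedComponentIn hx' hsub
  have hx2 : x ∈ connectedComponentIn O z₀ := by rw [hΩ] at hx; exact hx
  have h2 : connectedComponentIn O z₀ = connectedComponentIn O x := connectedComponentIn_eq hx2
  rw [hΩ, h2]
  exact h1

lemma mem_comp_of_closure {O : Set ℂ} (hO : IsOpen O) {z₀ p : ℂ}
    (hp : p ∈ O) (hcl : p ∈ closure (connectedComponentIn O z₀)) :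
    p ∈ connectedComponentIn O z₀ := by
  obtain ⟨r, hr, hball⟩ := Metric.isOpen_iff.mp hO p hp
  obtain ⟨q, hq1, hq2⟩ := Metric.mem_closure_iff.mp hcl r hr
  have hqball : q ∈ Metric.ball p r := by rwa [Metric.mem_ball, dist_comm]
  have h1 : Metric.ball p r ⊆ connectedComponentIn O q :=
    (convex_ball p r).isPreconnected.subset_connectedComponentIn hqball hball
  rw [connectedComponentIn_eq hq1]
  exact h1 (Metric.mem_ball_self hr)


end StmtAux

/-- **Concavity of the two-curve capacity function.** For two chordal Loewner curves `ηp, ηm`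
in `ℍ` started from `wp > wm` with `ηp` avoiding `(-∞, wm]` and `ηm` avoiding `[wp, ∞)`, the
capacity function `m(tp, tm) = hcap₂(Hull(ηp[0,tp] ∪ ηm[0,tm]))` satisfies the rectangle
inequality `m(tp',tm') - m(tp',tm) - m(tp,tm') + m(tp,tm) ≤ 0`, and consequently `m` is
`1`-Lipschitz in each variable. -/
theorem stmt_6 (wp wm : ℝ) (hw : wm < wp) (Tp Tm : ℝ) (hTp : 0 < Tp) (hTm : 0 < Tm)
    (ηp ηm : ℝ → ℂ)
    (hcp : ContinuousOn ηp (Set.Ico 0 Tp)) (hcm : ContinuousOn ηm (Set.Ico 0 Tm))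
    (h0p : ηp 0 = (wp : ℂ)) (h0m : ηm 0 = (wm : ℂ))
    (himp : ∀ t ∈ Set.Ico 0 Tp, 0 ≤ (ηp t).im)
    (himm : ∀ t ∈ Set.Ico 0 Tm, 0 ≤ (ηm t).im)
    (havoidp : ∀ t ∈ Set.Ico 0 Tp, ¬((ηp t).im = 0 ∧ (ηp t).re ≤ wm))
    (havoidm : ∀ t ∈ Set.Ico 0 Tm, ¬((ηm t).im = 0 ∧ wp ≤ (ηm t).re))
    (K : ℝ → ℝ → Set ℂ) (g : ℝ → ℝ → ℂ → ℂ) (S : ℝ → ℝ → Set ℝ) (m : ℝ → ℝ → ℝ)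
    (hhull : ∀ tp ∈ Set.Ico 0 Tp, ∀ tm ∈ Set.Ico 0 Tm,
      IsHullMap (K tp tm) (g tp tm) (S tp tm))
    (hgen : ∀ tp ∈ Set.Ico 0 Tp, ∀ tm ∈ Set.Ico 0 Tm,
      (ηp '' Set.Icc 0 tp ∪ ηm '' Set.Icc 0 tm) ∩ UHP ⊆ K tp tm ∧
      ¬ IsBounded (UHP \ K tp tm) ∧
      ∃ z₀ ∈ UHP \ closure (ηp '' Set.Icc 0 tp ∪ ηm '' Set.Icc 0 tm),
        UHP \ K tp tm =
          connectedComponentIn (UHP \ closure (ηp '' Set.Icc 0 tp ∪ ηm '' Set.Icc 0 tm)) z₀)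
    (hcap : ∀ tp ∈ Set.Ico 0 Tp, ∀ tm ∈ Set.Ico 0 Tm, HasHcap (g tp tm) (2 * m tp tm))
    (hnormp : ∀ t ∈ Set.Ico 0 Tp, m t 0 = t)
    (hnormm : ∀ t ∈ Set.Ico 0 Tm, m 0 t = t) :
    (∀ tp ∈ Set.Ico 0 Tp, ∀ tp' ∈ Set.Ico 0 Tp, ∀ tm ∈ Set.Ico 0 Tm, ∀ tm' ∈ Set.Ico 0 Tm,
        tp ≤ tp' → tm ≤ tm' →
        m tp' tm' - m tp' tm - m tp tm' + m tp tm ≤ 0)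
    ∧ (∀ tm ∈ Set.Ico 0 Tm, ∀ s ∈ Set.Ico 0 Tp, ∀ t ∈ Set.Ico 0 Tp,
        |m s tm - m t tm| ≤ |s - t|)
    ∧ (∀ tp ∈ Set.Ico 0 Tp, ∀ s ∈ Set.Ico 0 Tm, ∀ t ∈ Set.Ico 0 Tm,
        |m tp s - m tp t| ≤ |s - t|) := by
  classical
  set E : ℝ → ℝ → Set ℂ := fun tp tm => ηp '' Set.Icc 0 tp ∪ ηm '' Set.Icc 0 tm with hEdef
  have hEmono : ∀ {tp tm tp' tm' : ℝ}, tp ≤ tp' → tm ≤ tm' → E tp tm ⊆ E tp' tm' := by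
    intro tp tm tp' tm' h1 h2
    exact Set.union_subset_union (Set.image_mono (Set.Icc_subset_Icc_right h1))
      (Set.image_mono (Set.Icc_subset_Icc_right h2))
  have hEcl : ∀ tp ∈ Set.Ico 0 Tp, ∀ tm ∈ Set.Ico 0 Tm, IsClosed (E tp tm) := by
    intro tp htp tm htm
    apply IsClosed.union
    · exact (isCompact_Icc.image_of_continuousOn
        (hcp.mono (fun x hx => ⟨hx.1, lt_of_le_of_lt hx.2 htp.2⟩))).isClosed
    · exact (isCompact_Icc.image_of_continuousOn
        (hcm.mono (fun x hx => ⟨hx.1, lt_of_le_of_lt hx.2 htm.2⟩))).isClosed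
  have hHD : ∀ tp, tp ∈ Set.Ico 0 Tp → ∀ tm, tm ∈ Set.Ico 0 Tm →
      StmtAux.HD (K tp tm) (g tp tm) (2 * m tp tm) := by
    intro tp htp tm htm
    obtain ⟨hsub, hunb, z₀, hz₀, hΩeq⟩ := hgen tp htp tm htm
    have hO : IsOpen (UHP \ closure (E tp tm)) := StmtAux.isOpen_UHP.sdiff isClosed_closure
    have hh := hhull tp htp tm htm
    exact ⟨hh.bounded, hh.holo, hh.bij, hh.hydro, hcap tp htp tm htm,
      by rw [hΩeq]; exact StmtAux.comp_open hO z₀,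
      by rw [hΩeq]; exact isPreconnected_connectedComponentIn⟩
  have hKmono : ∀ tp, tp ∈ Set.Ico 0 Tp → ∀ tm, tm ∈ Set.Ico 0 Tm →
      ∀ tp', tp' ∈ Set.Ico 0 Tp → ∀ tm', tm' ∈ Set.Ico 0 Tm →
      tp ≤ tp' → tm ≤ tm' → K tp tm ⊆ K tp' tm' := by
    intro tp htp tm htm tp' htp' tm' htm' hle1 hle2
    obtain ⟨hsub, hunb, z₀, hz₀, hΩeq⟩ := hgen tp htp tm htm
    obtain ⟨hsub', hunb', z₀', hz₀', hΩeq'⟩ := hgen tp' htp' tm' htm'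
    obtain ⟨r1, hr1⟩ := (Metric.isBounded_iff_subset_closedBall (0:ℂ)).mp
      (hhull tp htp tm htm).bounded
    obtain ⟨r2, hr2⟩ := (Metric.isBounded_iff_subset_closedBall (0:ℂ)).mp
      (hhull tp' htp' tm' htm').bounded
    set y := max (max r1 r2) 0 + 1 with hydef
    have hy0 : 0 < y := by
      have := le_max_right (max r1 r2) 0; simp only [hydef]; linarith
    have hynorm : ‖((y:ℝ):ℂ) * I‖ = y := StmtAux.norm_coe_mul_I hy0.le
    have hyUHP : ((y:ℝ):ℂ) * I ∈ UHP := StmtAux.coe_mul_I_mem_UHP hy0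
    have hyΩ : ((y:ℝ):ℂ) * I ∈ UHP \ K tp tm := by
      refine ⟨hyUHP, fun hk => ?_⟩
      have h1 := hr1 hk
      rw [Metric.mem_closedBall, dist_zero_right, hynorm] at h1
      have h2 := le_max_left r1 r2
      have h3 := le_max_left (max r1 r2) 0
      simp only [hydef] at h1
      linarith
    have hyΩ' : ((y:ℝ):ℂ) * I ∈ UHP \ K tp' tm' := by
      refine ⟨hyUHP, fun hk => ?_⟩
      have h1 := hr2 hk
      rw [Metric.mem_closedBall, dist_zero_right, hynorm] at h1
      have h2 := le_max_right r1 r2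
      have h3 := le_max_left (max r1 r2) 0
      simp only [hydef] at h1
      linarith
    have hOsub : UHP \ closure (E tp' tm') ⊆ UHP \ closure (E tp tm) :=
      fun x hx => ⟨hx.1, fun hc => hx.2 (closure_mono (hEmono hle1 hle2) hc)⟩
    have h1 : UHP \ K tp' tm' ⊆ UHP \ K tp tm := by
      have hpre : IsPreconnected (UHP \ K tp' tm') := by
        rw [hΩeq']; exact isPreconnected_connectedComponentIn
      have hss : UHP \ K tp' tm' ⊆ UHP \ closure (E tp tm) := by
        rw [hΩeq']
        exact (connectedComponentIn_subset _ _).trans hOsub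
      exact StmtAux.subset_comp hΩeq hpre hss hyΩ' hyΩ
    intro zz hzz
    by_contra hzz'
    exact (h1 ⟨(hhull tp htp tm htm).subset_UHP hzz, hzz'⟩).2 hzz
  have hfrL : ∀ tp, tp ∈ Set.Ico 0 Tp → ∀ tm, tm ∈ Set.Ico 0 Tm →
      ∀ tp', tp' ∈ Set.Ico 0 Tp → ∀ tm', tm' ∈ Set.Ico 0 Tm →
      tp ≤ tp' → tm ≤ tm' →
      ∀ p ∈ frontier (UHP \ K tp' tm'), 0 < p.im → p ∈ K tp' tm ∪ K tp tm' := by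
    intro tp htp tm htm tp' htp' tm' htm' hle1 hle2 p hp him
    obtain ⟨hsub', hunb', z₀', hz₀', hΩeq'⟩ := hgen tp' htp' tm' htm'
    have hopn' : IsOpen (UHP \ K tp' tm') := (hHD tp' htp' tm' htm').opn
    rw [hopn'.frontier_eq] at hp
    obtain ⟨hpcl, hpnot⟩ := hp
    by_cases hpE : p ∈ closure (E tp' tm')
    · rw [(hEcl tp' htp' tm' htm').closure_eq] at hpE
      rcases hpE with hp1 | hp2
      · exact Or.inl ((hgen tp' htp' tm htm).1 ⟨Or.inl hp1, him⟩)
      · exact Or.inr ((hgen tp htp tm' htm').1 ⟨Or.inr hp2, him⟩)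
    · exfalso
      have hO' : IsOpen (UHP \ closure (E tp' tm')) :=
        StmtAux.isOpen_UHP.sdiff isClosed_closure
      have hpO : p ∈ UHP \ closure (E tp' tm') := ⟨him, hpE⟩
      have hmem := StmtAux.mem_comp_of_closure hO' hpO (hΩeq' ▸ hpcl)
      exact hpnot (hΩeq' ▸ hmem)
  have hrect : ∀ tp, tp ∈ Set.Ico 0 Tp → ∀ tp', tp' ∈ Set.Ico 0 Tp →
      ∀ tm, tm ∈ Set.Ico 0 Tm → ∀ tm', tm' ∈ Set.Ico 0 Tm →
      tp ≤ tp' → tm ≤ tm' →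
      m tp' tm' - m tp' tm - m tp tm' + m tp tm ≤ 0 := by
    intro tp htp tp' htp' tm htm tm' htm' h1 h2
    have hr := StmtAux.rect (hHD tp' htp' tm' htm') (hHD tp' htp' tm htm)
      (hHD tp htp tm' htm') (hHD tp htp tm htm)
      (hKmono tp htp tm htm tp' htp' tm htm h1 le_rfl)
      (hKmono tp htp tm htm tp htp tm' htm' le_rfl h2)
      (hKmono tp' htp' tm htm tp' htp' tm' htm' le_rfl h2)
      (hKmono tp htp tm' htm' tp' htp' tm' htm' h1 le_rfl)
      (hfrL tp htp tm htm tp' htp' tm' htm' h1 h2)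
    linarith
  have h0p : (0:ℝ) ∈ Set.Ico 0 Tp := ⟨le_refl 0, hTp⟩
  have h0m : (0:ℝ) ∈ Set.Ico 0 Tm := ⟨le_refl 0, hTm⟩
  have hmono1 : ∀ tm, tm ∈ Set.Ico 0 Tm → ∀ t, t ∈ Set.Ico 0 Tp → ∀ s, s ∈ Set.Ico 0 Tp →
      t ≤ s → m t tm ≤ m s tm := by
    intro tm htm t ht s hs hts
    have := StmtAux.cap_mono (hHD t ht tm htm) (hHD s hs tm htm)
      (hKmono t ht tm htm s hs tm htm hts le_rfl)
    linarith
  have hmono2 : ∀ tp, tp ∈ Set.Ico 0 Tp → ∀ t, t ∈ Set.Ico 0 Tm → ∀ s, s ∈ Set.Ico 0 Tm →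
      t ≤ s → m tp t ≤ m tp s := by
    intro tp htp t ht s hs hts
    have := StmtAux.cap_mono (hHD tp htp t ht) (hHD tp htp s hs)
      (hKmono tp htp t ht tp htp s hs le_rfl hts)
    linarith
  refine ⟨hrect, ?_, ?_⟩
  · -- Lipschitz in the first variable
    intro tm htm s hs t ht
    rcases le_total t s with hts | hst
    · have hlow : m t tm ≤ m s tm := hmono1 tm htm t ht s hs hts
      have hup : m s tm - m t tm ≤ s - t := by
        have hr := hrect t ht s hs 0 h0m tm htm hts htm.1
        rw [hnormp s hs, hnormp t ht] at hr
        linarith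
      rw [_root_.abs_of_nonneg (by linarith), _root_.abs_of_nonneg (by linarith)]
      linarith
    · have hlow : m s tm ≤ m t tm := hmono1 tm htm s hs t ht hst
      have hup : m t tm - m s tm ≤ t - s := by
        have hr := hrect s hs t ht 0 h0m tm htm hst htm.1
        rw [hnormp t ht, hnormp s hs] at hr
        linarith
      rw [abs_sub_comm (m s tm) (m t tm), abs_sub_comm s t]
      rw [_root_.abs_of_nonneg (by linarith), _root_.abs_of_nonneg (by linarith)]
      linarith
  · -- Lipschitz in the second variable
    intro tp htp s hs t ht
    rcases le_total t s with hts | hst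
    · have hlow : m tp t ≤ m tp s := hmono2 tp htp t ht s hs hts
      have hup : m tp s - m tp t ≤ s - t := by
        have hr := hrect 0 h0p tp htp t ht s hs htp.1 hts
        rw [hnormm s hs, hnormm t ht] at hr
        linarith
      rw [_root_.abs_of_nonneg (by linarith), _root_.abs_of_nonneg (by linarith)]
      linarith
    · have hlow : m tp s ≤ m tp t := hmono2 tp htp s hs t ht hst
      have hup : m tp t - m tp s ≤ t - s := by
        have hr := hrect 0 h0p tp htp s hs t ht htp.1 hst
        rw [hnormm t ht, hnormm s hs] at hr
        linarith
      rw [abs_sub_comm (m tp s) (m tp t), abs_sub_comm s t]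
      rw [_root_.abs_of_nonneg (by linarith), _root_.abs_of_nonneg (by linarith)]
      linarith
end
end

section
/- Let (K_t)_{0≤t<T} be chordal Loewner hulls driven by a continuous function ŵ with some speed. Then for every t₀ ∈ (0,T), the driving function satisfies c_{K_{t₀}} ≤ ŵ(t) ≤ d_{K_{t₀}} for all t ∈ [0, t₀]. -/
open Complex Filter Set Metric Bornology Topology

noncomputable section

namespace Stmt7

open scoped NNReal

/-- real trace of the closure -/
def traceR (K : Set ℂ) : Set ℝ := {x : ℝ | (x : ℂ) ∈ closure K}

/-- the domain of the extended map -/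
def Om (K : Set ℂ) : Set ℂ := {z : ℂ | z ∉ Kdoub K ∧ z ∉ seg K}

variable {K : Set ℂ} {g : ℂ → ℂ} {S : Set ℝ}

lemma isCompact_closure_of_bounded (hK : IsBounded K) : IsCompact (closure K) :=
  Metric.isCompact_of_isClosed_isBounded isClosed_closure hK.closure

lemma isCompact_Kdoub (hK : IsBounded K) : IsCompact (Kdoub K) := by
  refine (isCompact_closure_of_bounded hK).union ?_
  exact ((isCompact_closure_of_bounded hK).image Complex.continuous_conj)

lemma isClosed_Kdoub (hK : IsBounded K) : IsClosed (Kdoub K) :=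
  (isCompact_Kdoub hK).isClosed

lemma mem_Kdoub {z : ℂ} : z ∈ Kdoub K ↔ z ∈ closure K ∨ (starRingEnd ℂ) z ∈ closure K := by
  unfold Kdoub
  constructor
  · rintro (h | ⟨y, hy, rfl⟩)
    · exact Or.inl h
    · right; simpa using hy
  · rintro (h | h)
    · exact Or.inl h
    · right; exact ⟨(starRingEnd ℂ) z, h, by simp⟩

lemma conj_mem_Kdoub_iff {z : ℂ} : (starRingEnd ℂ) z ∈ Kdoub K ↔ z ∈ Kdoub K := by
  simp only [mem_Kdoub]
  constructor
  · rintro (h | h); · exact Or.inr h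
    · left; simpa using h
  · rintro (h | h); · exact Or.inr (by simpa using h)
    · exact Or.inl h

lemma mem_seg_iff {z : ℂ} : z ∈ seg K ↔ z.im = 0 ∧ z.re ∈ Set.Icc (aK K) (bK K) := by
  unfold seg
  constructor
  · rintro ⟨t, ht, rfl⟩; simpa using ht
  · rintro ⟨h0, hre⟩
    exact ⟨z.re, hre, by simp [Complex.ext_iff, h0.symm]⟩

lemma real_mem_seg_iff {x : ℝ} : (x : ℂ) ∈ seg K ↔ x ∈ Set.Icc (aK K) (bK K) := by
  simp [mem_seg_iff]

lemma real_mem_Kdoub_iff {x : ℝ} : (x : ℂ) ∈ Kdoub K ↔ x ∈ traceR K := by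
  simp only [mem_Kdoub, traceR, Set.mem_setOf_eq]
  constructor
  · rintro (h | h)
    · exact h
    · simpa using h
  · intro h; exact Or.inl h

lemma isClosed_traceR : IsClosed (traceR K) :=
  isClosed_closure.preimage Complex.continuous_ofReal

lemma bddAbove_traceR (hK : IsBounded K) : BddAbove (traceR K) := by
  obtain ⟨C, hC⟩ := (hK.closure (α := ℂ)).subset_closedBall 0
  exact ⟨C, fun x hx => by
    have := hC hx
    simp only [Metric.mem_closedBall, Complex.dist_eq, sub_zero] at this
    calc x ≤ |x| := le_abs_self x
    _ = ‖(x:ℂ)‖ := by simp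
    _ ≤ C := this⟩

lemma bddBelow_traceR (hK : IsBounded K) : BddBelow (traceR K) := by
  obtain ⟨C, hC⟩ := (hK.closure (α := ℂ)).subset_closedBall 0
  exact ⟨-C, fun x hx => by
    have := hC hx
    simp only [Metric.mem_closedBall, Complex.dist_eq, sub_zero] at this
    have : |x| ≤ C := by simpa using this
    linarith [neg_abs_le x]⟩

lemma traceR_subset_Icc (hK : IsBounded K) : traceR K ⊆ Set.Icc (aK K) (bK K) :=
  fun _ hx => ⟨csInf_le (bddBelow_traceR hK) hx, le_csSup (bddAbove_traceR hK) hx⟩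

lemma aK_mem (hK : IsBounded K) (h : (traceR K).Nonempty) : aK K ∈ traceR K :=
  isClosed_traceR.csInf_mem h (bddBelow_traceR hK)

lemma bK_mem (hK : IsBounded K) (h : (traceR K).Nonempty) : bK K ∈ traceR K :=
  isClosed_traceR.csSup_mem h (bddAbove_traceR hK)

lemma aK_le_bK (hK : IsBounded K) (h : (traceR K).Nonempty) : aK K ≤ bK K :=
  csInf_le_csSup h (bddBelow_traceR hK) (bddAbove_traceR hK)

/-- the real points of the complement of the extended domain -/
lemma real_mem_Om_iff (hK : IsBounded K) {x : ℝ} :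
    (x : ℂ) ∈ Om K ↔ x ∉ Set.Icc (aK K) (bK K) := by
  unfold Om
  simp only [Set.mem_setOf_eq, real_mem_seg_iff, real_mem_Kdoub_iff]
  constructor
  · rintro ⟨_, h2⟩; exact h2
  · intro h; exact ⟨fun hx => h (traceR_subset_Icc hK hx), h⟩

lemma isOpen_Om (hK : IsBounded K) : IsOpen (Om K) := by
  have : Om K = (Kdoub K ∪ seg K)ᶜ := by
    ext z; simp [Om, Set.mem_setOf_eq, not_or]
  rw [this]
  refine (IsClosed.union (isClosed_Kdoub hK) ?_).isOpen_compl
  have : seg K = (fun t : ℝ => (t : ℂ)) '' Set.Icc (aK K) (bK K) := rfl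
  rw [this]
  exact (isCompact_Icc.image Complex.continuous_ofReal).isClosed

lemma closure_subset_im_nonneg (hU : K ⊆ UHP) : closure K ⊆ {z : ℂ | 0 ≤ z.im} := by
  refine closure_minimal (fun z hz => show (0:ℝ) ≤ z.im from le_of_lt (hU hz)) ?_
  exact isClosed_le continuous_const Complex.continuous_im

lemma UHP_diff_eq (H : IsHullMap K g S) : UHP \ K = UHP ∩ (closure K)ᶜ := by
  ext z
  simp only [Set.mem_diff, Set.mem_inter_iff, Set.mem_compl_iff]
  exact ⟨fun ⟨h1, h2⟩ => ⟨h1, fun hc => h2 (H.relClosed z hc h1)⟩,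
    fun ⟨h1, h2⟩ => ⟨h1, fun hc => h2 (subset_closure hc)⟩⟩

lemma isOpen_UHP : IsOpen UHP := by
  have : UHP = Complex.im ⁻¹' (Set.Ioi 0) := rfl
  rw [this]; exact isOpen_Ioi.preimage Complex.continuous_im

lemma isOpen_UHP_diff (H : IsHullMap K g S) : IsOpen (UHP \ K) := by
  rw [UHP_diff_eq H]
  exact isOpen_UHP.inter isClosed_closure.isOpen_compl

lemma UHP_diff_subset_Om (H : IsHullMap K g S) : UHP \ K ⊆ Om K := by
  intro z hz
  rw [UHP_diff_eq H] at hz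
  obtain ⟨h1, h2⟩ := hz
  constructor
  · rw [mem_Kdoub]
    push_neg
    refine ⟨h2, fun hc => ?_⟩
    have := closure_subset_im_nonneg H.subset_UHP hc
    simp only [Set.mem_setOf_eq] at this
    rw [Complex.conj_im] at this
    have h1' : (0:ℝ) < z.im := h1
    linarith
  · intro hs
    rw [mem_seg_iff] at hs
    have : (0:ℝ) < z.im := h1
    linarith [hs.1]

/-- the real function induced by `g` -/
def fr (g : ℂ → ℂ) (x : ℝ) : ℝ := (g (x:ℂ)).re

lemma tendsto_ofReal_cobounded : Tendsto (fun x : ℝ => (x:ℂ)) atTop (cobounded ℂ) := by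
  rw [← tendsto_norm_atTop_iff_cobounded]
  simp only [Complex.norm_real, Real.norm_eq_abs]
  exact tendsto_abs_atTop_atTop

lemma tendsto_ofReal_cobounded_bot : Tendsto (fun x : ℝ => (x:ℂ)) atBot (cobounded ℂ) := by
  rw [← tendsto_norm_atTop_iff_cobounded]
  simp only [Complex.norm_real, Real.norm_eq_abs]
  exact tendsto_abs_atBot_atTop

section Level

variable (H : IsHullMap K g S) (hne : K.Nonempty)

include H

lemma g_im_pos {z : ℂ} (hz : z ∈ UHP \ K) : 0 < (g z).im := H.bij.mapsTo hz

lemma real_not_mem_Kdoub {x : ℝ} (hx : x ∉ Set.Icc (aK K) (bK K)) :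
    (x:ℂ) ∉ Kdoub K := ((real_mem_Om_iff H.bounded).2 hx).1

include hne in
lemma g_ofReal_eq {x : ℝ} (hx : x ∉ Set.Icc (aK K) (bK K)) :
    g (x:ℂ) = ((fr g x : ℝ) : ℂ) := by
  have him : (g (x:ℂ)).im = 0 := H.real_vals hne x (real_not_mem_Kdoub H hx)
  apply Complex.ext <;> simp [fr, him]

include hne in
lemma real_preimage {z : ℂ} (hz : z ∈ Om K) (him : (g z).im = 0) : z.im = 0 := by
  rcases lt_trichotomy z.im 0 with h | h | h
  · exfalso
    have hnk : (starRingEnd ℂ) z ∉ Kdoub K := by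
      rw [conj_mem_Kdoub_iff]; exact hz.1
    have hmem : (starRingEnd ℂ) z ∈ UHP \ K := by
      constructor
      · show 0 < ((starRingEnd ℂ) z).im
        rw [Complex.conj_im]; linarith
      · intro hk
        exact hnk (mem_Kdoub.2 (Or.inl (subset_closure hk)))
    have h1 : 0 < (g ((starRingEnd ℂ) z)).im := g_im_pos H hmem
    rw [H.conj_symm hne z hz.1, Complex.conj_im, him] at h1
    exact lt_irrefl 0 (by simpa using h1)
  · exact h
  · exfalso
    have hmem : z ∈ UHP \ K := by
      refine ⟨h, fun hk => hz.1 (mem_Kdoub.2 (Or.inl (subset_closure hk)))⟩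
    have h1 : 0 < (g z).im := g_im_pos H hmem
    rw [him] at h1; exact lt_irrefl 0 h1

include hne in
lemma fr_not_mem_S {x : ℝ} (hx : x ∉ Set.Icc (aK K) (bK K)) : fr g x ∉ S := by
  intro hs
  have hmem : (x:ℂ) ∈ Om K := (real_mem_Om_iff H.bounded).2 hx
  exact (H.extBij hne).mapsTo hmem (fr g x) hs (g_ofReal_eq H hne hx)

include hne in
lemma fr_injOn : Set.InjOn (fr g) {x : ℝ | x ∉ Set.Icc (aK K) (bK K)} := by
  intro x hx y hy hxy
  have hx' : (x:ℂ) ∈ Om K := (real_mem_Om_iff H.bounded).2 hx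
  have hy' : (y:ℂ) ∈ Om K := (real_mem_Om_iff H.bounded).2 hy
  have hg : g (x:ℂ) = g (y:ℂ) := by
    rw [g_ofReal_eq H hne hx, g_ofReal_eq H hne hy, hxy]
  have := (H.extBij hne).injOn hx' hy' hg
  exact_mod_cast this

include hne in
lemma g_analyticAt {z : ℂ} (hz : z ∉ Kdoub K) : AnalyticAt ℂ g z := by
  have hopen : IsOpen {z : ℂ | z ∉ Kdoub K} := by
    have : {z : ℂ | z ∉ Kdoub K} = (Kdoub K)ᶜ := rfl
    rw [this]; exact (isClosed_Kdoub H.bounded).isOpen_compl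
  exact (H.ext_holo hne).analyticAt (hopen.mem_nhds hz)

include hne in
lemma fr_continuousAt {x : ℝ} (hx : (x:ℂ) ∉ Kdoub K) : ContinuousAt (fr g) x := by
  have h1 : ContinuousAt g (x:ℂ) := (g_analyticAt H hne hx).continuousAt
  exact Complex.continuous_re.continuousAt.comp
    (h1.comp Complex.continuous_ofReal.continuousAt)

lemma fr_sub_tendsto_atTop : Tendsto (fun x : ℝ => fr g x - x) atTop (𝓝 0) := by
  have h1 : Tendsto (fun x : ℝ => g (x:ℂ) - (x:ℂ)) atTop (𝓝 0) :=
    H.hydro.comp tendsto_ofReal_cobounded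
  have h2 : Tendsto (fun x : ℝ => (g (x:ℂ) - (x:ℂ)).re) atTop (𝓝 ((0:ℂ).re)) :=
    (Complex.continuous_re.tendsto 0).comp h1
  simpa [fr] using h2

lemma fr_sub_tendsto_atBot : Tendsto (fun x : ℝ => fr g x - x) atBot (𝓝 0) := by
  have h1 : Tendsto (fun x : ℝ => g (x:ℂ) - (x:ℂ)) atBot (𝓝 0) :=
    H.hydro.comp tendsto_ofReal_cobounded_bot
  have h2 : Tendsto (fun x : ℝ => (g (x:ℂ) - (x:ℂ)).re) atBot (𝓝 ((0:ℂ).re)) :=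
    (Complex.continuous_re.tendsto 0).comp h1
  simpa [fr] using h2

lemma fr_ge_eventually : ∀ᶠ x in atTop, x - 1 ≤ fr g x := by
  have := (Metric.tendsto_nhds.mp (fr_sub_tendsto_atTop H)) 1 one_pos
  refine this.mono fun x hx => ?_
  rw [Real.dist_eq, sub_zero] at hx
  cases' abs_lt.mp hx with h1 h2
  linarith

lemma fr_le_eventually_bot : ∀ᶠ x in atBot, fr g x ≤ x + 1 := by
  have := (Metric.tendsto_nhds.mp (fr_sub_tendsto_atBot H)) 1 one_pos
  refine this.mono fun x hx => ?_
  rw [Real.dist_eq, sub_zero] at hx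
  cases' abs_lt.mp hx with h1 h2
  linarith

lemma not_mem_Icc_of_gt {x : ℝ} (hx : bK K < x) : x ∉ Set.Icc (aK K) (bK K) :=
  fun h => absurd h.2 (not_le.mpr hx)

lemma not_mem_Icc_of_lt {x : ℝ} (hx : x < aK K) : x ∉ Set.Icc (aK K) (bK K) :=
  fun h => absurd h.1 (not_le.mpr hx)

include hne in
lemma fr_strictMonoOn_right : StrictMonoOn (fr g) (Set.Ioi (bK K)) := by
  intro x hx y hy hxy
  obtain ⟨M, hM1, hM2, hM3⟩ :
      ∃ M, M - 1 ≤ fr g M ∧ y < M ∧ max (fr g x) (fr g y) + 2 < M := by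
    obtain ⟨M, h1, h2, h3⟩ :=
      ((fr_ge_eventually H).and ((eventually_gt_atTop y).and
        (eventually_gt_atTop (max (fr g x) (fr g y) + 2)))).exists
    exact ⟨M, h1, h2, h3⟩
  have hxM : x ≤ M := le_of_lt (lt_trans hxy hM2)
  have hsub : Set.Icc x M ⊆ Set.Ioi (bK K) := fun t ht => lt_of_lt_of_le hx ht.1
  have hcont : ContinuousOn (fr g) (Set.Icc x M) := fun t ht =>
    ((fr_continuousAt H hne (real_not_mem_Kdoub H
      (not_mem_Icc_of_gt H (hsub ht)))).continuousWithinAt)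
  have hinj : Set.InjOn (fr g) (Set.Icc x M) :=
    (fr_injOn H hne).mono (fun t ht => not_mem_Icc_of_gt H (hsub ht))
  rcases ContinuousOn.strictMonoOn_of_injOn_Icc' hxM hcont hinj with hmono | hanti
  · exact hmono (Set.left_mem_Icc.2 hxM) ⟨le_of_lt hxy, le_of_lt hM2⟩ hxy
  · exfalso
    have := hanti (Set.left_mem_Icc.2 hxM) (Set.right_mem_Icc.2 hxM)
      (lt_of_lt_of_le hxy (le_of_lt hM2))
    have hfx : fr g x ≤ max (fr g x) (fr g y) := le_max_left _ _
    linarith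
  
include hne in
lemma fr_strictMonoOn_left : StrictMonoOn (fr g) (Set.Iio (aK K)) := by
  intro x hx y hy hxy
  obtain ⟨M, hM1, hM2, hM3⟩ :
      ∃ M, fr g M ≤ M + 1 ∧ M < x ∧ M < min (fr g x) (fr g y) - 2 := by
    obtain ⟨M, h1, h2, h3⟩ :=
      ((fr_le_eventually_bot H).and ((eventually_lt_atBot x).and
        (eventually_lt_atBot (min (fr g x) (fr g y) - 2)))).exists
    exact ⟨M, h1, h2, h3⟩
  have hMy : M ≤ y := le_of_lt (lt_trans hM2 hxy)
  have hsub : Set.Icc M y ⊆ Set.Iio (aK K) := fun t ht => lt_of_le_of_lt ht.2 hy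
  have hcont : ContinuousOn (fr g) (Set.Icc M y) := fun t ht =>
    ((fr_continuousAt H hne (real_not_mem_Kdoub H
      (not_mem_Icc_of_lt H (hsub ht)))).continuousWithinAt)
  have hinj : Set.InjOn (fr g) (Set.Icc M y) :=
    (fr_injOn H hne).mono (fun t ht => not_mem_Icc_of_lt H (hsub ht))
  rcases ContinuousOn.strictMonoOn_of_injOn_Icc' hMy hcont hinj with hmono | hanti
  · exact hmono ⟨le_of_lt hM2, le_of_lt hxy⟩ (Set.right_mem_Icc.2 hMy) hxy
  · exfalso
    have := hanti (Set.left_mem_Icc.2 hMy) ⟨le_of_lt hM2, le_of_lt hxy⟩ hM2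
    have hfx : min (fr g x) (fr g y) ≤ fr g x := min_le_left _ _
    linarith

variable (hab : aK K ≤ bK K)

/-- `α' = sup` of the image of the left ray -/
def alphaR (K : Set ℂ) (g : ℂ → ℂ) : ℝ := sSup (fr g '' (Set.Iio (aK K)))

/-- `β' = inf` of the image of the right ray -/
def betaR (K : Set ℂ) (g : ℂ → ℂ) : ℝ := sInf (fr g '' (Set.Ioi (bK K)))

include hne hab in
lemma bddBelow_image_right : BddBelow (fr g '' (Set.Ioi (bK K))) := by
  by_contra hbb
  have hall : ∀ y : ℝ, y ∈ fr g '' (Set.Ioi (bK K)) := by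
    intro y
    obtain ⟨y', hy', hy'lt⟩ := not_bddBelow_iff.mp hbb y
    obtain ⟨x₁, hx₁, rfl⟩ := hy'
    obtain ⟨x₂, hge, hx₂⟩ := ((fr_ge_eventually H).and
      (eventually_ge_atTop (max x₁ (y+1)))).exists
    have hx₂b : bK K < x₂ := lt_of_lt_of_le hx₁ (le_trans (le_max_left _ _) hx₂)
    have h12 : x₁ ≤ x₂ := le_trans (le_max_left _ _) hx₂
    have hcont : ContinuousOn (fr g) (Set.Icc x₁ x₂) := fun t ht =>
      ((fr_continuousAt H hne (real_not_mem_Kdoub H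
        (not_mem_Icc_of_gt H (lt_of_lt_of_le hx₁ ht.1)))).continuousWithinAt)
    have hy2 : y ≤ fr g x₂ := by
      have : y + 1 ≤ x₂ := le_trans (le_max_right _ _) hx₂
      linarith
    have := intermediate_value_Icc h12 hcont (⟨le_of_lt hy'lt, hy2⟩ : y ∈ Set.Icc (fr g x₁) (fr g x₂))
    obtain ⟨t, ht, htv⟩ := this
    exact ⟨t, lt_of_lt_of_le hx₁ ht.1, htv⟩
  -- now the left-ray value gives a contradiction with injectivity
  obtain ⟨v, hv, hveq⟩ := hall (fr g (aK K - 1))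
  have h1 : (aK K - 1) ∈ {x : ℝ | x ∉ Set.Icc (aK K) (bK K)} :=
    not_mem_Icc_of_lt H (by linarith)
  have h2 : v ∈ {x : ℝ | x ∉ Set.Icc (aK K) (bK K)} := not_mem_Icc_of_gt H hv
  have := fr_injOn H hne h2 h1 hveq
  rw [this] at hv
  simp only [Set.mem_Ioi] at hv
  linarith

include hne hab in
lemma bddAbove_image_left : BddAbove (fr g '' (Set.Iio (aK K))) := by
  by_contra hbb
  have hall : ∀ y : ℝ, y ∈ fr g '' (Set.Iio (aK K)) := by
    intro y
    obtain ⟨y', hy', hy'lt⟩ := not_bddAbove_iff.mp hbb y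
    obtain ⟨x₁, hx₁, rfl⟩ := hy'
    obtain ⟨x₂, hge, hx₂⟩ := ((fr_le_eventually_bot H).and
      (eventually_le_atBot (min x₁ (y-1)))).exists
    have hx₂a : x₂ < aK K := lt_of_le_of_lt (le_trans hx₂ (min_le_left _ _)) hx₁
    have h21 : x₂ ≤ x₁ := le_trans hx₂ (min_le_left _ _)
    have hcont : ContinuousOn (fr g) (Set.Icc x₂ x₁) := fun t ht =>
      ((fr_continuousAt H hne (real_not_mem_Kdoub H
        (not_mem_Icc_of_lt H (lt_of_le_of_lt ht.2 hx₁)))).continuousWithinAt)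
    have hy2 : fr g x₂ ≤ y := by
      have : x₂ ≤ y - 1 := le_trans hx₂ (min_le_right _ _)
      linarith
    have := intermediate_value_Icc h21 hcont (⟨hy2, le_of_lt hy'lt⟩ : y ∈ Set.Icc (fr g x₂) (fr g x₁))
    obtain ⟨t, ht, htv⟩ := this
    exact ⟨t, lt_of_le_of_lt ht.2 hx₁, htv⟩
  obtain ⟨v, hv, hveq⟩ := hall (fr g (bK K + 1))
  have h1 : (bK K + 1) ∈ {x : ℝ | x ∉ Set.Icc (aK K) (bK K)} :=
    not_mem_Icc_of_gt H (by linarith)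
  have h2 : v ∈ {x : ℝ | x ∉ Set.Icc (aK K) (bK K)} := not_mem_Icc_of_lt H hv
  have := fr_injOn H hne h2 h1 hveq
  rw [this] at hv
  simp only [Set.mem_Iio] at hv
  linarith

include hne hab in
lemma image_right_eq : fr g '' (Set.Ioi (bK K)) = Set.Ioi (betaR K g) := by
  apply Set.eq_of_subset_of_subset
  · rintro y ⟨x, hx, rfl⟩
    simp only [Set.mem_Ioi] at hx ⊢
    set x' := (bK K + x)/2 with hx'def
    have hx'1 : bK K < x' := by simp only [hx'def]; linarith
    have hx'2 : x' < x := by simp only [hx'def]; linarith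
    have hlt : fr g x' < fr g x := fr_strictMonoOn_right H hne hx'1 hx hx'2
    have hle : betaR K g ≤ fr g x' :=
      csInf_le (bddBelow_image_right H hne hab) ⟨x', hx'1, rfl⟩
    linarith
  · intro y hy
    simp only [Set.mem_Ioi] at hy
    obtain ⟨y', ⟨x₁, hx₁, rfl⟩, hy'⟩ := exists_lt_of_csInf_lt
      (Set.Nonempty.image _ ⟨bK K + 1, by simp⟩) hy
    obtain ⟨x₂, hge, hx₂⟩ := ((fr_ge_eventually H).and
      (eventually_ge_atTop (max x₁ (y+1)))).exists
    have h12 : x₁ ≤ x₂ := le_trans (le_max_left _ _) hx₂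
    have hcont : ContinuousOn (fr g) (Set.Icc x₁ x₂) := fun t ht =>
      ((fr_continuousAt H hne (real_not_mem_Kdoub H
        (not_mem_Icc_of_gt H (lt_of_lt_of_le hx₁ ht.1)))).continuousWithinAt)
    have hy2 : y ≤ fr g x₂ := by
      have : y + 1 ≤ x₂ := le_trans (le_max_right _ _) hx₂
      linarith
    obtain ⟨t, ht, htv⟩ := intermediate_value_Icc h12 hcont
      (⟨le_of_lt hy', hy2⟩ : y ∈ Set.Icc (fr g x₁) (fr g x₂))
    exact ⟨t, lt_of_lt_of_le hx₁ ht.1, htv⟩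

include hne hab in
lemma image_left_eq : fr g '' (Set.Iio (aK K)) = Set.Iio (alphaR K g) := by
  apply Set.eq_of_subset_of_subset
  · rintro y ⟨x, hx, rfl⟩
    simp only [Set.mem_Iio] at hx ⊢
    set x' := (x + aK K)/2 with hx'def
    have hx'1 : x' < aK K := by simp only [hx'def]; linarith
    have hx'2 : x < x' := by simp only [hx'def]; linarith
    have hlt : fr g x < fr g x' := fr_strictMonoOn_left H hne hx hx'1 hx'2
    have hle : fr g x' ≤ alphaR K g :=
      le_csSup (bddAbove_image_left H hne hab) ⟨x', hx'1, rfl⟩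
    linarith
  · intro y hy
    simp only [Set.mem_Iio] at hy
    obtain ⟨y', ⟨x₁, hx₁, rfl⟩, hy'⟩ := exists_lt_of_lt_csSup
      (Set.Nonempty.image _ ⟨aK K - 1, by simp⟩) hy
    obtain ⟨x₂, hge, hx₂⟩ := ((fr_le_eventually_bot H).and
      (eventually_le_atBot (min x₁ (y-1)))).exists
    have h21 : x₂ ≤ x₁ := le_trans hx₂ (min_le_left _ _)
    have hcont : ContinuousOn (fr g) (Set.Icc x₂ x₁) := fun t ht =>
      ((fr_continuousAt H hne (real_not_mem_Kdoub H
        (not_mem_Icc_of_lt H (lt_of_le_of_lt ht.2 hx₁)))).continuousWithinAt)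
    have hy2 : fr g x₂ ≤ y := by
      have : x₂ ≤ y - 1 := le_trans hx₂ (min_le_right _ _)
      linarith
    obtain ⟨t, ht, htv⟩ := intermediate_value_Icc h21 hcont
      (⟨hy2, le_of_lt hy'⟩ : y ∈ Set.Icc (fr g x₂) (fr g x₁))
    exact ⟨t, lt_of_le_of_lt ht.2 hx₁, htv⟩

include hne in
lemma compl_S_mem_image {y : ℝ} (hy : y ∉ S) :
    y ∈ fr g '' (Set.Iio (aK K)) ∪ fr g '' (Set.Ioi (bK K)) := by
  have hyt : (y:ℂ) ∈ {z : ℂ | ∀ s ∈ S, z ≠ (s:ℂ)} := by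
    intro s hs he
    exact hy (by rwa [show y = s from by exact_mod_cast he])
  obtain ⟨z, hz, hgz⟩ := (H.extBij hne).surjOn hyt
  have hzOm : z ∈ Om K := hz
  have him : (g z).im = 0 := by rw [hgz]; simp
  have hzim : z.im = 0 := real_preimage H hne hzOm him
  set x := z.re with hxdef
  have hzx : (x:ℂ) = z := by
    apply Complex.ext <;> simp [hxdef, hzim.symm]
  have hxmem : x ∉ Set.Icc (aK K) (bK K) := by
    rw [← real_mem_Om_iff H.bounded (x := x)]
    rwa [hzx]
  have hfx : fr g x = y := by
    have : g (x:ℂ) = (y:ℂ) := by rw [hzx, hgz]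
    simp [fr, this]
  rcases lt_or_ge x (aK K) with h | h
  · exact Or.inl ⟨x, h, hfx⟩
  · right
    refine ⟨x, ?_, hfx⟩
    simp only [Set.mem_Ioi]
    by_contra hle
    exact hxmem ⟨h, not_lt.mp hle⟩

include hne hab in
lemma alphaR_le_betaR : alphaR K g ≤ betaR K g := by
  by_contra hlt
  push_neg at hlt
  set y := (alphaR K g + betaR K g)/2 with hydef
  have hy1 : betaR K g < y := by simp only [hydef]; linarith
  have hy2 : y < alphaR K g := by simp only [hydef]; linarith
  have hmem1 : y ∈ fr g '' (Set.Ioi (bK K)) := by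
    rw [image_right_eq H hne hab]; exact hy1
  have hmem2 : y ∈ fr g '' (Set.Iio (aK K)) := by
    rw [image_left_eq H hne hab]; exact hy2
  obtain ⟨x₂, hx₂, he₂⟩ := hmem1
  obtain ⟨x₁, hx₁, he₁⟩ := hmem2
  have : x₁ = x₂ := fr_injOn H hne (not_mem_Icc_of_lt H hx₁)
    (not_mem_Icc_of_gt H hx₂) (he₁.trans he₂.symm)
  rw [this] at hx₁
  simp only [Set.mem_Ioi] at hx₂
  simp only [Set.mem_Iio] at hx₁
  linarith

include hne hab in
lemma S_eq_Icc : S = Set.Icc (alphaR K g) (betaR K g) := by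
  apply Set.eq_of_subset_of_subset
  · intro y hy
    constructor
    · by_contra hc
      push_neg at hc
      have : y ∈ fr g '' (Set.Iio (aK K)) := by
        rw [image_left_eq H hne hab]; exact hc
      obtain ⟨x, hx, he⟩ := this
      exact fr_not_mem_S H hne (not_mem_Icc_of_lt H hx) (he ▸ hy)
    · by_contra hc
      push_neg at hc
      have : y ∈ fr g '' (Set.Ioi (bK K)) := by
        rw [image_right_eq H hne hab]; exact hc
      obtain ⟨x, hx, he⟩ := this
      exact fr_not_mem_S H hne (not_mem_Icc_of_gt H hx) (he ▸ hy)
  · intro y hy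
    by_contra hyS
    rcases compl_S_mem_image H hne hyS with hmem | hmem
    · rw [image_left_eq H hne hab] at hmem
      exact absurd hy.1 (not_le.mpr hmem)
    · rw [image_right_eq H hne hab] at hmem
      exact absurd hy.2 (not_le.mpr hmem)

include hne hab in
lemma sSup_S_eq : sSup S = betaR K g := by
  rw [S_eq_Icc H hne hab]
  exact csSup_Icc (alphaR_le_betaR H hne hab)

include hne hab in
lemma sInf_S_eq : sInf S = alphaR K g := by
  rw [S_eq_Icc H hne hab]
  exact csInf_Icc (alphaR_le_betaR H hne hab)

include hne hab in
lemma S_nonempty : S.Nonempty := by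
  rw [S_eq_Icc H hne hab]
  exact Set.nonempty_Icc.2 (alphaR_le_betaR H hne hab)

include hne hab in
lemma sSup_S_le_fr {x : ℝ} (hx : bK K < x) : sSup S ≤ fr g x := by
  rw [sSup_S_eq H hne hab]
  exact csInf_le (bddBelow_image_right H hne hab) ⟨x, hx, rfl⟩

include hne hab in
lemma fr_le_sInf_S {x : ℝ} (hx : x < aK K) : fr g x ≤ sInf S := by
  rw [sInf_S_eq H hne hab]
  exact le_csSup (bddAbove_image_left H hne hab) ⟨x, hx, rfl⟩

include hne hab in
lemma le_sSup_S {w : ℝ} (hw : ∀ x : ℝ, bK K < x → w ≤ fr g x) : w ≤ sSup S := by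
  rw [sSup_S_eq H hne hab]
  refine le_csInf (Set.Nonempty.image _ ⟨bK K + 1, by simp⟩) ?_
  rintro y ⟨x, hx, rfl⟩
  exact hw x hx

include hne hab in
lemma sInf_S_le {w : ℝ} (hw : ∀ x : ℝ, x < aK K → fr g x ≤ w) : sInf S ≤ w := by
  rw [sInf_S_eq H hne hab]
  refine csSup_le (Set.Nonempty.image _ ⟨aK K - 1, by simp⟩) ?_
  rintro y ⟨x, hx, rfl⟩
  exact hw x hx

include hne in
lemma g_nhds_le_map {z₀ : ℂ} (hz₀ : z₀ ∈ Om K) : 𝓝 (g z₀) ≤ map g (𝓝 z₀) := by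
  rcases (g_analyticAt H hne hz₀.1).eventually_constant_or_nhds_le_map_nhds with hconst | hle
  · exfalso
    obtain ⟨r, hr, hball⟩ := Metric.eventually_nhds_iff_ball.mp hconst
    obtain ⟨r', hr', hball'⟩ := Metric.isOpen_iff.mp (isOpen_Om H.bounded) z₀ hz₀
    set ρ := min r r' / 2 with hρdef
    have hρpos : 0 < ρ := by positivity
    have hρlt : ρ < min r r' := by
      have : 0 < min r r' := lt_min hr hr'
      simp only [hρdef]; linarith
    have hmem : z₀ + (ρ : ℂ) ∈ Metric.ball z₀ (min r r') := by
      simp only [Metric.mem_ball, dist_eq_norm, add_sub_cancel_left]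
      simpa [Complex.norm_real, Real.norm_eq_abs, abs_of_pos hρpos] using hρlt
    have hval : g (z₀ + (ρ:ℂ)) = g z₀ :=
      hball _ (Metric.ball_subset_ball (min_le_left _ _) hmem)
    have hOm : z₀ + (ρ:ℂ) ∈ Om K :=
      hball' (Metric.ball_subset_ball (min_le_right _ _) hmem)
    have := (H.extBij hne).injOn hOm hz₀ hval
    have hne' : z₀ + (ρ:ℂ) ≠ z₀ := by
      intro hc
      have : (ρ:ℂ) = 0 := by linear_combination hc
      exact (ne_of_gt hρpos) (by exact_mod_cast this)
    exact hne' this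
  · exact hle

include hne in
lemma mem_closure_of_image_mem_closure {A : Set ℂ} (hA : A ⊆ Om K) {z₀ : ℂ}
    (hz₀ : z₀ ∈ Om K) (hcl : g z₀ ∈ closure (g '' A)) : z₀ ∈ closure A := by
  rw [mem_closure_iff_nhds] at hcl ⊢
  intro U hU
  have hU' : U ∩ Om K ∈ 𝓝 z₀ := inter_mem hU ((isOpen_Om H.bounded).mem_nhds hz₀)
  have himg : g '' (U ∩ Om K) ∈ 𝓝 (g z₀) := g_nhds_le_map H hne hz₀ (image_mem_map hU')
  obtain ⟨y, hy1, hy2⟩ := hcl _ himg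
  obtain ⟨u, hu, huv⟩ := hy1
  obtain ⟨a, ha, hav⟩ := hy2
  have : a = u := (H.extBij hne).injOn (hA ha) hu.2 (hav.trans huv.symm)
  exact ⟨u, hu.1, this ▸ ha⟩

include hne in
lemma far_surj : ∃ R₀ : ℝ, 0 < R₀ ∧ (∀ z ∈ Kdoub K ∪ seg K, ‖z‖ < R₀) ∧
    ∀ w : ℂ, R₀ + 2 ≤ ‖w‖ → ∃ z : ℂ, dist z w ≤ 1 ∧ g z = w := by
  have hEcpt : IsCompact (Kdoub K ∪ seg K) := by
    refine (isCompact_Kdoub H.bounded).union ?_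
    exact isCompact_Icc.image Complex.continuous_ofReal
  obtain ⟨RE, hRE⟩ := hEcpt.isBounded.subset_closedBall 0
  have hq : ∀ᶠ z in cobounded ℂ, dist (g z - z) 0 < 1/8 :=
    Metric.tendsto_nhds.mp H.hydro (1/8) (by norm_num)
  obtain ⟨Rq, -, hRq⟩ := (Filter.hasBasis_cobounded_norm.eventually_iff).mp hq
  set R₀ : ℝ := max (max RE Rq) 0 + 1 with hR₀def
  have hR₀pos : 0 < R₀ := by positivity
  have hR₀E : ∀ z ∈ Kdoub K ∪ seg K, ‖z‖ < R₀ := by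
    intro z hz
    have := hRE hz
    simp only [Metric.mem_closedBall, dist_zero_right] at this
    calc ‖z‖ ≤ RE := this
    _ ≤ max (max RE Rq) 0 := le_trans (le_max_left _ _) (le_max_left _ _)
    _ < R₀ := by simp only [hR₀def]; linarith
  have hqR : ∀ z : ℂ, R₀ ≤ ‖z‖ → ‖g z - z‖ ≤ 1/8 := by
    intro z hz
    have hz' : Rq ≤ ‖z‖ := by
      have : Rq ≤ max (max RE Rq) 0 := le_trans (le_max_right _ _) (le_max_left _ _)
      simp only [hR₀def] at hz; linarith
    have := hRq hz'
    simp only [Set.mem_setOf_eq, dist_zero_right] at this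
    linarith
  have hgdiff : ∀ z : ℂ, R₀ ≤ ‖z‖ → DifferentiableAt ℂ g z := by
    intro z hz
    have hzn : z ∉ Kdoub K := fun hc => absurd hz (not_le.mpr (hR₀E z (Or.inl hc)))
    exact ((g_analyticAt H hne hzn).differentiableAt)
  refine ⟨R₀, hR₀pos, hR₀E, fun w hw => ?_⟩
  set q : ℂ → ℂ := fun z => g z - z with hqdef
  -- derivative bound on closedBall w (3/2)
  have hderiv : ∀ z ∈ Metric.closedBall w (3/2), ‖deriv q z‖ ≤ 1/4 := by
    intro z hz
    have hzn : R₀ + 1/2 ≤ ‖z‖ := by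
      have h1 : |‖z‖ - ‖w‖| ≤ ‖z - w‖ := abs_norm_sub_norm_le _ _
      have h2 : ‖z - w‖ ≤ 3/2 := by rwa [← dist_eq_norm]
      cases' abs_le.mp h1 with h3 h4
      linarith
    have hdc : DiffContOnCl ℂ q (Metric.ball z (1/2)) := by
      apply DifferentiableOn.diffContOnCl
      rw [closure_ball z (by norm_num : (1/2:ℝ) ≠ 0)]
      intro ζ hζ
      have hζn : R₀ ≤ ‖ζ‖ := by
        have h1 : |‖ζ‖ - ‖z‖| ≤ ‖ζ - z‖ := abs_norm_sub_norm_le _ _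
        have h2 : ‖ζ - z‖ ≤ 1/2 := by
          simpa [dist_eq_norm] using hζ
        cases' abs_le.mp h1 with h3 h4
        linarith
      exact (((hgdiff ζ hζn).sub (differentiableAt_id)).differentiableWithinAt)
    have hsp : ∀ ζ ∈ Metric.sphere z (1/2), ‖q ζ‖ ≤ 1/8 := by
      intro ζ hζ
      have hζn : R₀ ≤ ‖ζ‖ := by
        have h1 : |‖ζ‖ - ‖z‖| ≤ ‖ζ - z‖ := abs_norm_sub_norm_le _ _
        have h2 : ‖ζ - z‖ = 1/2 := by
          simpa [dist_eq_norm] using hζ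
        cases' abs_le.mp h1 with h3 h4
        linarith
      exact hqR ζ hζn
    have := Complex.norm_deriv_le_of_forall_mem_sphere_norm_le (by norm_num : (0:ℝ) < 1/2) hdc hsp
    calc ‖deriv q z‖ ≤ (1/8)/(1/2) := this
    _ ≤ 1/4 := by norm_num
  have hlip : ∀ x ∈ Metric.closedBall w (3/2), ∀ y ∈ Metric.closedBall w (3/2),
      ‖q x - q y‖ ≤ (1/4) * ‖x - y‖ := by
    intro x hx y hy
    have hdiff : ∀ z ∈ Metric.closedBall w (3/2), DifferentiableAt ℂ q z := by
      intro z hz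
      have hzn : R₀ ≤ ‖z‖ := by
        have h1 : |‖z‖ - ‖w‖| ≤ ‖z - w‖ := abs_norm_sub_norm_le _ _
        have h2 : ‖z - w‖ ≤ 3/2 := by rwa [← dist_eq_norm]
        cases' abs_le.mp h1 with h3 h4
        linarith
      exact (hgdiff z hzn).sub differentiableAt_id
    exact Convex.norm_image_sub_le_of_norm_deriv_le hdiff hderiv (convex_closedBall _ _) hy hx
  -- set up the approximation
  have happrox : ApproximatesLinearOn g
      ((ContinuousLinearEquiv.refl ℂ ℂ : ℂ ≃L[ℂ] ℂ) : ℂ →L[ℂ] ℂ)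
      (Metric.closedBall w 1) (1/4 : ℝ≥0) := by
    intro x hx y hy
    have hx' : x ∈ Metric.closedBall w (3/2) :=
      Metric.closedBall_subset_closedBall (by norm_num) hx
    have hy' : y ∈ Metric.closedBall w (3/2) :=
      Metric.closedBall_subset_closedBall (by norm_num) hy
    have := hlip x hx' y hy'
    have hqx : ∀ u : ℂ, q u = g u - u := fun u => rfl
    have heq : g x - g y - (ContinuousLinearEquiv.refl ℂ ℂ : ℂ →L[ℂ] ℂ) (x - y)
        = q x - q y := by
      have happ : ((ContinuousLinearEquiv.refl ℂ ℂ : ℂ ≃L[ℂ] ℂ) : ℂ →L[ℂ] ℂ) (x - y) = x - y := by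
        simp
      rw [happ, hqx x, hqx y]
      ring
    rw [heq]
    calc ‖q x - q y‖ ≤ (1/4) * ‖x - y‖ := this
    _ = ((1/4 : ℝ≥0) : ℝ) * ‖x - y‖ := by norm_num
  have hsurjOn := happrox.surjOn_closedBall_of_nonlinearRightInverse
    (ContinuousLinearEquiv.refl ℂ ℂ).toNonlinearRightInverse
    (zero_le_one) (subset_refl _)
  have hnn : ((ContinuousLinearEquiv.refl ℂ ℂ).toNonlinearRightInverse.nnnorm : ℝ) = 1 := by
    simp [ContinuousLinearEquiv.toNonlinearRightInverse]
  have hwmem : w ∈ Metric.closedBall (g w)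
      ((((ContinuousLinearEquiv.refl ℂ ℂ).toNonlinearRightInverse.nnnorm : ℝ)⁻¹
        - (1/4 : ℝ≥0)) * 1) := by
    rw [Metric.mem_closedBall, hnn]
    have h1 : dist w (g w) ≤ 1/8 := by
      rw [dist_eq_norm]
      have := hqR w (by linarith)
      calc ‖w - g w‖ = ‖g w - w‖ := by rw [norm_sub_rev]
      _ ≤ 1/8 := this
    have h2 : ((1:ℝ)⁻¹ - ((1/4 : ℝ≥0):ℝ)) * 1 = 3/4 := by norm_num
    rw [h2]; linarith
  obtain ⟨z, hz, hgz⟩ := hsurjOn hwmem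
  exact ⟨z, by simpa [Metric.mem_closedBall] using hz, hgz⟩

include hne in
lemma bounded_on_bounded (r : ℝ) : ∃ M : ℝ, ∀ z ∈ Om K, ‖z‖ ≤ r → ‖g z‖ ≤ M := by
  obtain ⟨R₀, hR₀pos, hR₀E, hsurj⟩ := far_surj H hne
  refine ⟨max (R₀ + 2) (r + 2), fun z hz hzr => ?_⟩
  by_contra hgz
  push_neg at hgz
  set w := g z with hwdef
  have hw : R₀ + 2 ≤ ‖w‖ :=
    le_of_lt (lt_of_le_of_lt (le_max_left _ _) hgz)
  obtain ⟨z', hz', hgz'⟩ := hsurj w hw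
  have hz'norm : r + 1 ≤ ‖z'‖ := by
    have h1 : |‖z'‖ - ‖w‖| ≤ ‖z' - w‖ := abs_norm_sub_norm_le _ _
    have h2 : ‖z' - w‖ ≤ 1 := by rwa [← dist_eq_norm]
    have h3 : r + 2 < ‖w‖ := lt_of_le_of_lt (le_max_right _ _) hgz
    cases' abs_le.mp h1 with h4 h5
    linarith
  have hz'Om : z' ∈ Om K := by
    have hbig : R₀ + 1 ≤ ‖z'‖ := by
      have h1 : |‖z'‖ - ‖w‖| ≤ ‖z' - w‖ := abs_norm_sub_norm_le _ _
      have h2 : ‖z' - w‖ ≤ 1 := by rwa [← dist_eq_norm]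
      cases' abs_le.mp h1 with h4 h5
      linarith
    constructor
    · intro hc
      exact absurd (hR₀E z' (Or.inl hc)) (not_lt.mpr (by linarith))
    · intro hc
      exact absurd (hR₀E z' (Or.inr hc)) (not_lt.mpr (by linarith))
  have heq : z' = z := (H.extBij hne).injOn hz'Om hz hgz'
  rw [heq] at hz'norm
  linarith

include hne in
lemma im_tendsto_frontier {x : ℂ} (hx : x ∈ frontier (UHP \ K)) :
    Tendsto (fun z => (g z).im) (𝓝[UHP \ K] x) (𝓝 0) := by
  have hUopen : IsOpen (UHP \ K) := isOpen_UHP_diff H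
  have hxn : x ∉ UHP \ K := by
    rw [frontier, hUopen.interior_eq] at hx
    exact hx.2
  rw [Metric.tendsto_nhds]
  intro ε hε
  by_contra hev
  rw [Filter.not_eventually] at hev
  have hfreq : ∀ n : ℕ, ∃ z, (z ∈ Metric.ball x (1/(n+1)) ∧ z ∈ UHP \ K) ∧ ε ≤ (g z).im := by
    intro n
    have hmem : Metric.ball x (1/(n+1)) ∩ (UHP \ K) ∈ 𝓝[UHP \ K] x := by
      refine inter_mem ?_ self_mem_nhdsWithin
      refine mem_nhdsWithin_of_mem_nhds (Metric.ball_mem_nhds x (by positivity))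
    have h1 : ∀ᶠ z in 𝓝[UHP \ K] x, z ∈ Metric.ball x (1/(n+1)) ∩ (UHP \ K) :=
      Filter.eventually_of_mem hmem (fun z h => h)
    obtain ⟨z, hz2, hz1⟩ := (hev.and_eventually h1).exists
    refine ⟨z, ⟨hz1.1, hz1.2⟩, ?_⟩
    have him : 0 < (g z).im := g_im_pos H hz1.2
    rw [Real.dist_eq, sub_zero, not_lt] at hz2
    rwa [abs_of_pos him] at hz2
  choose zs hzs hgzs using hfreq
  have hzx : Tendsto zs atTop (𝓝 x) := by
    rw [tendsto_iff_dist_tendsto_zero]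
    refine squeeze_zero (g := fun n : ℕ => 1/(n+1)) (fun n => dist_nonneg)
      (fun n => le_of_lt (hzs n).1) tendsto_one_div_add_atTop_nhds_zero_nat
  obtain ⟨M, hM⟩ := bounded_on_bounded H hne (‖x‖ + 1)
  have hzOm : ∀ n, zs n ∈ Om K := fun n => UHP_diff_subset_Om H (hzs n).2
  have hgball : ∀ n, g (zs n) ∈ Metric.closedBall (0:ℂ) M := by
    intro n
    rw [Metric.mem_closedBall, dist_zero_right]
    refine hM (zs n) (hzOm n) ?_
    have h1 : dist (zs n) x < 1 := by
      refine lt_of_lt_of_le (hzs n).1 ?_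
      rw [div_le_one (by positivity)]
      linarith [Nat.cast_nonneg (α := ℝ) n]
    have h2 : |‖zs n‖ - ‖x‖| ≤ ‖zs n - x‖ := abs_norm_sub_norm_le _ _
    rw [← dist_eq_norm] at h2
    cases' abs_le.mp h2 with h3 h4
    linarith
  obtain ⟨wst, hwst, φ, hφ, hφt⟩ :=
    (isCompact_closedBall (0:ℂ) M).tendsto_subseq hgball
  have hwim : ε ≤ wst.im := by
    have : Tendsto (fun n => (g (zs (φ n))).im) atTop (𝓝 wst.im) :=
      (Complex.continuous_im.tendsto wst).comp hφt
    exact ge_of_tendsto this (Filter.Eventually.of_forall (fun n => hgzs (φ n)))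
  have hwUHP : wst ∈ UHP := lt_of_lt_of_le hε hwim
  obtain ⟨zst, hzst, hgzst⟩ := H.bij.surjOn hwUHP
  have hxne : x ≠ zst := fun hc => hxn (hc ▸ hzst)
  have hdpos : 0 < dist x zst := dist_pos.mpr hxne
  obtain ⟨δ₀, hδ₀, hballsub⟩ := Metric.isOpen_iff.mp hUopen zst hzst
  set δ := min δ₀ (dist x zst / 2) with hδdef
  have hδpos : 0 < δ := lt_min hδ₀ (by linarith)
  have hballmem : g '' (Metric.ball zst δ) ∈ 𝓝 wst := by
    rw [← hgzst]
    exact g_nhds_le_map H hne (UHP_diff_subset_Om H hzst)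
      (image_mem_map (Metric.ball_mem_nhds zst hδpos))
  have hev1 : ∀ᶠ n in atTop, g (zs (φ n)) ∈ g '' (Metric.ball zst δ) := hφt.eventually_mem hballmem
  have hev2 : ∀ᶠ n in atTop, dist (zs (φ n)) x < dist x zst / 2 := by
    have : Tendsto (fun n => zs (φ n)) atTop (𝓝 x) := hzx.comp hφ.tendsto_atTop
    exact (Metric.tendsto_nhds.mp this) _ (by linarith)
  obtain ⟨n, hn1, hn2⟩ := (hev1.and hev2).exists
  obtain ⟨y, hy, hgy⟩ := hn1
  have hyOm : y ∈ Om K := UHP_diff_subset_Om H (hballsub (Metric.ball_subset_ball (min_le_left _ _) hy))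
  have : y = zs (φ n) := (H.extBij hne).injOn hyOm (hzOm (φ n)) hgy
  rw [this] at hy
  have h1 : dist (zs (φ n)) zst < δ := hy
  have h2 : δ ≤ dist x zst / 2 := min_le_right _ _
  have h3 := dist_triangle x (zs (φ n)) zst
  rw [dist_comm x (zs (φ n))] at h3
  linarith [hn2, h1, h3]

end Level

lemma max_principle {U : Set ℂ} (hUo : IsOpen U) {F : ℂ → ℂ}
    (hF : DifferentiableOn ℂ F U)
    (hb : ∀ ε : ℝ, 0 < ε → ∃ R, ∀ z ∈ U, R ≤ ‖z‖ → ‖F z‖ ≤ 1 + ε)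
    (hfr : ∀ x ∈ frontier U, ∀ ε : ℝ, 0 < ε → ∀ᶠ z in 𝓝[U] x, ‖F z‖ ≤ 1 + ε) :
    ∀ z ∈ U, ‖F z‖ ≤ 1 := by
  have hFc : ContinuousOn F U := hF.continuousOn
  have key : ∀ η : ℝ, 0 < η → ∀ z ∈ U, ‖F z‖ ≤ 1 + η := by
    intro η hη z₀ hz₀
    by_contra hcon
    push_neg at hcon
    set W := U ∩ (fun z => ‖F z‖) ⁻¹' (Set.Ioi (1+η)) with hWdef
    have hWopen : IsOpen W := (continuous_norm.comp_continuousOn hFc).isOpen_inter_preimage hUo isOpen_Ioi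
    have hz₀W : z₀ ∈ W := ⟨hz₀, hcon⟩
    obtain ⟨R, hR⟩ := hb η hη
    have hWb : IsBounded W := by
      refine (Metric.isBounded_ball : IsBounded (Metric.ball (0:ℂ) (|R|+1))).subset ?_
      intro z hz
      rw [Metric.mem_ball, dist_zero_right]
      by_contra hge
      push_neg at hge
      have h1 : R ≤ ‖z‖ := le_trans (le_trans (le_abs_self R) (by linarith)) hge
      have := hR z hz.1 h1
      have h2 : 1 + η < ‖F z‖ := hz.2
      linarith
    have hclW : closure W ⊆ U := by
      intro x hxcl
      have hxclU : x ∈ closure U := closure_mono (Set.inter_subset_left) hxcl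
      rw [closure_eq_self_union_frontier] at hxclU
      rcases hxclU with hxU | hxfr
      · exact hxU
      · exfalso
        obtain ⟨V, hV, hVle⟩ := Filter.eventually_iff_exists_mem.mp (hfr x hxfr η hη)
        obtain ⟨t, htopen, hxt, htsub⟩ := mem_nhdsWithin.mp hV
        have hdisj : t ∩ W = ∅ := by
          ext z
          simp only [Set.mem_inter_iff, Set.mem_empty_iff_false, iff_false, not_and]
          intro hzt hzW
          have := hVle z (htsub ⟨hzt, hzW.1⟩)
          have h2 : 1 + η < ‖F z‖ := hzW.2
          linarith
        have := mem_closure_iff.mp hxcl t htopen hxt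
        rw [hdisj] at this
        exact Set.not_nonempty_empty this
    have hdc : DiffContOnCl ℂ F W :=
      ⟨hF.mono Set.inter_subset_left, hFc.mono hclW⟩
    have hfrW : ∀ z ∈ frontier W, ‖F z‖ ≤ 1 + η := by
      intro z hzfr
      have hz1 : z ∈ closure W := hzfr.1
      have hz2 : z ∉ W := by
        rw [hWopen.frontier_eq] at hzfr
        exact hzfr.2
      have hzU : z ∈ U := hclW hz1
      by_contra hgt
      push_neg at hgt
      exact hz2 ⟨hzU, hgt⟩
    have := Complex.norm_le_of_forall_mem_frontier_norm_le hWb hdc hfrW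
      (subset_closure hz₀W)
    have h2 : 1 + η < ‖F z₀‖ := hz₀W.2
    linarith
  intro z hz
  by_contra hcon
  push_neg at hcon
  have := key ((‖F z‖ - 1)/2) (by linarith) z hz
  linarith

lemma im_comparison {K₀ : Set ℂ} {g₀ : ℂ → ℂ} {S₀ : Set ℝ}
    (H₀ : IsHullMap K₀ g₀ S₀) (hne₀ : K₀.Nonempty)
    {G : ℂ → ℂ} (hGdiff : DifferentiableOn ℂ G (UHP \ K₀))
    (hGim : ∀ z ∈ UHP \ K₀, 0 ≤ (G z).im)
    (hGhydro : Tendsto (fun z => G z - z) (cobounded ℂ) (𝓝 0)) :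
    ∀ z ∈ UHP \ K₀, (g₀ z).im ≤ (G z).im := by
  set F : ℂ → ℂ := fun z => Complex.exp (Complex.I * (G z - g₀ z)) with hFdef
  have hnorm : ∀ w : ℂ, ‖F w‖ = Real.exp ((g₀ w).im - (G w).im) := by
    intro w
    have : F w = Complex.exp (Complex.I * (G w - g₀ w)) := rfl
    rw [this, Complex.norm_exp]
    congr 1
    simp [Complex.mul_re, Complex.I_re, Complex.I_im, Complex.sub_im]
  have hδ : ∀ ε : ℝ, 0 < ε → ∃ δ : ℝ, 0 < δ ∧ ∀ t : ℝ, t ≤ δ → Real.exp t ≤ 1 + ε := by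
    intro ε hε
    refine ⟨Real.log (1+ε), Real.log_pos (by linarith), fun t ht => ?_⟩
    calc Real.exp t ≤ Real.exp (Real.log (1+ε)) := Real.exp_le_exp.2 ht
    _ = 1 + ε := Real.exp_log (by linarith)
  have main : ∀ z ∈ UHP \ K₀, ‖F z‖ ≤ 1 := by
    refine max_principle (isOpen_UHP_diff H₀) ?_ ?_ ?_
    · exact (((hGdiff.sub H₀.holo).const_mul Complex.I).cexp)
    · intro ε hε
      obtain ⟨δ, hδpos, hδle⟩ := hδ ε hε
      have h1 : ∀ᶠ z in cobounded ℂ, dist (G z - z) 0 < δ/2 :=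
        Metric.tendsto_nhds.mp hGhydro (δ/2) (by linarith)
      have h2 : ∀ᶠ z in cobounded ℂ, dist (g₀ z - z) 0 < δ/2 :=
        Metric.tendsto_nhds.mp H₀.hydro (δ/2) (by linarith)
      obtain ⟨R, -, hR⟩ := (Filter.hasBasis_cobounded_norm.eventually_iff).mp (h1.and h2)
      refine ⟨R, fun z hz hRz => ?_⟩
      obtain ⟨ha, hb'⟩ := hR hRz
      rw [dist_zero_right] at ha hb'
      rw [hnorm]
      refine hδle _ ?_
      have e1 : (g₀ z).im - (G z).im = (g₀ z - z).im - (G z - z).im := by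
        simp [Complex.sub_im]
      rw [e1]
      have e2 : |(g₀ z - z).im| ≤ ‖g₀ z - z‖ := Complex.abs_im_le_norm _
      have e3 : |(G z - z).im| ≤ ‖G z - z‖ := Complex.abs_im_le_norm _
      have e4 := abs_le.mp (le_trans e2 (le_of_lt hb'))
      have e5 := abs_le.mp (le_trans e3 (le_of_lt ha))
      linarith [e4.2, e5.1]
    · intro x hx ε hε
      obtain ⟨δ, hδpos, hδle⟩ := hδ ε hε
      have h1 : ∀ᶠ z in 𝓝[UHP \ K₀] x, dist ((g₀ z).im) 0 < δ :=
        Metric.tendsto_nhds.mp (im_tendsto_frontier H₀ hne₀ hx) δ hδpos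
      have h2 : ∀ᶠ z in 𝓝[UHP \ K₀] x, z ∈ UHP \ K₀ :=
        Filter.eventually_of_mem self_mem_nhdsWithin (fun z h => h)
      refine (h1.and h2).mono ?_
      rintro z ⟨hz1, hz2⟩
      rw [Real.dist_eq, sub_zero] at hz1
      rw [hnorm]
      refine hδle _ ?_
      have := hGim z hz2
      have := (abs_lt.mp hz1).2
      linarith
  intro z hz
  have := main z hz
  rw [hnorm] at this
  have := Real.exp_le_one_iff.mp this  -- check name
  linarith

lemma re_div_yI (A : ℂ) {y : ℝ} (hy : y ≠ 0) : (A / ((y:ℂ) * Complex.I)).re = A.im / y := by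
  have hw : ((y:ℂ) * Complex.I) ≠ 0 := by
    simp [Complex.ext_iff, hy]
  field_simp [Complex.div_re, Complex.normSq_apply, Complex.mul_re, Complex.mul_im]
  rw [mul_comm (y:ℂ), ← div_div, Complex.div_I, Complex.div_ofReal_re]
  simp
  field_simp

lemma ray_comparison {K₀ : Set ℂ} {g₀ : ℂ → ℂ} {S₀ : Set ℝ}
    (H₀ : IsHullMap K₀ g₀ S₀) (hne₀ : K₀.Nonempty)
    {G : ℂ → ℂ}
    (hGdiff : DifferentiableOn ℂ G {z : ℂ | z ∉ Kdoub K₀})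
    (hGim : ∀ z ∈ UHP \ K₀, 0 ≤ (G z).im)
    (hGhydro : Tendsto (fun z => G z - z) (cobounded ℂ) (𝓝 0))
    (hGreal : ∀ x : ℝ, (x:ℂ) ∉ Kdoub K₀ → (G (x:ℂ)).im = 0) :
    (∀ x : ℝ, bK K₀ < x → fr G x ≤ fr g₀ x) ∧
      (∀ x : ℝ, x < aK K₀ → fr g₀ x ≤ fr G x) := by
  have hVopen : IsOpen {z : ℂ | z ∉ Kdoub K₀} := by
    have : {z : ℂ | z ∉ Kdoub K₀} = (Kdoub K₀)ᶜ := rfl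
    rw [this]; exact (isClosed_Kdoub H₀.bounded).isOpen_compl
  have him : ∀ z ∈ UHP \ K₀, (g₀ z).im ≤ (G z).im := by
    refine im_comparison H₀ hne₀ (hGdiff.mono ?_) hGim hGhydro
    exact fun z hz => (UHP_diff_subset_Om H₀ hz).1
  set Q : ℂ → ℂ := fun z => G z - g₀ z with hQdef
  have hQx : ∀ u : ℂ, Q u = G u - g₀ u := fun u => rfl
  have hQdiff : DifferentiableOn ℂ Q {z : ℂ | z ∉ Kdoub K₀} :=
    hGdiff.sub (H₀.ext_holo hne₀)
  -- the vertical-slope computation: nonnegative derivative on the real axis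
  have hqderiv : ∀ x : ℝ, (x:ℂ) ∉ Kdoub K₀ → 0 ≤ (deriv Q (x:ℂ)).re := by
    intro x hx
    have hV : {z : ℂ | z ∉ Kdoub K₀} ∈ 𝓝 (x:ℂ) := hVopen.mem_nhds hx
    have hd : HasDerivAt Q (deriv Q ↑x) ↑x := (hQdiff.differentiableAt hV).hasDerivAt
    obtain ⟨r, hr, hball⟩ := Metric.mem_nhds_iff.mp hV
    have hpath : Tendsto (fun y : ℝ => ((x:ℂ) + (y:ℂ) * Complex.I)) (𝓝[>] 0)
        (𝓝[≠] ((x:ℂ))) := by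
      rw [tendsto_nhdsWithin_iff]
      constructor
      · have hcont : Continuous (fun y : ℝ => ((x:ℂ) + (y:ℂ) * Complex.I)) := by
          continuity
        have := hcont.tendsto 0
        simp only [Complex.ofReal_zero, zero_mul, add_zero] at this
        exact this.mono_left nhdsWithin_le_nhds
      · refine Filter.eventually_of_mem self_mem_nhdsWithin (fun y hy => ?_)
        simp only [Set.mem_compl_iff, Set.mem_singleton_iff]
        intro hc
        have : (y:ℂ) * Complex.I = 0 := by linear_combination hc
        have hyy : (y:ℂ) = 0 ∨ Complex.I = 0 := mul_eq_zero.mp this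
        rcases hyy with h | h
        · exact (ne_of_gt (show (0:ℝ) < y from hy)) (by exact_mod_cast h)
        · exact Complex.I_ne_zero h
    have hslope := (hasDerivAt_iff_tendsto_slope.mp hd).comp hpath
    have hslope_eq : ∀ y : ℝ, 0 < y →
        slope Q (↑x) ((x:ℂ) + (y:ℂ) * Complex.I)
          = (Q ((x:ℂ) + (y:ℂ) * Complex.I) - Q ↑x) / ((y:ℂ) * Complex.I) := by
      intro y hy
      rw [slope_def_field]
      congr 1
      ring
    have hre : Tendsto (fun y : ℝ =>
        (slope Q (↑x) ((x:ℂ) + (y:ℂ) * Complex.I)).re) (𝓝[>] 0)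
        (𝓝 ((deriv Q ↑x).re)) :=
      (Complex.continuous_re.tendsto _).comp hslope
    refine ge_of_tendsto hre ?_
    have hmem : Set.Ioo (0:ℝ) r ∈ 𝓝[>] (0:ℝ) := Ioo_mem_nhdsGT_of_mem (by simp [hr])
    refine Filter.eventually_of_mem hmem (fun y hy => ?_)
    have hy0 : 0 < y := hy.1
    have hQx0 : (Q ↑x).im = 0 := by
      rw [hQx]
      rw [Complex.sub_im, hGreal x hx, H₀.real_vals hne₀ x hx]
      ring
    have hup : ((x:ℂ) + (y:ℂ) * Complex.I) ∈ UHP \ K₀ := by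
      constructor
      · show (0:ℝ) < ((x:ℂ) + (y:ℂ) * Complex.I).im
        simp [hy0]
      · intro hk
        have hmem2 : ((x:ℂ) + (y:ℂ) * Complex.I) ∈ Metric.ball (x:ℂ) r := by
          rw [Metric.mem_ball, dist_eq_norm]
          have : (x:ℂ) + (y:ℂ) * Complex.I - (x:ℂ) = (y:ℂ) * Complex.I := by ring
          rw [this]
          simp only [norm_mul, Complex.norm_I, Complex.norm_real, Real.norm_eq_abs, mul_one]
          rw [abs_of_pos hy0]
          exact hy.2
        have := hball hmem2
        exact this (mem_Kdoub.2 (Or.inl (subset_closure hk)))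
    have himQ : 0 ≤ (Q ((x:ℂ) + (y:ℂ) * Complex.I)).im := by
      rw [hQx, Complex.sub_im]
      have := him _ hup
      linarith
    rw [hslope_eq y hy0, re_div_yI _ (ne_of_gt hy0)]
    rw [Complex.sub_im, hQx0, sub_zero]
    positivity
  set q : ℝ → ℝ := fun x => (Q (x:ℂ)).re with hqdef2
  have hqx2 : ∀ x : ℝ, q x = fr G x - fr g₀ x := by
    intro x
    have : q x = (Q (x:ℂ)).re := rfl
    rw [this, hQx]
    simp [fr, Complex.sub_re]
  have hqD : ∀ x : ℝ, (x:ℂ) ∉ Kdoub K₀ → HasDerivAt q ((deriv Q (x:ℂ)).re) x := by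
    intro x hx
    have hV : {z : ℂ | z ∉ Kdoub K₀} ∈ 𝓝 (x:ℂ) := hVopen.mem_nhds hx
    exact ((hQdiff.differentiableAt hV).hasDerivAt).real_of_complex
  have hQtend : Tendsto Q (cobounded ℂ) (𝓝 0) := by
    have h := hGhydro.sub H₀.hydro
    rw [sub_zero] at h
    have heq : (fun z => (G z - z) - (g₀ z - z)) = Q := by
      funext z; rw [hQx]; ring
    rwa [heq] at h
  have hqtop : Tendsto q atTop (𝓝 0) := by
    have h1 : Tendsto (fun x : ℝ => Q (x:ℂ)) atTop (𝓝 0) :=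
      hQtend.comp tendsto_ofReal_cobounded
    have h2 := (Complex.continuous_re.tendsto 0).comp h1
    rw [Complex.zero_re] at h2; exact h2
  have hqbot : Tendsto q atBot (𝓝 0) := by
    have h1 : Tendsto (fun x : ℝ => Q (x:ℂ)) atBot (𝓝 0) :=
      hQtend.comp tendsto_ofReal_cobounded_bot
    have h2 := (Complex.continuous_re.tendsto 0).comp h1
    rw [Complex.zero_re] at h2; exact h2
  constructor
  · intro x hx
    have hnotK : ∀ u : ℝ, u ∈ Set.Ioi (bK K₀) → (u:ℂ) ∉ Kdoub K₀ := fun u hu =>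
      real_not_mem_Kdoub H₀ (not_mem_Icc_of_gt H₀ hu)
    have hmono : MonotoneOn q (Set.Ioi (bK K₀)) := by
      refine monotoneOn_of_deriv_nonneg (convex_Ioi _) ?_ ?_ ?_
      · exact fun u hu => ((hqD u (hnotK u hu)).continuousAt).continuousWithinAt
      · intro u hu
        rw [interior_Ioi] at hu
        exact ((hqD u (hnotK u hu)).differentiableAt).differentiableWithinAt
      · intro u hu
        rw [interior_Ioi] at hu
        rw [(hqD u (hnotK u hu)).deriv]
        exact hqderiv u (hnotK u hu)
    have hle : q x ≤ 0 := by
      refine ge_of_tendsto hqtop ?_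
      refine Filter.eventually_of_mem (eventually_ge_atTop x) (fun y hy => ?_)
      exact hmono hx (lt_of_lt_of_le hx hy) hy
    rw [hqx2 x] at hle
    linarith
  · intro x hx
    have hnotK : ∀ u : ℝ, u ∈ Set.Iio (aK K₀) → (u:ℂ) ∉ Kdoub K₀ := fun u hu =>
      real_not_mem_Kdoub H₀ (not_mem_Icc_of_lt H₀ hu)
    have hmono : MonotoneOn q (Set.Iio (aK K₀)) := by
      refine monotoneOn_of_deriv_nonneg (convex_Iio _) ?_ ?_ ?_
      · exact fun u hu => ((hqD u (hnotK u hu)).continuousAt).continuousWithinAt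
      · intro u hu
        rw [interior_Iio] at hu
        exact ((hqD u (hnotK u hu)).differentiableAt).differentiableWithinAt
      · intro u hu
        rw [interior_Iio] at hu
        rw [(hqD u (hnotK u hu)).deriv]
        exact hqderiv u (hnotK u hu)
    have hle : 0 ≤ q x := by
      refine le_of_tendsto hqbot ?_
      refine Filter.eventually_of_mem (eventually_le_atBot x) (fun y hy => ?_)
      exact hmono (lt_of_le_of_lt hy hx) hx hy
    rw [hqx2 x] at hle
    linarith

lemma Kdoub_mono {K K' : Set ℂ} (h : K ⊆ K') : Kdoub K ⊆ Kdoub K' :=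
  Set.union_subset_union (closure_mono h) (Set.image_mono (closure_mono h))

lemma traceR_mono {K K' : Set ℂ} (h : K ⊆ K') : traceR K ⊆ traceR K' :=
  fun _ hx => closure_mono h hx

end Stmt7

open Stmt7

/-- **The driving function stays between `c_{K_{t₀}}` and `d_{K_{t₀}}`.** If `K_t`, `0 ≤ t < T`,
are chordal Loewner hulls driven by a continuous function `ŵ` with some speed (encoded by the
driving-point property `ŵ(t) ∈ ⋂_{δ>0} cl(K_{t+δ}/K_t)`), then for every `t₀ ∈ (0,T)` one has
`c_{K_{t₀}} ≤ ŵ(t) ≤ d_{K_{t₀}}` for all `t ∈ [0, t₀]`. -/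
theorem stmt_7 (T : ℝ) (hT : 0 < T) (wD : ℝ → ℝ) (hwD : ContinuousOn wD (Set.Ico 0 T))
    (K : ℝ → Set ℂ) (g : ℝ → ℂ → ℂ) (S : ℝ → Set ℝ)
    (hK0 : K 0 = ∅) (hg0 : ∀ z, g 0 z = z)
    (hhull : ∀ t ∈ Set.Ioo 0 T, IsHullMap (K t) (g t) (S t) ∧ (K t).Nonempty)
    (hmono : ∀ s t : ℝ, 0 ≤ s → s ≤ t → t < T → K s ⊆ K t)
    (hdrive : ∀ t ∈ Set.Ico 0 T, ∀ δ > (0:ℝ), t + δ < T →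
      ((wD t : ℝ) : ℂ) ∈ closure (g t '' (K (t + δ) \ K t))) :
    ∀ t₀ ∈ Set.Ioo 0 T, ∀ t ∈ Set.Icc 0 t₀, sInf (S t₀) ≤ wD t ∧ wD t ≤ sSup (S t₀) := by
  intro t₀ ht₀ t ht
  obtain ⟨H₀, hne₀⟩ := hhull t₀ ht₀
  -- the starting point of the driving function lies in every trace
  have htr : ∀ s : ℝ, s ∈ Set.Ioo 0 T → wD 0 ∈ traceR (K s) := by
    intro s hs
    have h0T : (0:ℝ) ∈ Set.Ico 0 T := ⟨le_refl 0, hT⟩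
    have := hdrive 0 h0T s hs.1 (by rw [zero_add]; exact hs.2)
    rw [zero_add, hK0, Set.diff_empty] at this
    have himg : g 0 '' (K s) = K s := by
      have : g 0 = fun z => z := funext hg0
      rw [this, Set.image_id']
    rw [himg] at this
    exact this
  have htr₀ : (traceR (K t₀)).Nonempty := ⟨wD 0, htr t₀ ht₀⟩
  have hab₀ : aK (K t₀) ≤ bK (K t₀) := aK_le_bK H₀.bounded htr₀
  -- the key estimate for times strictly before t₀
  have key : ∀ s : ℝ, 0 ≤ s → s < t₀ → sInf (S t₀) ≤ wD s ∧ wD s ≤ sSup (S t₀) := by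
    intro s hs0 hst
    have hsT : s < T := lt_trans hst ht₀.2
    have hKsub : K s ⊆ K t₀ := hmono s t₀ hs0 (le_of_lt hst) ht₀.2
    have hdr := hdrive s ⟨hs0, hsT⟩ (t₀ - s) (by linarith) (by
      have : s + (t₀ - s) = t₀ := by ring
      rw [this]; exact ht₀.2)
    have heq : s + (t₀ - s) = t₀ := by ring
    rw [heq] at hdr
    rcases eq_or_lt_of_le hs0 with hs0' | hs0'
    · -- s = 0
      subst hs0'
      have hwtr : wD 0 ∈ traceR (K t₀) := htr t₀ ht₀
      have hIcc := traceR_subset_Icc H₀.bounded hwtr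
      -- comparison of g 0 = id with g t₀
      have hcrux := ray_comparison H₀ hne₀ (G := g 0)
        ((differentiableOn_id).congr (fun z _ => (hg0 z)))
        (fun z hz => by rw [hg0 z]; exact le_of_lt hz.1)
        (by
          have : (fun z : ℂ => g 0 z - z) = fun _ => (0:ℂ) := by
            funext z; rw [hg0 z]; ring
          rw [this]; exact tendsto_const_nhds)
        (fun x _ => by rw [hg0]; simp)
      constructor
      · refine sInf_S_le H₀ hne₀ hab₀ (fun x hx => ?_)
        have h1 : fr (g t₀) x ≤ fr (g 0) x := hcrux.2 x hx
        have h2 : fr (g 0) x = x := by simp [fr, hg0]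
        have h3 : x < aK (K t₀) := hx
        have h4 : aK (K t₀) ≤ wD 0 := hIcc.1
        linarith
      · refine le_sSup_S H₀ hne₀ hab₀ (fun x hx => ?_)
        have h1 : fr (g 0) x ≤ fr (g t₀) x := hcrux.1 x hx
        have h2 : fr (g 0) x = x := by simp [fr, hg0]
        have h4 : wD 0 ≤ bK (K t₀) := hIcc.2
        linarith
    · -- 0 < s
      obtain ⟨Hs, hnes⟩ := hhull s ⟨hs0', hsT⟩
      have htrs : (traceR (K s)).Nonempty := ⟨wD 0, htr s ⟨hs0', hsT⟩⟩
      have habs : aK (K s) ≤ bK (K s) := aK_le_bK Hs.bounded htrs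
      have htsub : traceR (K s) ⊆ traceR (K t₀) := traceR_mono hKsub
      have haa : aK (K t₀) ≤ aK (K s) :=
        csInf_le_csInf (bddBelow_traceR H₀.bounded) htrs htsub
      have hbb : bK (K s) ≤ bK (K t₀) :=
        csSup_le_csSup (bddAbove_traceR H₀.bounded) htrs htsub
      have hKdsub : Kdoub (K s) ⊆ Kdoub (K t₀) := Kdoub_mono hKsub
      have hcrux := ray_comparison H₀ hne₀ (G := g s)
        ((Hs.ext_holo hnes).mono (fun z hz => fun hc => hz (hKdsub hc)))
        (fun z hz => le_of_lt (Hs.bij.mapsTo ⟨hz.1, fun hc => hz.2 (hKsub hc)⟩))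
        Hs.hydro
        (fun x hx => Hs.real_vals hnes x (fun hc => hx (hKdsub hc)))
      have hsup_le : sSup (S s) ≤ sSup (S t₀) := by
        refine le_sSup_S H₀ hne₀ hab₀ (fun x hx => ?_)
        refine le_trans (sSup_S_le_fr Hs hnes habs (lt_of_le_of_lt hbb hx)) ?_
        exact hcrux.1 x hx
      have hinf_le : sInf (S t₀) ≤ sInf (S s) := by
        refine sInf_S_le H₀ hne₀ hab₀ (fun x hx => ?_)
        refine le_trans (hcrux.2 x hx) ?_
        exact fr_le_sInf_S Hs hnes habs (lt_of_lt_of_le hx haa)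
      have hSs_ne : (S s).Nonempty := S_nonempty Hs hnes habs
      have hickne : sInf (S s) ≤ sSup (S s) :=
        csInf_le_csSup hSs_ne Hs.compactS.bddBelow Hs.compactS.bddAbove
      by_cases hwS : wD s ∈ S s
      · constructor
        · exact le_trans hinf_le (csInf_le Hs.compactS.bddBelow hwS)
        · exact le_trans (le_csSup Hs.compactS.bddAbove hwS) hsup_le
      · -- wD s is a value of (fr (g s)) on a ray, and localization applies
        rcases compl_S_mem_image Hs hnes hwS with hmem | hmem
        all_goals obtain ⟨x₀, hx₀, hfx₀⟩ := hmem
        -- left ray case : x₀ < aK (K s)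
        · have hx₀' : x₀ ∉ Set.Icc (aK (K s)) (bK (K s)) := not_mem_Icc_of_lt Hs hx₀
          have hgseq : g s (x₀ : ℂ) = ((wD s : ℝ) : ℂ) := by
            rw [g_ofReal_eq Hs hnes hx₀', hfx₀]
          have hAsub : K t₀ \ K s ⊆ Om (K s) := by
            intro z hz
            exact UHP_diff_subset_Om Hs ⟨H₀.subset_UHP hz.1, hz.2⟩
          have hx₀Om : (x₀ : ℂ) ∈ Om (K s) := (real_mem_Om_iff Hs.bounded).2 hx₀'
          have hx₀cl : (x₀ : ℂ) ∈ closure (K t₀ \ K s) := by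
            refine mem_closure_of_image_mem_closure Hs hnes hAsub hx₀Om ?_
            rw [hgseq]; exact hdr
          have hx₀tr : x₀ ∈ traceR (K t₀) :=
            closure_mono (Set.diff_subset) hx₀cl
          have hx₀Icc := traceR_subset_Icc H₀.bounded hx₀tr
          constructor
          · refine sInf_S_le H₀ hne₀ hab₀ (fun x hx => ?_)
            have h1 : fr (g t₀) x ≤ fr (g s) x := hcrux.2 x hx
            have h2 : fr (g s) x < fr (g s) x₀ :=
              fr_strictMonoOn_left Hs hnes (lt_of_lt_of_le hx haa) hx₀
                (lt_of_lt_of_le hx hx₀Icc.1)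
            rw [hfx₀] at h2
            linarith
          · have h1 : fr (g s) x₀ ≤ sInf (S s) := fr_le_sInf_S Hs hnes habs hx₀
            rw [hfx₀] at h1
            linarith
        -- right ray case : bK (K s) < x₀
        · have hx₀' : x₀ ∉ Set.Icc (aK (K s)) (bK (K s)) := not_mem_Icc_of_gt Hs hx₀
          have hgseq : g s (x₀ : ℂ) = ((wD s : ℝ) : ℂ) := by
            rw [g_ofReal_eq Hs hnes hx₀', hfx₀]
          have hAsub : K t₀ \ K s ⊆ Om (K s) := by
            intro z hz
            exact UHP_diff_subset_Om Hs ⟨H₀.subset_UHP hz.1, hz.2⟩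
          have hx₀Om : (x₀ : ℂ) ∈ Om (K s) := (real_mem_Om_iff Hs.bounded).2 hx₀'
          have hx₀cl : (x₀ : ℂ) ∈ closure (K t₀ \ K s) := by
            refine mem_closure_of_image_mem_closure Hs hnes hAsub hx₀Om ?_
            rw [hgseq]; exact hdr
          have hx₀tr : x₀ ∈ traceR (K t₀) :=
            closure_mono (Set.diff_subset) hx₀cl
          have hx₀Icc := traceR_subset_Icc H₀.bounded hx₀tr
          constructor
          · have h1 : sSup (S s) ≤ fr (g s) x₀ := sSup_S_le_fr Hs hnes habs hx₀
            rw [hfx₀] at h1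
            linarith
          · refine le_sSup_S H₀ hne₀ hab₀ (fun x hx => ?_)
            have h2 : fr (g s) x₀ < fr (g s) x := by
              refine fr_strictMonoOn_right Hs hnes hx₀ ?_ ?_
              · exact lt_of_le_of_lt hbb hx
              · exact lt_of_le_of_lt hx₀Icc.2 hx
            have h1 : fr (g s) x ≤ fr (g t₀) x := hcrux.1 x hx
            rw [hfx₀] at h2
            linarith
  -- conclude : either t < t₀ or t = t₀ (use continuity)
  rcases lt_or_eq_of_le ht.2 with hlt | heqt
  · exact key t ht.1 hlt
  · subst heqt
    have hcont : ContinuousWithinAt wD (Set.Ico 0 t) t := by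
      refine (hwD t ⟨ht.1.trans (le_refl t), ?_⟩).mono ?_
      · exact ht₀.2
      · exact fun u hu => ⟨hu.1, lt_trans hu.2 ht₀.2⟩
    have hmemcl : t ∈ closure (Set.Ico 0 t) := by
      rw [closure_Ico (ne_of_lt ht₀.1)]
      exact ⟨le_of_lt ht₀.1, le_refl _⟩
    have himg : wD t ∈ closure (wD '' (Set.Ico 0 t)) := hcont.mem_closure_image hmemcl
    have hsub : wD '' (Set.Ico 0 t) ⊆ Set.Icc (sInf (S t)) (sSup (S t)) := by
      rintro y ⟨u, hu, rfl⟩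
      exact ⟨(key u hu.1 hu.2).1, (key u hu.1 hu.2).2⟩
    have hfin := closure_minimal hsub isClosed_Icc himg
    exact ⟨hfin.1, hfin.2⟩
end
end

section
/- Optional stopping for two-parameter martingales: let X be a continuous martingale with respect to an ℝ₊²-indexed filtration 𝓕. (i) If X is closed by an integrable random variable ζ (i.e., X_t = E[ζ | 𝓕_t] for all t), then for any finite 𝓕-stopping time T, X_T = E[ζ | 𝓕_T]. (ii) If T ≤ S are two bounded 𝓕-stopping times, then E[X_S | 𝓕_T] = X_T. -/
open MeasureTheory Filter Set
open scoped NNReal ENNReal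

noncomputable section

variable {Ω : Type*}

/-- The event `{T ≤ t}` for an `ℝ₊²`-valued random time. -/
def leE (T : Ω → ℝ≥0 × ℝ≥0) (t : ℝ≥0 × ℝ≥0) : Set Ω := {ω | T ω ≤ t}

/-- `T` is a (finite) stopping time for the `ℝ₊²`-indexed filtration `F`. -/
def IsStopT (F : ℝ≥0 × ℝ≥0 → MeasurableSpace Ω) (T : Ω → ℝ≥0 × ℝ≥0) : Prop :=
  ∀ t : ℝ≥0 × ℝ≥0, MeasurableSet[F t] (leE T t)

/-- `𝓕_∞ = ⋁_t 𝓕_t`. -/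
def FInfty (F : ℝ≥0 × ℝ≥0 → MeasurableSpace Ω) : MeasurableSpace Ω := ⨆ t, F t

/-- The stopped σ-algebra `𝓕_T`. -/
def stopSA (F : ℝ≥0 × ℝ≥0 → MeasurableSpace Ω) (T : Ω → ℝ≥0 × ℝ≥0) :
    MeasurableSpace Ω :=
  MeasurableSpace.generateFrom
    {A | MeasurableSet[FInfty F] A ∧ ∀ t : ℝ≥0 × ℝ≥0, MeasurableSet[F t] (A ∩ leE T t)}

open scoped Topology

namespace TwoPOS

lemma FInfty_le {F : ℝ≥0 × ℝ≥0 → MeasurableSpace Ω} {m0 : MeasurableSpace Ω}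
    (hFle : ∀ t, F t ≤ m0) : FInfty F ≤ m0 := iSup_le hFle

lemma F_le_FInfty (F : ℝ≥0 × ℝ≥0 → MeasurableSpace Ω) (t : ℝ≥0 × ℝ≥0) :
    F t ≤ FInfty F := le_iSup F t

lemma stopSA_le {F : ℝ≥0 × ℝ≥0 → MeasurableSpace Ω} {T : Ω → ℝ≥0 × ℝ≥0} :
    stopSA F T ≤ FInfty F :=
  MeasurableSpace.generateFrom_le fun _ hA => hA.1

lemma stopSA_iff {F : ℝ≥0 × ℝ≥0 → MeasurableSpace Ω} {T : Ω → ℝ≥0 × ℝ≥0}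
    (hT : IsStopT F T) {A : Set Ω} :
    MeasurableSet[stopSA F T] A ↔
      MeasurableSet[FInfty F] A ∧ ∀ t, MeasurableSet[F t] (A ∩ leE T t) := by
  constructor
  · intro h
    have h' : MeasurableSpace.GenerateMeasurable
        {A | MeasurableSet[FInfty F] A ∧ ∀ t, MeasurableSet[F t] (A ∩ leE T t)} A := h
    clear h
    induction h' with
    | basic u hu => exact hu
    | empty =>
        exact ⟨@MeasurableSet.empty _ (FInfty F), fun t => by
          simpa [Set.empty_inter] using @MeasurableSet.empty _ (F t)⟩
    | compl u _ ih =>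
        refine ⟨ih.1.compl, fun t => ?_⟩
        have he : uᶜ ∩ leE T t = leE T t \ (u ∩ leE T t) := by
          ext ω; simp only [mem_inter_iff, mem_compl_iff, mem_diff]; tauto
        rw [he]; exact (hT t).diff (ih.2 t)
    | iUnion f _ ih =>
        refine ⟨MeasurableSet.iUnion fun i => (ih i).1, fun t => ?_⟩
        rw [Set.iUnion_inter]
        exact MeasurableSet.iUnion fun i => (ih i).2 t
  · exact fun h => MeasurableSpace.measurableSet_generateFrom h

lemma stopSA_mono {F : ℝ≥0 × ℝ≥0 → MeasurableSpace Ω} {T S : Ω → ℝ≥0 × ℝ≥0}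
    (hS : IsStopT F S) (hTS : ∀ ω, T ω ≤ S ω) :
    stopSA F T ≤ stopSA F S := by
  refine MeasurableSpace.generateFrom_le fun A hA =>
    MeasurableSpace.measurableSet_generateFrom ?_
  refine ⟨hA.1, fun t => ?_⟩
  have he : A ∩ leE S t = (A ∩ leE T t) ∩ leE S t := by
    ext ω
    simp only [mem_inter_iff, leE, mem_setOf_eq]
    exact ⟨fun ⟨h1, h2⟩ => ⟨⟨h1, (hTS ω).trans h2⟩, h2⟩, fun ⟨⟨h1, _⟩, h2⟩ => ⟨h1, h2⟩⟩
  rw [he]; exact (hA.2 t).inter (hS t)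

/-! ### Dyadic rounding -/

def ru (n : ℕ) (x : ℝ≥0) : ℝ≥0 := (⌈x * 2 ^ n⌉₊ : ℝ≥0) / 2 ^ n

def fl (n : ℕ) (t : ℝ≥0) : ℝ≥0 := (⌊t * 2 ^ n⌋₊ : ℝ≥0) / 2 ^ n

lemma two_pow_ne (n : ℕ) : (2 : ℝ≥0) ^ n ≠ 0 := (pow_pos two_pos n).ne'

lemma le_ru (n : ℕ) (x : ℝ≥0) : x ≤ ru n x := by
  rw [ru, le_div_iff₀ (pow_pos two_pos n)]
  exact Nat.le_ceil _

lemma ru_le_add (n : ℕ) (x : ℝ≥0) : ru n x ≤ x + ((2 : ℝ≥0) ^ n)⁻¹ := by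
  rw [ru, div_le_iff₀ (pow_pos two_pos n), add_mul, inv_mul_cancel₀ (two_pow_ne n)]
  exact (Nat.ceil_lt_add_one zero_le).le

lemma tendsto_ru (x : ℝ≥0) : Tendsto (fun n => ru n x) atTop (𝓝 x) := by
  have h2 : Tendsto (fun n : ℕ => x + ((2 : ℝ≥0) ^ n)⁻¹) atTop (𝓝 (x + 0)) := by
    refine tendsto_const_nhds.add ?_
    have := NNReal.tendsto_pow_atTop_nhds_zero_of_lt_one
      (two_inv_lt_one)
    simpa [inv_pow] using this
  rw [add_zero] at h2
  exact tendsto_of_tendsto_of_tendsto_of_le_of_le tendsto_const_nhds h2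
    (fun n => le_ru n x) (fun n => ru_le_add n x)

lemma ru_le_iff {n : ℕ} {x t : ℝ≥0} : ru n x ≤ t ↔ x ≤ fl n t := by
  rw [ru, fl, div_le_iff₀ (pow_pos two_pos n), le_div_iff₀ (pow_pos two_pos n)]
  constructor
  · intro h
    have h1 : ⌈x * 2 ^ n⌉₊ ≤ ⌊t * 2 ^ n⌋₊ := Nat.le_floor h
    exact (Nat.le_ceil _).trans (Nat.cast_le.2 h1)
  · intro h
    have h1 : ⌈x * 2 ^ n⌉₊ ≤ ⌊t * 2 ^ n⌋₊ := Nat.ceil_le.2 h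
    exact (Nat.cast_le.2 h1).trans (Nat.floor_le zero_le)

lemma fl_le (n : ℕ) (t : ℝ≥0) : fl n t ≤ t := by
  rw [fl, div_le_iff₀ (pow_pos two_pos n)]
  exact Nat.floor_le zero_le

lemma fl_grid (n a : ℕ) : fl n ((a : ℝ≥0) / 2 ^ n) = (a : ℝ≥0) / 2 ^ n := by
  rw [fl, div_mul_cancel₀ _ (two_pow_ne n), Nat.floor_natCast]

lemma ru_le_nat {n : ℕ} {x : ℝ≥0} {m : ℕ} (h : x ≤ m) : ru n x ≤ m := by
  have : ((m : ℝ≥0)) = (m : ℝ≥0) * 2 ^ n / 2 ^ n := by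
    rw [mul_div_cancel_right₀ _ (two_pow_ne n)]
  rw [ru_le_iff]
  calc x ≤ m := h
  _ = fl n m := by
      rw [fl]
      have : (m : ℝ≥0) * 2 ^ n = ((m * 2 ^ n : ℕ) : ℝ≥0) := by push_cast; ring
      rw [this, Nat.floor_natCast]
      push_cast
      rw [mul_div_cancel_right₀ _ (two_pow_ne n)]

/-! ### Rounding on the product -/

def ru2 (n : ℕ) (p : ℝ≥0 × ℝ≥0) : ℝ≥0 × ℝ≥0 := (ru n p.1, ru n p.2)

lemma le_ru2 (n : ℕ) (p : ℝ≥0 × ℝ≥0) : p ≤ ru2 n p := ⟨le_ru n p.1, le_ru n p.2⟩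

lemma tendsto_ru2 (p : ℝ≥0 × ℝ≥0) : Tendsto (fun n => ru2 n p) atTop (𝓝 p) :=
  (tendsto_ru p.1).prodMk_nhds (tendsto_ru p.2)

lemma leE_ru2 (T : Ω → ℝ≥0 × ℝ≥0) (n : ℕ) (t : ℝ≥0 × ℝ≥0) :
    leE (fun ω => ru2 n (T ω)) t = leE T (fl n t.1, fl n t.2) := by
  ext ω
  simp only [leE, mem_setOf_eq, Prod.le_def, ru2, ru_le_iff]

lemma isStopT_ru2 {F : ℝ≥0 × ℝ≥0 → MeasurableSpace Ω}
    (hFmono : ∀ s t : ℝ≥0 × ℝ≥0, s ≤ t → F s ≤ F t) {T : Ω → ℝ≥0 × ℝ≥0}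
    (hT : IsStopT F T) (n : ℕ) : IsStopT F (fun ω => ru2 n (T ω)) := by
  intro t
  rw [leE_ru2]
  exact hFmono _ t ⟨fl_le n t.1, fl_le n t.2⟩ _ (hT _)

/-! ### Grid enumeration -/

def en (n k : ℕ) : ℝ≥0 × ℝ≥0 :=
  (((Nat.unpair k).1 : ℝ≥0) / 2 ^ n, ((Nat.unpair k).2 : ℝ≥0) / 2 ^ n)

lemma en_inj (n : ℕ) : Function.Injective (en n) := by
  intro a b h
  have h1 : ((Nat.unpair a).1 : ℝ≥0) / 2 ^ n = ((Nat.unpair b).1 : ℝ≥0) / 2 ^ n :=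
    congrArg Prod.fst h
  have h2 : ((Nat.unpair a).2 : ℝ≥0) / 2 ^ n = ((Nat.unpair b).2 : ℝ≥0) / 2 ^ n :=
    congrArg Prod.snd h
  have e1 : (Nat.unpair a).1 = (Nat.unpair b).1 := by
    have := congrArg (· * (2 : ℝ≥0) ^ n) h1
    simp only [div_mul_cancel₀ _ (two_pow_ne n)] at this
    exact_mod_cast this
  have e2 : (Nat.unpair a).2 = (Nat.unpair b).2 := by
    have := congrArg (· * (2 : ℝ≥0) ^ n) h2
    simp only [div_mul_cancel₀ _ (two_pow_ne n)] at this
    exact_mod_cast this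
  have : Nat.pair (Nat.unpair a).1 (Nat.unpair a).2 = Nat.pair (Nat.unpair b).1 (Nat.unpair b).2 := by
    rw [e1, e2]
  rwa [Nat.pair_unpair, Nat.pair_unpair] at this

lemma ru2_mem_range (n : ℕ) (p : ℝ≥0 × ℝ≥0) : ∃ k, ru2 n p = en n k :=
  ⟨Nat.pair ⌈p.1 * 2 ^ n⌉₊ ⌈p.2 * 2 ^ n⌉₊, by
    simp [ru2, ru, en, Nat.unpair_pair]⟩

lemma ru2_le_grid {n : ℕ} {p : ℝ≥0 × ℝ≥0} {k : ℕ} : ru2 n p ≤ en n k ↔ p ≤ en n k := by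
  simp only [ru2, en, Prod.le_def]
  rw [ru_le_iff, ru_le_iff, fl_grid, fl_grid]

lemma en_le_nat {n k : ℕ} {b : ℝ≥0 × ℝ≥0} {p : ℝ≥0 × ℝ≥0} (hp : p ≤ b)
    (h : ru2 n p = en n k) :
    en n k ≤ ((⌈b.1⌉₊ : ℝ≥0), (⌈b.2⌉₊ : ℝ≥0)) := by
  rw [← h]
  exact ⟨ru_le_nat (hp.1.trans (Nat.le_ceil b.1)), ru_le_nat (hp.2.trans (Nat.le_ceil b.2))⟩


/-! ### Discrete stopping times -/

lemma eq_iff_le_and_not {R : Ω → ℝ≥0 × ℝ≥0} {e : ℕ → ℝ≥0 × ℝ≥0}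
    (hrange : ∀ ω, ∃ k, R ω = e k) (ω : Ω) (k : ℕ) :
    R ω = e k ↔ R ω ≤ e k ∧ ∀ j, e j ≤ e k → e j ≠ e k → ¬R ω ≤ e j := by
  constructor
  · intro h
    refine ⟨h.le, fun j hle hne hRj => hne (le_antisymm hle (h ▸ hRj))⟩
  · rintro ⟨h1, h2⟩
    obtain ⟨j, hj⟩ := hrange ω
    by_contra hne'
    exact h2 j (hj ▸ h1) (fun hh => hne' (hj.trans hh)) hj.le

lemma preimage_eq_mem {F : ℝ≥0 × ℝ≥0 → MeasurableSpace Ω}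
    (hFmono : ∀ s t : ℝ≥0 × ℝ≥0, s ≤ t → F s ≤ F t)
    {R : Ω → ℝ≥0 × ℝ≥0} (hR : IsStopT F R) {e : ℕ → ℝ≥0 × ℝ≥0}
    (hrange : ∀ ω, ∃ k, R ω = e k) (k : ℕ) :
    MeasurableSet[F (e k)] (R ⁻¹' {e k}) := by
  have hs : R ⁻¹' {e k} =
      leE R (e k) \ ⋃ j, ⋃ (_ : e j ≤ e k ∧ e j ≠ e k), leE R (e j) := by
    ext ω
    simp only [mem_preimage, mem_singleton_iff, mem_diff, mem_iUnion, leE, mem_setOf_eq,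
      not_exists]
    rw [eq_iff_le_and_not hrange ω k]
    constructor
    · rintro ⟨h1, h2⟩
      exact ⟨h1, fun j hj hle => h2 j hj.1 hj.2 hle⟩
    · rintro ⟨h1, h2⟩
      exact ⟨h1, fun j hle hne hRj => h2 j ⟨hle, hne⟩ hRj⟩
  rw [hs]
  exact (hR _).diff (MeasurableSet.iUnion fun j => MeasurableSet.iUnion fun hj =>
    hFmono _ _ hj.1 _ (hR (e j)))

/-! ### Measurability of the stopped process -/

lemma meas_stopped {F : ℝ≥0 × ℝ≥0 → MeasurableSpace Ω}
    (hFmono : ∀ s t : ℝ≥0 × ℝ≥0, s ≤ t → F s ≤ F t)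
    (X : ℝ≥0 × ℝ≥0 → Ω → ℝ)
    (hadapt : ∀ t, Measurable[F t] (X t))
    (hcont : ∀ ω, Continuous fun t : ℝ≥0 × ℝ≥0 => X t ω)
    {T : Ω → ℝ≥0 × ℝ≥0} (hT : IsStopT F T) :
    Measurable[stopSA F T] (fun ω => X (T ω) ω) := by
  intro B hB
  rw [stopSA_iff hT]
  have key : ∀ t : ℝ≥0 × ℝ≥0,
      MeasurableSet[F t] ((fun ω => X (T ω) ω) ⁻¹' B ∩ leE T t) := by
    intro t
    set h' : Ω → ℝ := fun ω => if T ω ≤ t then X (t ⊓ T ω) ω else 0 with hh'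
    have hg : ∀ n : ℕ,
        Measurable[F t] (fun ω => if T ω ≤ t then X (t ⊓ ru2 n (T ω)) ω else 0) := by
      intro n
      intro B' hB'
      classical
      set D : ℕ → Set Ω := fun k =>
        leE T (t ⊓ en n k) \ ⋃ j, ⋃ (_ : en n j ≤ en n k ∧ en n j ≠ en n k), leE T (t ⊓ en n j) with hD
      have hDmeas : ∀ k, MeasurableSet[F t] (D k) := by
        intro k
        refine ((hFmono _ t inf_le_left) _ (hT (t ⊓ en n k))).diff ?_
        exact MeasurableSet.iUnion fun j => MeasurableSet.iUnion fun _ =>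
          (hFmono _ t inf_le_left) _ (hT (t ⊓ en n j))
      have hDmem : ∀ k ω, ω ∈ D k ↔ T ω ≤ t ∧ ru2 n (T ω) = en n k := by
        intro k ω
        have hrange' : ∀ ω, ∃ j, ru2 n (T ω) = en n j := fun ω => ru2_mem_range n (T ω)
        rw [hD]
        simp only [mem_diff, mem_iUnion, leE, mem_setOf_eq, not_exists, le_inf_iff]
        rw [eq_iff_le_and_not hrange' ω k]
        constructor
        · rintro ⟨⟨ht1, ht2⟩, h3⟩
          refine ⟨ht1, ru2_le_grid.2 ht2, fun j hle hne hRj => ?_⟩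
          exact h3 j ⟨hle, hne⟩ ⟨ht1, ru2_le_grid.1 hRj⟩
        · rintro ⟨ht1, h2, h3⟩
          refine ⟨⟨ht1, ru2_le_grid.1 h2⟩, fun j hj hle => ?_⟩
          exact h3 j hj.1 hj.2 (ru2_le_grid.2 hle.2)
      have hpre : (fun ω => if T ω ≤ t then X (t ⊓ ru2 n (T ω)) ω else 0) ⁻¹' B' =
          (⋃ k, D k ∩ X (t ⊓ en n k) ⁻¹' B') ∪
            (if (0 : ℝ) ∈ B' then (leE T t)ᶜ else ∅) := by
        ext ω
        by_cases hω : T ω ≤ t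
        · simp only [mem_preimage, if_pos hω, mem_union, mem_iUnion, mem_inter_iff]
          constructor
          · intro hx
            obtain ⟨k, hk⟩ := ru2_mem_range n (T ω)
            exact Or.inl ⟨k, (hDmem k ω).2 ⟨hω, hk⟩, by rw [← hk]; exact hx⟩
          · rintro (⟨k, hk, hx⟩ | hx)
            · rw [(hDmem k ω).1 hk |>.2]; exact hx
            · exfalso
              by_cases h0 : (0 : ℝ) ∈ B'
              · rw [if_pos h0] at hx; exact hx hω
              · rw [if_neg h0] at hx; exact hx
        · simp only [mem_preimage, if_neg hω, mem_union, mem_iUnion, mem_inter_iff]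
          constructor
          · intro hx
            refine Or.inr ?_
            rw [if_pos hx]
            exact hω
          · rintro (⟨k, hk, _⟩ | hx)
            · exact absurd ((hDmem k ω).1 hk).1 hω
            · by_cases h0 : (0 : ℝ) ∈ B'
              · exact h0
              · rw [if_neg h0] at hx; exact absurd hx (notMem_empty ω)
      rw [hpre]
      refine MeasurableSet.union ?_ ?_
      · exact MeasurableSet.iUnion fun k => (hDmeas k).inter
          ((hFmono _ t inf_le_left) _ (hadapt (t ⊓ en n k) hB'))
      · split_ifs
        · exact (hT t).compl
        · exact @MeasurableSet.empty _ (F t)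
    have hlim : Tendsto (fun n ω => if T ω ≤ t then X (t ⊓ ru2 n (T ω)) ω else 0)
        atTop (𝓝 h') := by
      rw [tendsto_pi_nhds]
      intro ω
      by_cases hω : T ω ≤ t
      · simp only [if_pos hω, hh']
        have h1 : Tendsto (fun n => t ⊓ ru2 n (T ω)) atTop (𝓝 (t ⊓ T ω)) := by
          have ha : Tendsto (fun n : ℕ => min t.1 (ru n (T ω).1)) atTop
              (𝓝 (min t.1 (T ω).1)) := tendsto_const_nhds.min (tendsto_ru (T ω).1)
          have hb : Tendsto (fun n : ℕ => min t.2 (ru n (T ω).2)) atTop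
              (𝓝 (min t.2 (T ω).2)) := tendsto_const_nhds.min (tendsto_ru (T ω).2)
          have heq : (fun n => t ⊓ ru2 n (T ω)) =
              fun n : ℕ => (min t.1 (ru n (T ω).1), min t.2 (ru n (T ω).2)) := by
            funext n
            simp [Prod.ext_iff, ru2]
          have heq2 : t ⊓ T ω = (min t.1 (T ω).1, min t.2 (T ω).2) := by
            simp [Prod.ext_iff]
          rw [heq, heq2]
          exact ha.prodMk_nhds hb
        exact ((hcont ω).tendsto (t ⊓ T ω)).comp h1
      · simp only [if_neg hω, hh']
        exact tendsto_const_nhds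
    have hmeas_h' : Measurable[F t] h' := by
      letI : MeasurableSpace Ω := F t
      exact measurable_of_tendsto_metrizable hg hlim
    have heq : (fun ω => X (T ω) ω) ⁻¹' B ∩ leE T t = h' ⁻¹' B ∩ leE T t := by
      ext ω
      simp only [mem_inter_iff, mem_preimage, leE, mem_setOf_eq, hh']
      constructor
      · rintro ⟨hx, hω⟩
        refine ⟨?_, hω⟩
        rw [if_pos hω, inf_eq_right.2 hω]
        exact hx
      · rintro ⟨hx, hω⟩
        rw [if_pos hω, inf_eq_right.2 hω] at hx
        exact ⟨hx, hω⟩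
    rw [heq]
    exact (hmeas_h' hB).inter (hT t)
  refine ⟨?_, key⟩
  have hcov : (fun ω => X (T ω) ω) ⁻¹' B =
      ⋃ m : ℕ, ((fun ω => X (T ω) ω) ⁻¹' B ∩ leE T ((m : ℝ≥0), (m : ℝ≥0))) := by
    ext ω
    simp only [mem_iUnion, mem_inter_iff, leE, mem_setOf_eq]
    constructor
    · intro h
      refine ⟨max ⌈(T ω).1⌉₊ ⌈(T ω).2⌉₊, h, ?_, ?_⟩
      · exact (Nat.le_ceil _).trans (Nat.cast_le.2 (le_max_left _ _))
      · exact (Nat.le_ceil _).trans (Nat.cast_le.2 (le_max_right _ _))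
    · rintro ⟨m, h, _⟩
      exact h
  rw [hcov]
  exact MeasurableSet.iUnion fun m => (F_le_FInfty F _) _ (key _)

/-! ### Discrete optional stopping -/

lemma discrete_opt {m0 : MeasurableSpace Ω} {P : Measure Ω} [IsProbabilityMeasure P]
    {F : ℝ≥0 × ℝ≥0 → MeasurableSpace Ω}
    (hFle : ∀ t, F t ≤ m0) (hFmono : ∀ s t : ℝ≥0 × ℝ≥0, s ≤ t → F s ≤ F t)
    {X : ℝ≥0 × ℝ≥0 → Ω → ℝ}
    (hadapt : ∀ t, Measurable[F t] (X t))
    (hint : ∀ t, Integrable (X t) P)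
    (hcont : ∀ ω, Continuous fun t : ℝ≥0 × ℝ≥0 => X t ω)
    {ζ : Ω → ℝ} (hζ : Integrable ζ P)
    {R : Ω → ℝ≥0 × ℝ≥0} (hR : IsStopT F R)
    {e : ℕ → ℝ≥0 × ℝ≥0} (he : Function.Injective e)
    (hrange : ∀ ω, ∃ k, R ω = e k)
    (hclosed : ∀ k, (R ⁻¹' {e k}).Nonempty →
      X (e k) =ᵐ[P] MeasureTheory.condExp (F (e k)) P ζ) :
    Integrable (fun ω => X (R ω) ω) P ∧
      ∀ s : Set Ω, MeasurableSet[stopSA F R] s →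
        ∫ ω in s, X (R ω) ω ∂P = ∫ ω in s, ζ ω ∂P := by
  have hA : ∀ k, MeasurableSet[F (e k)] (R ⁻¹' {e k}) :=
    preimage_eq_mem hFmono hR hrange
  have hA0 : ∀ k, MeasurableSet[m0] (R ⁻¹' {e k}) := fun k => hFle _ _ (hA k)
  have hdisj : Pairwise (Function.onFun Disjoint fun k => R ⁻¹' {e k}) := by
    intro i j hij
    rw [Function.onFun, Set.disjoint_left]
    rintro ω hi hj
    exact hij (he ((mem_singleton_iff.1 hi).symm.trans (mem_singleton_iff.1 hj)))
  have hcover : ⋃ k, R ⁻¹' {e k} = univ :=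
    eq_univ_of_forall fun ω => mem_iUnion.2 ((hrange ω).imp fun k hk => hk)
  have hgm : Measurable[stopSA F R] (fun ω => X (R ω) ω) :=
    meas_stopped hFmono X hadapt hcont hR
  have hgm0 : Measurable[m0] (fun ω => X (R ω) ω) :=
    hgm.mono (stopSA_le.trans (FInfty_le hFle)) le_rfl
  -- integrability
  have key_le : ∀ k, ∫⁻ ω in R ⁻¹' {e k}, ‖X (R ω) ω‖₊ ∂P ≤
      ∫⁻ ω in R ⁻¹' {e k}, ‖ζ ω‖₊ ∂P := by
    intro k
    rcases (R ⁻¹' {e k}).eq_empty_or_nonempty with hk | hk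
    · simp [hk]
    have hcong : ∫⁻ ω in R ⁻¹' {e k}, (‖X (R ω) ω‖₊ : ℝ≥0∞) ∂P =
        ∫⁻ ω in R ⁻¹' {e k}, (‖X (e k) ω‖₊ : ℝ≥0∞) ∂P := by
      refine setLIntegral_congr_fun (hA0 k) (fun ω hω => ?_)
      rw [mem_preimage, mem_singleton_iff] at hω
      rw [hω]
    rw [hcong]
    have h1 : ∫⁻ ω in R ⁻¹' {e k}, (‖X (e k) ω‖₊ : ℝ≥0∞) ∂P =
        ENNReal.ofReal (∫ ω in R ⁻¹' {e k}, ‖X (e k) ω‖ ∂P) :=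
      (ofReal_integral_norm_eq_lintegral_enorm ((hint (e k)).restrict)).symm
    have h3 : ∫⁻ ω in R ⁻¹' {e k}, (‖ζ ω‖₊ : ℝ≥0∞) ∂P =
        ENNReal.ofReal (∫ ω in R ⁻¹' {e k}, ‖ζ ω‖ ∂P) :=
      (ofReal_integral_norm_eq_lintegral_enorm (hζ.restrict)).symm
    rw [h1, h3]
    refine ENNReal.ofReal_le_ofReal ?_
    have h2 : ∫ ω in R ⁻¹' {e k}, |X (e k) ω| ∂P ≤ ∫ ω in R ⁻¹' {e k}, |ζ ω| ∂P := by
      calc ∫ ω in R ⁻¹' {e k}, |X (e k) ω| ∂P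
          = ∫ ω in R ⁻¹' {e k}, |(MeasureTheory.condExp (F (e k)) P ζ) ω| ∂P := by
            refine setIntegral_congr_ae (hA0 k) (((hclosed k hk)).mono fun ω h _ => by rw [h])
        _ ≤ ∫ ω in R ⁻¹' {e k}, |ζ ω| ∂P := setIntegral_abs_condExp_le (hA k) ζ
    simpa [Real.norm_eq_abs] using h2
  have hfin : (∫⁻ ω, (‖X (R ω) ω‖₊ : ℝ≥0∞) ∂P) < ⊤ := by
    calc ∫⁻ ω, (‖X (R ω) ω‖₊ : ℝ≥0∞) ∂P
        = ∫⁻ ω in ⋃ k, R ⁻¹' {e k}, (‖X (R ω) ω‖₊ : ℝ≥0∞) ∂P := by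
          rw [hcover, Measure.restrict_univ]
      _ = ∑' k, ∫⁻ ω in R ⁻¹' {e k}, (‖X (R ω) ω‖₊ : ℝ≥0∞) ∂P :=
          lintegral_iUnion hA0 hdisj _
      _ ≤ ∑' k, ∫⁻ ω in R ⁻¹' {e k}, (‖ζ ω‖₊ : ℝ≥0∞) ∂P := ENNReal.tsum_le_tsum key_le
      _ = ∫⁻ ω in ⋃ k, R ⁻¹' {e k}, (‖ζ ω‖₊ : ℝ≥0∞) ∂P :=
          (lintegral_iUnion hA0 hdisj _).symm
      _ = ∫⁻ ω, (‖ζ ω‖₊ : ℝ≥0∞) ∂P := by rw [hcover, Measure.restrict_univ]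
      _ < ⊤ := hζ.2
  have hgint : Integrable (fun ω => X (R ω) ω) P := ⟨hgm0.aestronglyMeasurable, hfin⟩
  refine ⟨hgint, fun s hs => ?_⟩
  have hs' := (stopSA_iff hR).1 hs
  have hsk : ∀ k, MeasurableSet[F (e k)] (s ∩ R ⁻¹' {e k}) := by
    intro k
    have heq : s ∩ R ⁻¹' {e k} = (s ∩ leE R (e k)) ∩ R ⁻¹' {e k} := by
      ext ω
      simp only [mem_inter_iff, mem_preimage, mem_singleton_iff, leE, mem_setOf_eq]
      constructor
      · rintro ⟨h1, h2⟩; exact ⟨⟨h1, h2.le⟩, h2⟩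
      · rintro ⟨⟨h1, _⟩, h2⟩; exact ⟨h1, h2⟩
    rw [heq]
    exact (hs'.2 (e k)).inter (hA k)
  have hsk0 : ∀ k, MeasurableSet[m0] (s ∩ R ⁻¹' {e k}) := fun k => hFle _ _ (hsk k)
  have hdisj' : Pairwise (Function.onFun Disjoint fun k => s ∩ R ⁻¹' {e k}) := fun i j hij =>
    ((hdisj hij).mono inter_subset_right inter_subset_right)
  have hcover' : (⋃ k, s ∩ R ⁻¹' {e k}) = s := by
    rw [← inter_iUnion, hcover, inter_univ]
  have h1 : ∫ ω in s, X (R ω) ω ∂P = ∑' k, ∫ ω in s ∩ R ⁻¹' {e k}, X (R ω) ω ∂P := by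
    conv_lhs => rw [← hcover']
    exact integral_iUnion hsk0 hdisj' (hgint.integrableOn)
  have h2 : ∫ ω in s, ζ ω ∂P = ∑' k, ∫ ω in s ∩ R ⁻¹' {e k}, ζ ω ∂P := by
    conv_lhs => rw [← hcover']
    exact integral_iUnion hsk0 hdisj' (hζ.integrableOn)
  rw [h1, h2]
  refine tsum_congr fun k => ?_
  rcases (R ⁻¹' {e k}).eq_empty_or_nonempty with hk | hk
  · rw [show s ∩ R ⁻¹' {e k} = ∅ by rw [hk, inter_empty]]
    simp
  · haveI : SigmaFinite (P.trim (hFle (e k))) := by infer_instance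
    calc ∫ ω in s ∩ R ⁻¹' {e k}, X (R ω) ω ∂P
        = ∫ ω in s ∩ R ⁻¹' {e k}, X (e k) ω ∂P := by
          refine setIntegral_congr_fun (hsk0 k) fun ω hω => ?_
          have : R ω = e k := hω.2
          rw [this]
      _ = ∫ ω in s ∩ R ⁻¹' {e k}, (MeasureTheory.condExp (F (e k)) P ζ) ω ∂P :=
          setIntegral_congr_ae (hsk0 k) (((hclosed k hk)).mono fun ω h _ => h)
      _ = ∫ ω in s ∩ R ⁻¹' {e k}, ζ ω ∂P := setIntegral_condExp (hFle (e k)) hζ (hsk k)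

/-! ### Passage to the limit -/

lemma key_limit {m0 : MeasurableSpace Ω} {P : Measure Ω} [IsProbabilityMeasure P]
    {F : ℝ≥0 × ℝ≥0 → MeasurableSpace Ω}
    (hFle : ∀ t, F t ≤ m0) (hFmono : ∀ s t : ℝ≥0 × ℝ≥0, s ≤ t → F s ≤ F t)
    {X : ℝ≥0 × ℝ≥0 → Ω → ℝ}
    (hadapt : ∀ t, Measurable[F t] (X t))
    (hint : ∀ t, Integrable (X t) P)
    (hcont : ∀ ω, Continuous fun t : ℝ≥0 × ℝ≥0 => X t ω)
    {ζ : Ω → ℝ} (hζ : Integrable ζ P)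
    {U : Ω → ℝ≥0 × ℝ≥0} (hU : IsStopT F U)
    (hcl : ∀ n k, ((fun ω => ru2 n (U ω)) ⁻¹' {en n k}).Nonempty →
      X (en n k) =ᵐ[P] MeasureTheory.condExp (F (en n k)) P ζ) :
    Integrable (fun ω => X (U ω) ω) P ∧
      ∀ s : Set Ω, MeasurableSet[stopSA F U] s →
        ∫ ω in s, X (U ω) ω ∂P = ∫ ω in s, ζ ω ∂P := by
  set Un : ℕ → Ω → ℝ≥0 × ℝ≥0 := fun n ω => ru2 n (U ω) with hUn
  have hUn_stop : ∀ n, IsStopT F (Un n) := fun n => isStopT_ru2 hFmono hU n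
  have hUle : ∀ n ω, U ω ≤ Un n ω := fun n ω => le_ru2 n (U ω)
  have hd : ∀ n, Integrable (fun ω => X (Un n ω) ω) P ∧
      ∀ s : Set Ω, MeasurableSet[stopSA F (Un n)] s →
        ∫ ω in s, X (Un n ω) ω ∂P = ∫ ω in s, ζ ω ∂P :=
    fun n => discrete_opt hFle hFmono hadapt hint hcont hζ (hUn_stop n) (en_inj n)
      (fun ω => ru2_mem_range n (U ω)) (hcl n)
  set f : ℕ → Ω → ℝ := fun n => MeasureTheory.condExp (stopSA F (Un n)) P ζ with hf
  have hm_n : ∀ n, stopSA F (Un n) ≤ m0 := fun n => stopSA_le.trans (FInfty_le hFle)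
  haveI : ∀ n, SigmaFinite (P.trim (hm_n n)) := fun n => by infer_instance
  have hfeq : ∀ n, (fun ω => X (Un n ω) ω) =ᵐ[P] f n := by
    intro n
    refine ae_eq_condExp_of_forall_setIntegral_eq (hm_n n) hζ
      (fun s _ _ => (hd n).1.integrableOn) (fun s hs _ => (hd n).2 s hs) ?_
    exact ⟨_, (meas_stopped hFmono X hadapt hcont (hUn_stop n)).stronglyMeasurable,
      EventuallyEq.rfl⟩
  have htend : ∀ ω, Tendsto (fun n => X (Un n ω) ω) atTop (𝓝 (X (U ω) ω)) :=
    fun ω => ((hcont ω).tendsto (U ω)).comp (tendsto_ru2 (U ω))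
  have hae : ∀ᵐ ω ∂P, Tendsto (fun n => f n ω) atTop (𝓝 (X (U ω) ω)) := by
    have h1 : ∀ᵐ ω ∂P, ∀ n, X (Un n ω) ω = f n ω := ae_all_iff.2 hfeq
    filter_upwards [h1] with ω hω
    have h2 : (fun n => f n ω) = fun n => X (Un n ω) ω := funext fun n => (hω n).symm
    rw [h2]
    exact htend ω
  have hf_meas : ∀ n, AEStronglyMeasurable (f n) P :=
    fun n => (stronglyMeasurable_condExp.mono (hm_n n)).aestronglyMeasurable
  obtain ⟨-, hunif, C, hC⟩ := hζ.uniformIntegrable_condExp hm_n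
  have hXU_meas : Measurable[m0] (fun ω => X (U ω) ω) :=
    (meas_stopped hFmono X hadapt hcont hU).mono (stopSA_le.trans (FInfty_le hFle)) le_rfl
  have hXU_int : Integrable (fun ω => X (U ω) ω) P := by
    refine ⟨hXU_meas.aestronglyMeasurable, ?_⟩
    have hle : (∫⁻ ω, (‖X (U ω) ω‖₊ : ℝ≥0∞) ∂P) ≤ (C : ℝ≥0∞) := by
      have h1 : ∫⁻ ω, (‖X (U ω) ω‖₊ : ℝ≥0∞) ∂P =
          ∫⁻ ω, liminf (fun n => (‖f n ω‖₊ : ℝ≥0∞)) atTop ∂P := by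
        refine lintegral_congr_ae (hae.mono fun ω hω => ?_)
        have : Tendsto (fun n => (‖f n ω‖₊ : ℝ≥0∞)) atTop (𝓝 (‖X (U ω) ω‖₊ : ℝ≥0∞)) := by
          refine ENNReal.tendsto_coe.2 ?_
          exact (continuous_nnnorm.tendsto _).comp hω
        exact (this.liminf_eq).symm
      rw [h1]
      refine le_trans (lintegral_liminf_le' fun n => (hf_meas n).enorm) ?_
      have h2 : ∀ n, (∫⁻ ω, (‖f n ω‖₊ : ℝ≥0∞) ∂P) ≤ (C : ℝ≥0∞) := by
        intro n
        have := hC n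
        rwa [eLpNorm_one_eq_lintegral_enorm] at this
      refine le_trans (liminf_le_liminf (Eventually.of_forall h2)) ?_
      simp [liminf_const]
    exact lt_of_le_of_lt hle (ENNReal.coe_lt_top)
  have hVit := tendsto_Lp_finite_of_tendsto_ae le_rfl ENNReal.one_ne_top hf_meas
    (memLp_one_iff_integrable.2 hXU_int) hunif hae
  refine ⟨hXU_int, fun s hs => ?_⟩
  have hs_n : ∀ n, MeasurableSet[stopSA F (Un n)] s :=
    fun n => stopSA_mono (hUn_stop n) (hUle n) _ hs
  have hconst : ∀ n, ∫ ω in s, f n ω ∂P = ∫ ω in s, ζ ω ∂P :=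
    fun n => setIntegral_condExp (hm_n n) hζ (hs_n n)
  have hInt_tendsto : Tendsto (fun n => ∫ ω in s, f n ω ∂P) atTop
      (𝓝 (∫ ω in s, X (U ω) ω ∂P)) := by
    rw [← tendsto_sub_nhds_zero_iff]
    have hb : ∀ n, |∫ ω in s, f n ω ∂P - ∫ ω in s, X (U ω) ω ∂P| ≤
        (eLpNorm (f n - fun ω => X (U ω) ω) 1 P).toReal := by
      intro n
      have hfn_int : Integrable (f n) P := integrable_condExp
      have hdiff : Integrable (f n - fun ω => X (U ω) ω) P := hfn_int.sub hXU_int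
      rw [← integral_sub (hfn_int.integrableOn) (hXU_int.integrableOn)]
      calc |∫ ω in s, (f n ω - X (U ω) ω) ∂P|
          ≤ ∫ ω in s, ‖f n ω - X (U ω) ω‖ ∂P := by
            rw [← Real.norm_eq_abs]
            exact norm_integral_le_integral_norm _
        _ ≤ ∫ ω, ‖f n ω - X (U ω) ω‖ ∂P :=
            setIntegral_le_integral (hdiff.norm) (ae_of_all _ fun ω => norm_nonneg _)
        _ = (eLpNorm (f n - fun ω => X (U ω) ω) 1 P).toReal := by
            have he : ∫ ω, ‖f n ω - X (U ω) ω‖ ∂P =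
                ∫ ω, ‖(f n - fun ω' => X (U ω') ω') ω‖ ∂P := rfl
            rw [he, integral_norm_eq_lintegral_enorm hdiff.aestronglyMeasurable,
              eLpNorm_one_eq_lintegral_enorm]
    have h0 : Tendsto (fun n => (eLpNorm (f n - fun ω => X (U ω) ω) 1 P).toReal)
        atTop (𝓝 0) := by
      have := (ENNReal.tendsto_toReal (by simp : (0 : ℝ≥0∞) ≠ ⊤)).comp hVit
      simpa [Function.comp_def] using this
    rw [tendsto_zero_iff_abs_tendsto_zero]
    exact squeeze_zero (fun n => abs_nonneg _) hb h0
  have hconst_tendsto : Tendsto (fun n => ∫ ω in s, f n ω ∂P) atTop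
      (𝓝 (∫ ω in s, ζ ω ∂P)) := by
    simp only [hconst]
    exact tendsto_const_nhds
  exact tendsto_nhds_unique hInt_tendsto hconst_tendsto

end TwoPOS

open TwoPOS

/-- **Optional stopping for two-parameter martingales** (Proposition 2.27). Let `X` be a
continuous martingale for the `ℝ₊²`-indexed filtration `F`. (i) If `X` is closed by an
integrable `ζ`, then `X_T = E[ζ | 𝓕_T]` for every finite `𝓕`-stopping time `T`.
(ii) If `T ≤ S` are bounded `𝓕`-stopping times, then `E[X_S | 𝓕_T] = X_T`. -/
theorem stmt_15 {m0 : MeasurableSpace Ω} (P : Measure Ω) [IsProbabilityMeasure P]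
    (F : ℝ≥0 × ℝ≥0 → MeasurableSpace Ω)
    (hFle : ∀ t, F t ≤ m0) (hFmono : ∀ s t : ℝ≥0 × ℝ≥0, s ≤ t → F s ≤ F t)
    (X : ℝ≥0 × ℝ≥0 → Ω → ℝ)
    (hadapt : ∀ t, Measurable[F t] (X t))
    (hint : ∀ t, Integrable (X t) P)
    (hmart : ∀ s t : ℝ≥0 × ℝ≥0, s ≤ t → MeasureTheory.condExp (F s) P (X t) =ᵐ[P] X s)
    (hcont : ∀ ω, Continuous fun t : ℝ≥0 × ℝ≥0 => X t ω) :
    ((∀ ζ : Ω → ℝ, Integrable ζ P →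
        (∀ t, X t =ᵐ[P] MeasureTheory.condExp (F t) P ζ) →
        ∀ T : Ω → ℝ≥0 × ℝ≥0, IsStopT F T →
          (fun ω => X (T ω) ω) =ᵐ[P] MeasureTheory.condExp (stopSA F T) P ζ)
    ∧ (∀ T S : Ω → ℝ≥0 × ℝ≥0, IsStopT F T → IsStopT F S → (∀ ω, T ω ≤ S ω) →
        (∃ b : ℝ≥0 × ℝ≥0, ∀ ω, S ω ≤ b) →
        MeasureTheory.condExp (stopSA F T) P (fun ω => X (S ω) ω) =ᵐ[P] fun ω => X (T ω) ω)) := by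
  constructor
  · intro ζ hζ hclosed T hT
    have hk := key_limit hFle hFmono hadapt hint hcont hζ hT (fun n k _ => hclosed (en n k))
    haveI : SigmaFinite (P.trim (stopSA_le.trans (FInfty_le hFle) : stopSA F T ≤ m0)) := by
      infer_instance
    exact ae_eq_condExp_of_forall_setIntegral_eq (stopSA_le.trans (FInfty_le hFle)) hζ
      (fun s _ _ => hk.1.integrableOn) (fun s hs _ => hk.2 s hs)
      ⟨_, (meas_stopped hFmono X hadapt hcont hT).stronglyMeasurable, EventuallyEq.rfl⟩
  · rintro T S hT hS hTS ⟨b, hb⟩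
    set b' : ℝ≥0 × ℝ≥0 := ((⌈b.1⌉₊ : ℝ≥0), (⌈b.2⌉₊ : ℝ≥0)) with hb'
    have hζ : Integrable (X b') P := hint b'
    have hcl : ∀ (U : Ω → ℝ≥0 × ℝ≥0), (∀ ω, U ω ≤ b) → ∀ n k,
        ((fun ω => ru2 n (U ω)) ⁻¹' {en n k}).Nonempty →
        X (en n k) =ᵐ[P] MeasureTheory.condExp (F (en n k)) P (X b') := by
      rintro U hUb n k ⟨ω, hω⟩
      have h1 : ru2 n (U ω) = en n k := hω
      have h2 : en n k ≤ b' := en_le_nat (hUb ω) h1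
      exact (hmart _ _ h2).symm
    have hkT := key_limit hFle hFmono hadapt hint hcont hζ hT
      (hcl T (fun ω => (hTS ω).trans (hb ω)))
    have hkS := key_limit hFle hFmono hadapt hint hcont hζ hS (hcl S hb)
    haveI : SigmaFinite (P.trim (stopSA_le.trans (FInfty_le hFle) : stopSA F T ≤ m0)) := by
      infer_instance
    refine (ae_eq_condExp_of_forall_setIntegral_eq (stopSA_le.trans (FInfty_le hFle)) hkS.1
      (fun s _ _ => hkT.1.integrableOn) (fun s hs _ => ?_)
      ⟨_, (meas_stopped hFmono X hadapt hcont hT).stronglyMeasurable, EventuallyEq.rfl⟩).symm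
    rw [hkT.2 s hs, ← hkS.2 s (stopSA_mono hS hTS _ hs)]
end
end
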